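/- arXiv:1806.10493 — 8 statements merged into one kernel-verified Lean document; each statement's English description precedes it below -/
import Mathlib

section
/- Let μ and ν be Borel probability measures on ℝ with finite second moment. Then W₂²(μ,ν) = ∫₀¹ (F_μ⁻¹(t) − F_ν⁻¹(t))² dt; that is, the infimum of ∫ (x−y)² dπ(x,y) over all couplings π of μ and ν is attained and equals the squared L² distance between the quantile functions (equivalently, the coupling given by the joint law of (F_μ⁻¹(U), F_ν⁻¹(U)) for U uniform on (0,1) is optimal). -/
open MeasureTheory
open scoped ENNReal

/-- The quantile function `F_μ⁻¹(t) = inf {x : ℝ | F_μ(x) ≥ t}` of a probability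
measure `μ` on `ℝ`, where `F_μ(x) = μ((-∞, x])` is the cumulative distribution
function. -/
noncomputable def quantile (μ : Measure ℝ) (t : ℝ) : ℝ :=
  sInf {x : ℝ | t ≤ (μ (Set.Iic x)).toReal}

/-- `π` is a coupling of `μ` and `ν`: a probability measure on `ℝ × ℝ` whose first
marginal is `μ` and whose second marginal is `ν`. -/
def IsCoupling (π : Measure (ℝ × ℝ)) (μ ν : Measure ℝ) : Prop :=
  IsProbabilityMeasure π ∧ π.map Prod.fst = μ ∧ π.map Prod.snd = ν

/-- The squared Wasserstein distance `W₂²(μ,ν)`: the infimum over all couplings `π`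
of `μ` and `ν` of the transport cost `∫ (x-y)² dπ(x,y)`. -/
noncomputable def W2sq (μ ν : Measure ℝ) : ℝ≥0∞ :=
  sInf {I : ℝ≥0∞ | ∃ π : Measure (ℝ × ℝ), IsCoupling π μ ν ∧
    I = ∫⁻ p, ENNReal.ofReal ((p.1 - p.2) ^ 2) ∂π}

open Set ProbabilityTheory Filter

set_option linter.unusedSectionVars false

namespace W2aux

noncomputable def unif : Measure ℝ := volume.restrict (Set.Ioo 0 1)

instance : IsProbabilityMeasure unif := ⟨by simp [unif, Real.volume_Ioo]⟩

variable (μ : Measure ℝ) [IsProbabilityMeasure μ]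

lemma quantile_eq (t : ℝ) : quantile μ t = sInf {x | t ≤ cdf μ x} := by
  unfold quantile
  congr 1
  ext x
  rw [mem_setOf_eq, mem_setOf_eq, cdf_eq_real, Measure.real]

lemma nonempty_S {t : ℝ} (ht : t < 1) : {x : ℝ | t ≤ cdf μ x}.Nonempty := by
  have h := (tendsto_cdf_atTop μ).eventually (eventually_ge_nhds ht)
  exact h.exists

lemma bddBelow_S {t : ℝ} (ht : 0 < t) : BddBelow {x : ℝ | t ≤ cdf μ x} := by
  have h := (tendsto_cdf_atBot μ).eventually (eventually_lt_nhds ht)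
  obtain ⟨x₀, hx₀⟩ := eventually_atBot.1 h
  refine ⟨x₀, fun y hy => ?_⟩
  by_contra hxy
  exact absurd hy.out (not_le.2 (hx₀ y (le_of_not_ge hxy)))

lemma quantile_le_iff {t : ℝ} (ht : 0 < t) (ht1 : t < 1) (x : ℝ) :
    quantile μ t ≤ x ↔ t ≤ cdf μ x := by
  rw [quantile_eq]
  constructor
  · intro h
    have key : ∀ y, x < y → t ≤ cdf μ y := by
      intro y hxy
      obtain ⟨z, hz, hzy⟩ := (csInf_lt_iff (bddBelow_S μ ht) (nonempty_S μ ht1)).1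
        (lt_of_le_of_lt h hxy)
      exact le_trans hz ((monotone_cdf μ) hzy.le)
    have hc : ContinuousWithinAt (cdf μ) (Ioi x) x :=
      ((cdf μ).right_continuous x).mono Ioi_subset_Ici_self
    have : Tendsto (cdf μ) (nhdsWithin x (Ioi x)) (nhds (cdf μ x)) := hc
    exact ge_of_tendsto this (eventually_nhdsWithin_of_forall (fun y hy => key y hy))
  · intro h
    exact csInf_le (bddBelow_S μ ht) h

lemma monotoneOn_quantile : MonotoneOn (quantile μ) (Set.Ioo 0 1) := by
  intro a ha b hb hab
  rw [quantile_eq, quantile_eq]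
  exact csInf_le_csInf (bddBelow_S μ ha.1) (nonempty_S μ hb.2)
    (fun x hx => le_trans hab hx)

lemma aemeasurable_quantile : AEMeasurable (quantile μ) unif :=
  aemeasurable_restrict_of_monotoneOn measurableSet_Ioo (monotoneOn_quantile μ)

lemma map_quantile : unif.map (quantile μ) = μ := by
  have hq := aemeasurable_quantile μ
  have : IsProbabilityMeasure (unif.map (quantile μ)) := Measure.isProbabilityMeasure_map hq
  refine Measure.ext_of_Iic _ _ (fun x => ?_)
  rw [Measure.map_apply_of_aemeasurable hq measurableSet_Iic]
  have hset : quantile μ ⁻¹' Iic x ∩ Ioo 0 1 = {t | 0 < t ∧ t < 1 ∧ t ≤ cdf μ x} := by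
    ext t
    simp only [mem_inter_iff, mem_preimage, mem_Iic, mem_Ioo, mem_setOf_eq]
    constructor
    · rintro ⟨h1, h2, h3⟩
      exact ⟨h2, h3, (quantile_le_iff μ h2 h3 x).1 h1⟩
    · rintro ⟨h2, h3, h1⟩
      exact ⟨(quantile_le_iff μ h2 h3 x).2 h1, h2, h3⟩
  rw [unif, Measure.restrict_apply' measurableSet_Ioo, hset]
  have hc0 : 0 ≤ cdf μ x := cdf_nonneg μ x
  have hc1 : cdf μ x ≤ 1 := cdf_le_one μ x
  have e1 : volume (Ioc (0:ℝ) (cdf μ x)) = ENNReal.ofReal (cdf μ x) := by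
    rw [Real.volume_Ioc, sub_zero]
  have e2 : volume (Ioo (0:ℝ) (cdf μ x)) = ENNReal.ofReal (cdf μ x) := by
    rw [Real.volume_Ioo, sub_zero]
  have hle : volume {t : ℝ | 0 < t ∧ t < 1 ∧ t ≤ cdf μ x} ≤ ENNReal.ofReal (cdf μ x) := by
    rw [← e1]
    exact measure_mono (fun t ht => ⟨ht.1, ht.2.2⟩)
  have hge : ENNReal.ofReal (cdf μ x) ≤ volume {t : ℝ | 0 < t ∧ t < 1 ∧ t ≤ cdf μ x} := by
    rw [← e2]
    exact measure_mono (fun t ht => ⟨ht.1, lt_of_lt_of_le ht.2 hc1, ht.2.le⟩)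
  rw [le_antisymm hle hge, ofReal_cdf]


def qIic (μ : Measure ℝ) (s : ℝ) : Set ℝ := {u ∈ Set.Ioo (0:ℝ) 1 | quantile μ u ≤ s}

variable (ν : Measure ℝ) [IsProbabilityMeasure ν]

lemma measurableSet_qIic (s : ℝ) : MeasurableSet (qIic μ s) := by
  have : (qIic μ s).OrdConnected := by
    refine ⟨fun a ha b hb c hc => ?_⟩
    refine ⟨⟨lt_of_lt_of_le ha.1.1 hc.1, lt_of_le_of_lt hc.2 hb.1.2⟩, ?_⟩
    have hcI : c ∈ Set.Ioo (0:ℝ) 1 := ⟨lt_of_lt_of_le ha.1.1 hc.1, lt_of_le_of_lt hc.2 hb.1.2⟩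
    exact le_trans (monotoneOn_quantile μ hcI hb.1 hc.2) hb.2
  exact this.measurableSet

lemma volume_qIic (s : ℝ) : volume (qIic μ s) = μ (Iic s) := by
  conv_rhs => rw [← map_quantile μ]
  rw [Measure.map_apply_of_aemeasurable (aemeasurable_quantile μ) measurableSet_Iic,
    unif, Measure.restrict_apply' measurableSet_Ioo]
  congr 1
  ext u
  simp only [qIic, mem_inter_iff, mem_preimage, mem_Iic, mem_sep_iff]
  tauto

lemma nested_qIic (s t : ℝ) : qIic μ s ⊆ qIic ν t ∨ qIic ν t ⊆ qIic μ s := by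
  by_contra h
  rw [not_or, Set.not_subset, Set.not_subset] at h
  obtain ⟨⟨a, ha, ha'⟩, ⟨b, hb, hb'⟩⟩ := h
  rcases le_total a b with hab | hab
  · exact ha' ⟨ha.1, le_trans (monotoneOn_quantile ν ha.1 hb.1 hab) hb.2⟩
  · exact hb' ⟨hb.1, le_trans (monotoneOn_quantile μ hb.1 ha.1 hab) ha.2⟩

lemma unif_cross (α β : Measure ℝ) [IsProbabilityMeasure α] [IsProbabilityMeasure β] (s t : ℝ) :
    unif {u | quantile α u ≤ s ∧ ¬ quantile β u ≤ t} = α (Iic s) - β (Iic t) := by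
  rw [unif, Measure.restrict_apply' measurableSet_Ioo]
  have hset : {u | quantile α u ≤ s ∧ ¬ quantile β u ≤ t} ∩ Ioo 0 1
      = qIic α s \ qIic β t := by
    ext u
    simp only [mem_inter_iff, mem_setOf_eq, mem_diff, qIic, mem_sep_iff]
    tauto
  rw [hset]
  rcases nested_qIic α β s t with h | h
  · have he : qIic α s \ qIic β t = ∅ := diff_eq_empty.2 h
    rw [he, measure_empty]
    symm
    rw [← volume_qIic α s, ← volume_qIic β t]
    exact tsub_eq_zero_of_le (measure_mono h)
  · rw [measure_diff h (measurableSet_qIic β t).nullMeasurableSet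
      (by rw [volume_qIic]; exact measure_ne_top β _),
      volume_qIic, volume_qIic]

lemma quadrant_star (s t : ℝ) :
    (unif.map (fun u => (quantile μ u, quantile ν u))) (Set.Ioi t ×ˢ Set.Iic s)
      = ν (Iic s) - μ (Iic t) := by
  have hf : AEMeasurable (fun u => (quantile μ u, quantile ν u)) unif :=
    (aemeasurable_quantile μ).prodMk (aemeasurable_quantile ν)
  rw [Measure.map_apply_of_aemeasurable hf (measurableSet_Ioi.prod measurableSet_Iic)]
  have : (fun u => (quantile μ u, quantile ν u)) ⁻¹' (Set.Ioi t ×ˢ Set.Iic s)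
      = {u | quantile ν u ≤ s ∧ ¬ quantile μ u ≤ t} := by
    ext u
    simp only [mem_preimage, Set.mem_prod, mem_Ioi, mem_Iic, mem_setOf_eq, not_le]
    tauto
  rw [this, unif_cross ν μ s t]

lemma quadrant_ge (π : Measure (ℝ × ℝ)) (h1 : π.map Prod.fst = μ) (h2 : π.map Prod.snd = ν)
    (s t : ℝ) : ν (Iic s) - μ (Iic t) ≤ π (Set.Ioi t ×ˢ Set.Iic s) := by
  rw [tsub_le_iff_right]
  have hν : ν (Iic s) = π (Prod.snd ⁻¹' Iic s) := by
    rw [← h2, Measure.map_apply measurable_snd measurableSet_Iic]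
  have hsplit : (Prod.snd ⁻¹' Iic s : Set (ℝ × ℝ))
      = (Set.Ioi t ×ˢ Set.Iic s) ∪ (Set.Iic t ×ˢ Set.Iic s) := by
    ext p
    simp only [mem_preimage, mem_Iic, mem_union, Set.mem_prod, mem_Ioi]
    rcases lt_or_ge t p.1 with h | h <;> tauto
  have hb : π (Set.Iic t ×ˢ Set.Iic s) ≤ μ (Iic t) := by
    rw [← h1, Measure.map_apply measurable_fst measurableSet_Iic]
    exact measure_mono (fun p hp => hp.1)
  calc ν (Iic s) = π (Prod.snd ⁻¹' Iic s) := hν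
    _ ≤ π (Set.Ioi t ×ˢ Set.Iic s) + π (Set.Iic t ×ˢ Set.Iic s) := by
        rw [hsplit]; exact measure_union_le _ _
    _ ≤ π (Set.Ioi t ×ˢ Set.Iic s) + μ (Iic t) := add_le_add_right hb _

def T (a b : ℝ) : Set (ℝ × ℝ) := {q | a ≤ q.1 ∧ q.1 < q.2 ∧ q.2 < b}

lemma measurableSet_T (a b : ℝ) : MeasurableSet (T a b) := by
  have : T a b = {q : ℝ × ℝ | a ≤ q.1} ∩ ({q | q.1 < q.2} ∩ {q | q.2 < b}) := by
    ext q
    simp only [T, mem_setOf_eq, mem_inter_iff, and_assoc]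
  rw [this]
  exact (measurableSet_le measurable_const measurable_fst).inter
    ((measurableSet_lt measurable_fst measurable_snd).inter
      (measurableSet_lt measurable_snd measurable_const))

lemma T_empty {a b : ℝ} (h : b ≤ a) : T a b = ∅ := by
  rw [Set.eq_empty_iff_forall_notMem]
  rintro q ⟨h1, h2, h3⟩
  linarith

lemma volume_T {a b : ℝ} (hab : a ≤ b) :
    volume (T a b) = ENNReal.ofReal ((b - a) ^ 2 / 2) := by
  rw [Measure.volume_eq_prod, Measure.prod_apply (measurableSet_T a b)]
  have hslice : ∀ x : ℝ, (Prod.mk x ⁻¹' T a b) = if a ≤ x then Ioo x b else ∅ := by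
    intro x
    split_ifs with h
    · ext y; simp [T, h]
    · ext y; simp [T, h]
  have hslice' : ∀ x : ℝ, volume (Prod.mk x ⁻¹' T a b)
      = (Ici a).indicator (fun x => ENNReal.ofReal (b - x)) x := by
    intro x
    rw [hslice x]
    by_cases h : a ≤ x
    · simp [h, Set.indicator_of_mem (mem_Ici.2 h), Real.volume_Ioo]
    · simp [h, Set.indicator_of_notMem (fun hx => h (mem_Ici.1 hx))]
  rw [lintegral_congr hslice', lintegral_indicator measurableSet_Ici]
  have hsplit : (Ici a : Set ℝ) = Icc a b ∪ Ioi b := by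
    ext x
    simp only [mem_Ici, mem_union, mem_Icc, mem_Ioi]
    constructor
    · intro h; rcases le_or_gt x b with h2 | h2; exacts [Or.inl ⟨h, h2⟩, Or.inr h2]
    · rintro (⟨h, _⟩ | h); exacts [h, le_trans hab h.le]
  rw [hsplit, lintegral_union measurableSet_Ioi (by
    simp only [Set.disjoint_left, mem_Icc, mem_Ioi]
    exact fun x hx => not_lt.2 hx.2)]
  have h2 : ∫⁻ x in Ioi b, ENNReal.ofReal (b - x) = 0 := by
    rw [setLIntegral_congr_fun measurableSet_Ioi
      (fun x (hx : x ∈ Ioi b) =>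
        ENNReal.ofReal_eq_zero.2 (by simp only [mem_Ioi] at hx; linarith))]
    simp
  rw [h2, add_zero]
  have hint : IntegrableOn (fun x : ℝ => b - x) (Icc a b) volume :=
    (continuous_const.sub continuous_id).integrableOn_Icc
  rw [← ofReal_integral_eq_lintegral_ofReal hint]
  · congr 1
    rw [integral_Icc_eq_integral_Ioc, ← intervalIntegral.integral_of_le hab,
      intervalIntegral.integral_sub intervalIntegrable_const
        intervalIntegral.intervalIntegrable_id, intervalIntegral.integral_const,
      integral_id]
    simp only [smul_eq_mul]
    ring
  · rw [Filter.EventuallyLE, ae_restrict_iff' measurableSet_Icc]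
    exact Filter.Eventually.of_forall (fun x hx => by simp only [Pi.zero_apply]; linarith [hx.2])

lemma ofReal_sq_eq (x y : ℝ) :
    ENNReal.ofReal ((x - y) ^ 2) = 2 * (volume (T y x) + volume (T x y)) := by
  have h2 : ((2 : ℝ≥0∞)) = ENNReal.ofReal 2 := by simp
  rcases le_total x y with h | h
  · rw [T_empty h, measure_empty, zero_add, volume_T h, h2,
      ← ENNReal.ofReal_mul (by norm_num)]
    congr 1
    ring
  · rw [T_empty h, measure_empty, add_zero, volume_T h, h2,
      ← ENNReal.ofReal_mul (by norm_num)]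
    congr 1
    ring
def S1 (q : ℝ × ℝ) : Set (ℝ × ℝ) := {p | p.2 ≤ q.1 ∧ q.1 < q.2 ∧ q.2 < p.1}

def S2 (q : ℝ × ℝ) : Set (ℝ × ℝ) := {p | p.1 ≤ q.1 ∧ q.1 < q.2 ∧ q.2 < p.2}

lemma measurableSet_S1 (q : ℝ × ℝ) : MeasurableSet (S1 q) := by
  have : S1 q = ({p : ℝ × ℝ | p.2 ≤ q.1} ∩ {p | q.2 < p.1}) ∩
      (if q.1 < q.2 then univ else ∅) := by
    split_ifs with h <;> ext p <;>
      simp only [S1, mem_setOf_eq, mem_inter_iff, mem_univ, mem_empty_iff_false, and_true,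
        inter_empty, and_false, iff_false, not_and] <;> tauto
  rw [this]
  refine MeasurableSet.inter ((measurableSet_le measurable_snd measurable_const).inter
    (measurableSet_lt measurable_const measurable_fst)) ?_
  split_ifs <;> simp

lemma measurableSet_S2 (q : ℝ × ℝ) : MeasurableSet (S2 q) := by
  have : S2 q = ({p : ℝ × ℝ | p.1 ≤ q.1} ∩ {p | q.2 < p.2}) ∩
      (if q.1 < q.2 then univ else ∅) := by
    split_ifs with h <;> ext p <;>
      simp only [S2, mem_setOf_eq, mem_inter_iff, mem_univ, mem_empty_iff_false, and_true,
        inter_empty, and_false, iff_false, not_and] <;> tauto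
  rw [this]
  refine MeasurableSet.inter ((measurableSet_le measurable_fst measurable_const).inter
    (measurableSet_lt measurable_const measurable_snd)) ?_
  split_ifs <;> simp

lemma disjoint_S12 (q : ℝ × ℝ) : Disjoint (S1 q) (S2 q) := by
  rw [Set.disjoint_left]
  rintro p ⟨h1, h2, h3⟩ ⟨h4, h5, h6⟩
  linarith

lemma mem_union_T_iff (p q : ℝ × ℝ) :
    q ∈ T p.2 p.1 ∪ T p.1 p.2 ↔ p ∈ S1 q ∪ S2 q := by
  simp only [T, S1, S2, mem_union, mem_setOf_eq]

lemma measurableSet_bigU :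
    MeasurableSet {z : (ℝ × ℝ) × (ℝ × ℝ) | z.2 ∈ T z.1.2 z.1.1 ∪ T z.1.1 z.1.2} := by
  have : {z : (ℝ × ℝ) × (ℝ × ℝ) | z.2 ∈ T z.1.2 z.1.1 ∪ T z.1.1 z.1.2}
      = ({z : (ℝ × ℝ) × (ℝ × ℝ) | z.1.2 ≤ z.2.1} ∩ {z | z.2.1 < z.2.2} ∩ {z | z.2.2 < z.1.1})
        ∪ ({z | z.1.1 ≤ z.2.1} ∩ {z | z.2.1 < z.2.2} ∩ {z | z.2.2 < z.1.2}) := by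
    ext z
    simp only [T, mem_union, mem_setOf_eq, mem_inter_iff]
    tauto
  rw [this]
  have m11 : Measurable fun z : (ℝ × ℝ) × (ℝ × ℝ) => z.1.1 := measurable_fst.fst
  have m12 : Measurable fun z : (ℝ × ℝ) × (ℝ × ℝ) => z.1.2 := measurable_fst.snd
  have m21 : Measurable fun z : (ℝ × ℝ) × (ℝ × ℝ) => z.2.1 := measurable_snd.fst
  have m22 : Measurable fun z : (ℝ × ℝ) × (ℝ × ℝ) => z.2.2 := measurable_snd.snd
  exact (((measurableSet_le m12 m21).inter (measurableSet_lt m21 m22)).inter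
      (measurableSet_lt m22 m11)).union
    (((measurableSet_le m11 m21).inter (measurableSet_lt m21 m22)).inter
      (measurableSet_lt m22 m12))

lemma cost_eq (π : Measure (ℝ × ℝ)) [IsProbabilityMeasure π] :
    ∫⁻ p, ENNReal.ofReal ((p.1 - p.2) ^ 2) ∂π
      = 2 * ∫⁻ q, (π (S1 q) + π (S2 q)) ∂(volume : Measure (ℝ × ℝ)) := by
  have key : ∀ p : ℝ × ℝ, ENNReal.ofReal ((p.1 - p.2) ^ 2)
      = 2 * ∫⁻ q, (T p.2 p.1 ∪ T p.1 p.2).indicator (1 : (ℝ × ℝ) → ℝ≥0∞) q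
          ∂(volume : Measure (ℝ × ℝ)) := by
    intro p
    rw [lintegral_indicator_one ((measurableSet_T _ _).union (measurableSet_T _ _)),
      measure_union ?hd (measurableSet_T _ _), ofReal_sq_eq]
    case hd =>
      rw [Set.disjoint_left]
      rintro q ⟨h1, h2, h3⟩ ⟨h4, h5, h6⟩
      linarith
  calc ∫⁻ p, ENNReal.ofReal ((p.1 - p.2) ^ 2) ∂π
      = ∫⁻ p, 2 * ∫⁻ q, (T p.2 p.1 ∪ T p.1 p.2).indicator 1 q
          ∂(volume : Measure (ℝ × ℝ)) ∂π := lintegral_congr key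
    _ = 2 * ∫⁻ p, ∫⁻ q, (T p.2 p.1 ∪ T p.1 p.2).indicator 1 q
          ∂(volume : Measure (ℝ × ℝ)) ∂π := lintegral_const_mul' 2 _ (by simp)
    _ = 2 * ∫⁻ q, ∫⁻ p, (T p.2 p.1 ∪ T p.1 p.2).indicator 1 q
          ∂π ∂(volume : Measure (ℝ × ℝ)) := by
        congr 1
        refine lintegral_lintegral_swap ?_
        exact (measurable_one.indicator measurableSet_bigU).aemeasurable
    _ = 2 * ∫⁻ q, (π (S1 q) + π (S2 q)) ∂(volume : Measure (ℝ × ℝ)) := by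
        congr 1
        refine lintegral_congr fun q => ?_
        have : ∀ p : ℝ × ℝ, (T p.2 p.1 ∪ T p.1 p.2).indicator (1 : (ℝ × ℝ) → ℝ≥0∞) q
            = (S1 q ∪ S2 q).indicator (1 : (ℝ × ℝ) → ℝ≥0∞) p := by
          intro p
          by_cases h : p ∈ S1 q ∪ S2 q
          · rw [Set.indicator_of_mem ((mem_union_T_iff p q).2 h),
              Set.indicator_of_mem h]
            rfl
          · rw [Set.indicator_of_notMem (fun hq => h ((mem_union_T_iff p q).1 hq)),
              Set.indicator_of_notMem h]
        rw [lintegral_congr this,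
          lintegral_indicator_one ((measurableSet_S1 q).union (measurableSet_S2 q)),
          measure_union (disjoint_S12 q) (measurableSet_S2 q)]
lemma quadrant_star' (s t : ℝ) :
    (unif.map (fun u => (quantile μ u, quantile ν u))) (Set.Iic s ×ˢ Set.Ioi t)
      = μ (Iic s) - ν (Iic t) := by
  have hf : AEMeasurable (fun u => (quantile μ u, quantile ν u)) unif :=
    (aemeasurable_quantile μ).prodMk (aemeasurable_quantile ν)
  rw [Measure.map_apply_of_aemeasurable hf (measurableSet_Iic.prod measurableSet_Ioi)]
  have : (fun u => (quantile μ u, quantile ν u)) ⁻¹' (Set.Iic s ×ˢ Set.Ioi t)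
      = {u | quantile μ u ≤ s ∧ ¬ quantile ν u ≤ t} := by
    ext u
    simp only [mem_preimage, Set.mem_prod, mem_Ioi, mem_Iic, mem_setOf_eq, not_le]
  rw [this, unif_cross μ ν s t]

lemma quadrant_ge' (π : Measure (ℝ × ℝ)) (h1 : π.map Prod.fst = μ) (h2 : π.map Prod.snd = ν)
    (s t : ℝ) : μ (Iic s) - ν (Iic t) ≤ π (Set.Iic s ×ˢ Set.Ioi t) := by
  rw [tsub_le_iff_right]
  have hμ : μ (Iic s) = π (Prod.fst ⁻¹' Iic s) := by
    rw [← h1, Measure.map_apply measurable_fst measurableSet_Iic]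
  have hsplit : (Prod.fst ⁻¹' Iic s : Set (ℝ × ℝ))
      = (Set.Iic s ×ˢ Set.Ioi t) ∪ (Set.Iic s ×ˢ Set.Iic t) := by
    ext p
    simp only [mem_preimage, mem_Iic, mem_union, Set.mem_prod, mem_Ioi]
    rcases lt_or_ge t p.2 with h | h <;> tauto
  have hb : π (Set.Iic s ×ˢ Set.Iic t) ≤ ν (Iic t) := by
    rw [← h2, Measure.map_apply measurable_snd measurableSet_Iic]
    exact measure_mono (fun p hp => hp.2)
  calc μ (Iic s) = π (Prod.fst ⁻¹' Iic s) := hμ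
    _ ≤ π (Set.Iic s ×ˢ Set.Ioi t) + π (Set.Iic s ×ˢ Set.Iic t) := by
        rw [hsplit]; exact measure_union_le _ _
    _ ≤ π (Set.Iic s ×ˢ Set.Ioi t) + ν (Iic t) := add_le_add_right hb _

lemma pointwise_compare (π : Measure (ℝ × ℝ))
    (h1 : π.map Prod.fst = μ) (h2 : π.map Prod.snd = ν) (q : ℝ × ℝ) :
    (unif.map (fun u => (quantile μ u, quantile ν u))) (S1 q)
      + (unif.map (fun u => (quantile μ u, quantile ν u))) (S2 q)
      ≤ π (S1 q) + π (S2 q) := by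
  by_cases h : q.1 < q.2
  · have e1 : S1 q = Set.Ioi q.2 ×ˢ Set.Iic q.1 := by
      ext p
      simp only [S1, mem_setOf_eq, Set.mem_prod, mem_Ioi, mem_Iic]
      tauto
    have e2 : S2 q = Set.Iic q.1 ×ˢ Set.Ioi q.2 := by
      ext p
      simp only [S2, mem_setOf_eq, Set.mem_prod, mem_Ioi, mem_Iic]
      tauto
    rw [e1, e2, quadrant_star μ ν q.1 q.2, quadrant_star' μ ν q.1 q.2]
    exact add_le_add (quadrant_ge μ ν π h1 h2 q.1 q.2) (quadrant_ge' μ ν π h1 h2 q.1 q.2)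
  · have e1 : S1 q = ∅ := by
      rw [Set.eq_empty_iff_forall_notMem]; rintro p ⟨_, h', _⟩; exact h h'
    have e2 : S2 q = ∅ := by
      rw [Set.eq_empty_iff_forall_notMem]; rintro p ⟨_, h', _⟩; exact h h'
    simp [e1, e2]

lemma cost_star_eq :
    ∫⁻ p, ENNReal.ofReal ((p.1 - p.2) ^ 2) ∂(unif.map (fun u => (quantile μ u, quantile ν u)))
      = ∫⁻ u, ENNReal.ofReal ((quantile μ u - quantile ν u) ^ 2) ∂unif :=
  lintegral_map' (((measurable_fst.sub measurable_snd).pow_const 2).ennreal_ofReal).aemeasurable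
    ((aemeasurable_quantile μ).prodMk (aemeasurable_quantile ν))

lemma moment_quantile :
    ∫⁻ u, ENNReal.ofReal ((quantile μ u) ^ 2) ∂unif = ∫⁻ x, ENNReal.ofReal (x ^ 2) ∂μ := by
  conv_rhs => rw [← map_quantile μ]
  exact (lintegral_map' (f := fun x => ENNReal.ofReal (x ^ 2)) (g := quantile μ)
    ((measurable_id'.pow_const 2).ennreal_ofReal).aemeasurable
    (aemeasurable_quantile μ)).symm

lemma finite_star (hμ : ∫⁻ x, ENNReal.ofReal (x ^ 2) ∂μ < ⊤)
    (hν : ∫⁻ x, ENNReal.ofReal (x ^ 2) ∂ν < ⊤) :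
    ∫⁻ u, ENNReal.ofReal ((quantile μ u - quantile ν u) ^ 2) ∂unif < ⊤ := by
  have ha : AEMeasurable (fun u => ENNReal.ofReal ((quantile μ u) ^ 2)) unif :=
    ((measurable_id.pow_const 2).ennreal_ofReal).comp_aemeasurable (aemeasurable_quantile μ)
  have hbound : ∫⁻ u, ENNReal.ofReal ((quantile μ u - quantile ν u) ^ 2) ∂unif
      ≤ ∫⁻ u, (2 * ENNReal.ofReal ((quantile μ u) ^ 2)
          + 2 * ENNReal.ofReal ((quantile ν u) ^ 2)) ∂unif := by
    refine lintegral_mono fun u => ?_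
    have hp : (quantile μ u - quantile ν u) ^ 2
        ≤ 2 * (quantile μ u) ^ 2 + 2 * (quantile ν u) ^ 2 := by nlinarith [sq_nonneg (quantile μ u + quantile ν u)]
    calc ENNReal.ofReal ((quantile μ u - quantile ν u) ^ 2)
        ≤ ENNReal.ofReal (2 * (quantile μ u) ^ 2 + 2 * (quantile ν u) ^ 2) :=
          ENNReal.ofReal_le_ofReal hp
      _ = 2 * ENNReal.ofReal ((quantile μ u) ^ 2) + 2 * ENNReal.ofReal ((quantile ν u) ^ 2) := by
          rw [ENNReal.ofReal_add (by positivity) (by positivity),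
            ENNReal.ofReal_mul (by norm_num), ENNReal.ofReal_mul (by norm_num)]
          norm_num
  refine lt_of_le_of_lt hbound ?_
  rw [lintegral_add_left' (ha.const_mul 2), lintegral_const_mul' 2 _ (by simp),
    lintegral_const_mul' 2 _ (by simp), moment_quantile μ, moment_quantile ν]
  exact ENNReal.add_lt_top.2 ⟨ENNReal.mul_lt_top (by simp) hμ,
    ENNReal.mul_lt_top (by simp) hν⟩
end W2aux


open W2aux in
/-- For Borel probability measures `μ, ν` on `ℝ` with finite second moments,
`W₂²(μ,ν) = ∫₀¹ (F_μ⁻¹(t) − F_ν⁻¹(t))² dt`, and the infimum defining `W₂²` is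
attained by some coupling (the joint law of the quantile functions of a uniform
variable is an optimal coupling). -/
theorem W2sq_eq_integral_quantile (μ ν : Measure ℝ)
    [IsProbabilityMeasure μ] [IsProbabilityMeasure ν]
    (hμ : ∫⁻ x, ENNReal.ofReal (x ^ 2) ∂μ < ⊤)
    (hν : ∫⁻ x, ENNReal.ofReal (x ^ 2) ∂ν < ⊤) :
    W2sq μ ν = ENNReal.ofReal (∫ t in Set.Ioo (0 : ℝ) 1,
        (quantile μ t - quantile ν t) ^ 2) ∧
    ∃ π : Measure (ℝ × ℝ), IsCoupling π μ ν ∧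
      ∫⁻ p, ENNReal.ofReal ((p.1 - p.2) ^ 2) ∂π = W2sq μ ν := by
  have hf : AEMeasurable (fun u => (quantile μ u, quantile ν u)) unif :=
    (aemeasurable_quantile μ).prodMk (aemeasurable_quantile ν)
  set πs : Measure (ℝ × ℝ) := unif.map (fun u => (quantile μ u, quantile ν u)) with hπs
  haveI : IsProbabilityMeasure πs := Measure.isProbabilityMeasure_map hf
  have hfst : πs.map Prod.fst = μ := by
    rw [hπs, AEMeasurable.map_map_of_aemeasurable measurable_fst.aemeasurable hf]
    exact map_quantile μ
  have hsnd : πs.map Prod.snd = ν := by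
    rw [hπs, AEMeasurable.map_map_of_aemeasurable measurable_snd.aemeasurable hf]
    exact map_quantile ν
  have hcoup : IsCoupling πs μ ν := ⟨inferInstance, hfst, hsnd⟩
  have hcost : ∫⁻ p, ENNReal.ofReal ((p.1 - p.2) ^ 2) ∂πs
      = ∫⁻ u, ENNReal.ofReal ((quantile μ u - quantile ν u) ^ 2) ∂unif :=
    cost_star_eq μ ν
  have hfin := finite_star μ ν hμ hν
  have hint : Integrable (fun t => (quantile μ t - quantile ν t) ^ 2) unif := by
    refine ⟨(((aemeasurable_quantile μ).sub
      (aemeasurable_quantile ν)).pow_const 2).aestronglyMeasurable, ?_⟩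
    rw [hasFiniteIntegral_iff_ofReal (Filter.Eventually.of_forall fun t => sq_nonneg _)]
    rw [← hcost] at hfin ⊢
    exact hfin
  have hof : ENNReal.ofReal (∫ t in Set.Ioo (0 : ℝ) 1, (quantile μ t - quantile ν t) ^ 2)
      = ∫⁻ u, ENNReal.ofReal ((quantile μ u - quantile ν u) ^ 2) ∂unif :=
    ofReal_integral_eq_lintegral_ofReal hint
      (Filter.Eventually.of_forall fun t => sq_nonneg _)
  have hcompare : ∀ π : Measure (ℝ × ℝ), IsCoupling π μ ν →
      ∫⁻ p, ENNReal.ofReal ((p.1 - p.2) ^ 2) ∂πs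
        ≤ ∫⁻ p, ENNReal.ofReal ((p.1 - p.2) ^ 2) ∂π := by
    rintro π ⟨hp, h1, h2⟩
    haveI := hp
    rw [cost_eq πs, cost_eq π]
    exact mul_le_mul_right (lintegral_mono fun q => pointwise_compare μ ν π h1 h2 q) 2
  have hW : W2sq μ ν = ∫⁻ p, ENNReal.ofReal ((p.1 - p.2) ^ 2) ∂πs := by
    refine le_antisymm (sInf_le ⟨πs, hcoup, rfl⟩) (le_sInf ?_)
    rintro I ⟨π, hπ, rfl⟩
    exact hcompare π hπ
  exact ⟨by rw [hW, hcost, hof], πs, hcoup, hW.symm⟩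
end

section
/- Let Ω be a compact subset of ℝ. The squared Wasserstein distance W₂² is a negative definite kernel on the set of Borel probability measures supported in Ω: for every n, all Borel probability measures μ₁, …, μₙ supported in Ω and all c₁, …, cₙ ∈ ℝ with c₁ + … + cₙ = 0, one has Σ_{i,j} c_i c_j W₂²(μ_i, μ_j) ≤ 0. -/
open MeasureTheory
open scoped ENNReal

open ProbabilityTheory Set



noncomputable def qf (M : ℝ) (μ : Measure ℝ) (t : ℝ) : ℝ :=
  sInf {x | min t 1 ≤ cdf μ x ∧ -M ≤ x}

section qf
variable {M : ℝ} {μ : Measure ℝ} [IsProbabilityMeasure μ]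

lemma my_cdf_M (hμ : μ (Set.Icc (-M) M)ᶜ = 0) : cdf μ M = 1 := by
  rw [cdf_eq_real, measureReal_def]
  have h1 : μ (Iic M)ᶜ = 0 := by
    refine measure_mono_null ?_ hμ
    intro x hx
    simp only [mem_compl_iff, mem_Iic, not_le] at hx ⊢
    intro hx2
    exact absurd hx2.2 (not_le.2 hx)
  have := prob_compl_eq_zero_iff (μ := μ) (s := Iic M) measurableSet_Iic
  rw [this] at h1
  simp [h1]

lemma my_cdf_neg (hμ : μ (Set.Icc (-M) M)ᶜ = 0) {x : ℝ} (hx : x < -M) : cdf μ x = 0 := by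
  rw [cdf_eq_real, measureReal_def]
  have h1 : μ (Iic x) = 0 := by
    refine measure_mono_null ?_ hμ
    intro y hy
    simp only [mem_Iic] at hy
    simp only [mem_compl_iff, mem_Icc, not_and, not_le]
    intro h; linarith
  simp [h1]

lemma qf_le_iff (hM : 0 ≤ M) (hμ : μ (Set.Icc (-M) M)ᶜ = 0) {t x : ℝ}
    (ht : 0 < t) (ht1 : t ≤ 1) :
    qf M μ t ≤ x ↔ t ≤ cdf μ x := by
  have hmin : min t 1 = t := min_eq_left ht1
  set S : Set ℝ := {x | min t 1 ≤ cdf μ x ∧ -M ≤ x} with hS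
  have hMS : M ∈ S := by
    refine ⟨?_, by linarith⟩
    show min t 1 ≤ cdf μ M
    rw [my_cdf_M hμ, hmin]; exact ht1
  have hSne : S.Nonempty := ⟨M, hMS⟩
  have hbdd : BddBelow S := ⟨-M, fun y hy => hy.2⟩
  have hmem : qf M μ t ∈ S := by
    constructor
    · by_contra hlt
      push_neg at hlt
      have hrc := (cdf μ).right_continuous (qf M μ t)
      have : (cdf μ) ⁻¹' (Iio (min t 1)) ∈ nhdsWithin (qf M μ t) (Ici (qf M μ t)) :=
        hrc (Iio_mem_nhds hlt)
      rw [mem_nhdsGE_iff_exists_Ico_subset] at this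
      obtain ⟨u, hu, hsub⟩ := this
      simp only [mem_Ioi] at hu
      have hlb : ∀ y ∈ S, u ≤ y := by
        intro y hy
        by_contra hyu
        push_neg at hyu
        have hyq : qf M μ t ≤ y := csInf_le hbdd hy
        have : y ∈ Ico (qf M μ t) u := ⟨hyq, hyu⟩
        have := hsub this
        simp only [mem_preimage, mem_Iio] at this
        exact absurd hy.1 (not_le.2 this)
      have : u ≤ qf M μ t := le_csInf hSne hlb
      linarith
    · exact le_csInf hSne fun y hy => hy.2
  constructor
  · intro h
    rw [← hmin]
    calc min t 1 ≤ cdf μ (qf M μ t) := hmem.1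
    _ ≤ cdf μ x := monotone_cdf μ h
  · intro h
    refine csInf_le hbdd ⟨hmin.le.trans h, ?_⟩
    by_contra hx
    push_neg at hx
    have := my_cdf_neg (μ := μ) hμ hx
    rw [this] at h
    linarith

lemma qf_monotone (hM : 0 ≤ M) (hμ : μ (Set.Icc (-M) M)ᶜ = 0) : Monotone (qf M μ) := by
  intro t t' htt'
  have hne : ∀ s : ℝ, ({x | min s 1 ≤ cdf μ x ∧ -M ≤ x}).Nonempty := by
    intro s
    refine ⟨M, ?_, by linarith⟩
    show min s 1 ≤ cdf μ M
    exact (min_le_right s 1).trans (my_cdf_M hμ).ge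
  exact csInf_le_csInf ⟨-M, fun y hy => hy.2⟩ (hne t')
    (fun y hy => ⟨le_trans (min_le_min htt' le_rfl) hy.1, hy.2⟩)

lemma qf_mem_Icc (hM : 0 ≤ M) (hμ : μ (Set.Icc (-M) M)ᶜ = 0) {t : ℝ}
    (ht : 0 < t) (ht1 : t ≤ 1) :
    qf M μ t ∈ Icc (-M) M := by
  constructor
  · refine le_csInf ⟨M, ?_, by linarith⟩ fun y hy => hy.2
    show min t 1 ≤ cdf μ M
    exact (min_le_right t 1).trans (my_cdf_M hμ).ge
  · exact (qf_le_iff hM hμ ht ht1).2 (by rw [my_cdf_M hμ]; exact ht1)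

lemma qf_measurable (hM : 0 ≤ M) (hμ : μ (Set.Icc (-M) M)ᶜ = 0) :
    Measurable (qf M μ) := (qf_monotone hM hμ).measurable

lemma qf_map_eq (hM : 0 ≤ M) (hμ : μ (Set.Icc (-M) M)ᶜ = 0) :
    (volume.restrict (Ioo (0:ℝ) 1)).map (qf M μ) = μ := by
  have hmeas := qf_measurable hM hμ
  have hprob : IsProbabilityMeasure (volume.restrict (Ioo (0:ℝ) 1)) := ⟨by simp⟩
  have : IsProbabilityMeasure ((volume.restrict (Ioo (0:ℝ) 1)).map (qf M μ)) :=
    Measure.isProbabilityMeasure_map hmeas.aemeasurable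
  refine MeasureTheory.Measure.ext_of_Iic _ _ fun x => ?_
  rw [Measure.map_apply hmeas measurableSet_Iic]
  have hset : qf M μ ⁻¹' (Iic x) ∩ (Ioo 0 1) = Iic (cdf μ x) ∩ Ioo 0 1 := by
    ext t
    simp only [mem_inter_iff, mem_preimage, mem_Iic, mem_Ioo]
    constructor
    · rintro ⟨h1, h2, h3⟩
      exact ⟨(qf_le_iff hM hμ h2 h3.le).1 h1, h2, h3⟩
    · rintro ⟨h1, h2, h3⟩
      exact ⟨(qf_le_iff hM hμ h2 h3.le).2 h1, h2, h3⟩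
  rw [Measure.restrict_apply (hmeas measurableSet_Iic), hset]
  have h0 : 0 ≤ cdf μ x := cdf_nonneg μ x
  have h1 : cdf μ x ≤ 1 := cdf_le_one μ x
  rw [← ofReal_cdf μ x]
  rcases lt_or_eq_of_le h1 with h1' | h1'
  · have : Iic (cdf μ x) ∩ Ioo 0 1 = Ioc 0 (cdf μ x) := by
      ext t
      simp only [mem_inter_iff, mem_Iic, mem_Ioo, mem_Ioc]
      constructor
      · rintro ⟨ha, hb, hc⟩; exact ⟨hb, ha⟩
      · rintro ⟨ha, hb⟩; exact ⟨hb, ha, lt_of_le_of_lt hb h1'⟩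
    rw [this, Real.volume_Ioc, sub_zero]
  · have : Iic (cdf μ x) ∩ Ioo 0 1 = Ioo 0 1 := by
      rw [inter_eq_right]
      intro t ht
      exact (le_of_lt ht.2).trans h1'.ge
    rw [this, Real.volume_Ioo, sub_zero, ← h1']

end qf



section hoeffding
variable {α : Type*} [MeasurableSpace α]

lemma lintegral_ofReal_mul_eq (ρ : Measure α) [SFinite ρ] {f g : α → ℝ}
    (hf : Measurable f) (hg : Measurable g) (hf0 : 0 ≤ᵐ[ρ] f) (hg0 : 0 ≤ᵐ[ρ] g) :
    ∫⁻ a, ENNReal.ofReal (f a * g a) ∂ρ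
      = ∫⁻ p, ρ {a | p.1 < f a ∧ p.2 < g a}
          ∂((volume.restrict (Ioi (0:ℝ))).prod (volume.restrict (Ioi (0:ℝ)))) := by
  set ν : Measure (ℝ × ℝ) := (volume.restrict (Ioi (0:ℝ))).prod (volume.restrict (Ioi (0:ℝ)))
    with hν
  set F : α → ℝ × ℝ → ℝ≥0∞ := fun a p => Set.indicator {p : ℝ × ℝ | p.1 < f a ∧ p.2 < g a}
    (fun _ => 1) p with hF
  have hFmeas : Measurable (Function.uncurry F) := by
    have hset : MeasurableSet {q : α × (ℝ × ℝ) | q.2.1 < f q.1 ∧ q.2.2 < g q.1} :=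
      ((measurableSet_lt (measurable_snd.fst) (hf.comp measurable_fst)).inter
        (measurableSet_lt (measurable_snd.snd) (hg.comp measurable_fst)))
    have : Function.uncurry F = Set.indicator {q : α × (ℝ × ℝ) | q.2.1 < f q.1 ∧ q.2.2 < g q.1}
        (fun _ => 1) := by
      ext q
      simp only [Function.uncurry, hF, Set.indicator_apply, mem_setOf_eq]
    rw [this]
    exact (measurable_const.indicator hset)
  have step1 : ∫⁻ a, ENNReal.ofReal (f a * g a) ∂ρ = ∫⁻ a, ∫⁻ p, F a p ∂ν ∂ρ := by
    refine lintegral_congr_ae ?_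
    filter_upwards [hf0, hg0] with a ha hb
    have : ∫⁻ p, F a p ∂ν = ν (Iio (f a) ×ˢ Iio (g a)) := by
      have hseteq : {p : ℝ × ℝ | p.1 < f a ∧ p.2 < g a} = Iio (f a) ×ˢ Iio (g a) := by
        ext p; simp [Set.mem_prod]
      rw [hF]
      simp only [hseteq]
      rw [lintegral_indicator (measurableSet_Iio.prod measurableSet_Iio)]
      simp
    rw [this, hν, Measure.prod_prod, Measure.restrict_apply measurableSet_Iio,
      Measure.restrict_apply measurableSet_Iio, Set.Iio_inter_Ioi, Set.Iio_inter_Ioi,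
      Real.volume_Ioo, Real.volume_Ioo, sub_zero, sub_zero, ENNReal.ofReal_mul ha]
  have step2 : ∫⁻ a, ∫⁻ p, F a p ∂ν ∂ρ = ∫⁻ p, ∫⁻ a, F a p ∂ρ ∂ν :=
    lintegral_lintegral_swap hFmeas.aemeasurable
  have step3 : ∀ p : ℝ × ℝ, ∫⁻ a, F a p ∂ρ = ρ {a | p.1 < f a ∧ p.2 < g a} := by
    intro p
    have : (fun a => F a p)
        = Set.indicator {a | p.1 < f a ∧ p.2 < g a} (fun _ => (1 : ℝ≥0∞)) := by
      ext a
      simp only [hF, Set.indicator_apply, mem_setOf_eq]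
    have hset : MeasurableSet {a | p.1 < f a ∧ p.2 < g a} := by
      have he : {a | p.1 < f a ∧ p.2 < g a} = {a | p.1 < f a} ∩ {a | p.2 < g a} := rfl
      rw [he]
      exact (measurableSet_lt measurable_const hf).inter
        (measurableSet_lt measurable_const hg)
    rw [this, lintegral_indicator hset]
    simp
  rw [step1, step2]
  exact lintegral_congr step3
end hoeffding

section compare
variable {M : ℝ} {μ ν : Measure ℝ} [IsProbabilityMeasure μ] [IsProbabilityMeasure ν]

lemma my_cdf_Ioi (μ : Measure ℝ) [IsProbabilityMeasure μ] (x : ℝ) :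
    μ (Ioi x) = ENNReal.ofReal (1 - cdf μ x) := by
  rw [← Set.compl_Iic, measure_compl measurableSet_Iic (measure_ne_top μ _), measure_univ,
    ← ofReal_cdf, ENNReal.ofReal_sub _ (cdf_nonneg μ x), ENNReal.ofReal_one]

lemma hoeffding_le (hM : 0 ≤ M)
    (hμ : μ (Set.Icc (-M) M)ᶜ = 0) (hν : ν (Set.Icc (-M) M)ᶜ = 0)
    {π : Measure (ℝ × ℝ)} (hπprob : IsProbabilityMeasure π)
    (hπ1 : π.map Prod.fst = μ) (hπ2 : π.map Prod.snd = ν) :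
    ∫⁻ p, ENNReal.ofReal ((p.1 + M) * (p.2 + M)) ∂π
      ≤ ∫⁻ t in Ioo (0:ℝ) 1, ENNReal.ofReal ((qf M μ t + M) * (qf M ν t + M)) := by
  have hf1 : Measurable fun p : ℝ × ℝ => p.1 + M := measurable_fst.add_const M
  have hf2 : Measurable fun p : ℝ × ℝ => p.2 + M := measurable_snd.add_const M
  have hq1 : Measurable fun t => qf M μ t + M := (qf_measurable hM hμ).add_const M
  have hq2 : Measurable fun t => qf M ν t + M := (qf_measurable hM hν).add_const M
  have hae1 : 0 ≤ᵐ[π] fun p : ℝ × ℝ => p.1 + M := by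
    have h0 : π (Prod.fst ⁻¹' (Set.Icc (-M) M)ᶜ) = 0 := by
      rw [← Measure.map_apply measurable_fst measurableSet_Icc.compl, hπ1]; exact hμ
    rw [Filter.EventuallyLE, ae_iff]
    refine measure_mono_null ?_ h0
    intro p hp
    simp only [mem_setOf_eq, Pi.zero_apply, not_le] at hp
    simp only [mem_preimage, mem_compl_iff, mem_Icc, not_and, not_le]
    intro h; linarith
  have hae2 : 0 ≤ᵐ[π] fun p : ℝ × ℝ => p.2 + M := by
    have h0 : π (Prod.snd ⁻¹' (Set.Icc (-M) M)ᶜ) = 0 := by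
      rw [← Measure.map_apply measurable_snd measurableSet_Icc.compl, hπ2]; exact hν
    rw [Filter.EventuallyLE, ae_iff]
    refine measure_mono_null ?_ h0
    intro p hp
    simp only [mem_setOf_eq, Pi.zero_apply, not_le] at hp
    simp only [mem_preimage, mem_compl_iff, mem_Icc, not_and, not_le]
    intro h; linarith
  have haeq1 : 0 ≤ᵐ[volume.restrict (Ioo (0:ℝ) 1)] fun t => qf M μ t + M := by
    filter_upwards [ae_restrict_mem measurableSet_Ioo] with t ht
    have := (qf_mem_Icc hM hμ ht.1 ht.2.le).1
    simp only [Pi.zero_apply]; linarith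
  have haeq2 : 0 ≤ᵐ[volume.restrict (Ioo (0:ℝ) 1)] fun t => qf M ν t + M := by
    filter_upwards [ae_restrict_mem measurableSet_Ioo] with t ht
    have := (qf_mem_Icc hM hν ht.1 ht.2.le).1
    simp only [Pi.zero_apply]; linarith
  haveI := hπprob
  rw [lintegral_ofReal_mul_eq π hf1 hf2 hae1 hae2,
    lintegral_ofReal_mul_eq (volume.restrict (Ioo (0:ℝ) 1)) hq1 hq2 haeq1 haeq2]
  refine lintegral_mono fun p => ?_
  obtain ⟨s, t⟩ := p
  simp only
  set c₁ := cdf μ (s - M) with hc₁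
  set c₂ := cdf ν (t - M) with hc₂
  have hc₁0 : 0 ≤ c₁ := cdf_nonneg μ _
  have hc₂0 : 0 ≤ c₂ := cdf_nonneg ν _
  have hRHS : (volume.restrict (Ioo (0:ℝ) 1))
      {u | s < qf M μ u + M ∧ t < qf M ν u + M} = ENNReal.ofReal (1 - max c₁ c₂) := by
    have hset : MeasurableSet {u : ℝ | s < qf M μ u + M ∧ t < qf M ν u + M} := by
      have he : {u : ℝ | s < qf M μ u + M ∧ t < qf M ν u + M}
          = {u | s < qf M μ u + M} ∩ {u | t < qf M ν u + M} := rfl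
      rw [he]
      exact (measurableSet_lt measurable_const (hq1)).inter
        (measurableSet_lt measurable_const (hq2))
    rw [Measure.restrict_apply hset]
    have heq : {u : ℝ | s < qf M μ u + M ∧ t < qf M ν u + M} ∩ Ioo 0 1
        = Ioo (max c₁ c₂) 1 := by
      ext u
      simp only [mem_inter_iff, mem_setOf_eq, mem_Ioo, max_lt_iff]
      constructor
      · rintro ⟨⟨h1, h2⟩, hu0, hu1⟩
        refine ⟨⟨?_, ?_⟩, hu1⟩
        · by_contra hcon
          push_neg at hcon
          have := (qf_le_iff hM hμ hu0 hu1.le).2 (hcon.trans (le_refl c₁) |>.trans le_rfl)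
          · linarith [(qf_le_iff hM hμ hu0 hu1.le).2 hcon]
        · by_contra hcon
          push_neg at hcon
          linarith [(qf_le_iff hM hν hu0 hu1.le).2 hcon]
      · rintro ⟨⟨h1, h2⟩, hu1⟩
        have hu0 : 0 < u := lt_of_le_of_lt hc₁0 h1
        constructor
        · constructor
          · by_contra hcon
            push_neg at hcon
            have : qf M μ u ≤ s - M := by linarith
            have := (qf_le_iff hM hμ hu0 hu1.le).1 this
            linarith
          · by_contra hcon
            push_neg at hcon
            have : qf M ν u ≤ t - M := by linarith
            have := (qf_le_iff hM hν hu0 hu1.le).1 this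
            linarith
        · exact ⟨hu0, hu1⟩
    rw [heq, Real.volume_Ioo]
  rw [hRHS]
  rcases le_total c₁ c₂ with hc | hc
  · rw [max_eq_right hc]
    calc π {a : ℝ × ℝ | s < a.1 + M ∧ t < a.2 + M}
        ≤ π (Prod.snd ⁻¹' Ioi (t - M)) := by
          refine measure_mono fun a ha => ?_
          simp only [mem_setOf_eq] at ha
          simp only [mem_preimage, mem_Ioi]
          linarith [ha.2]
      _ = ν (Ioi (t - M)) := by
          rw [← Measure.map_apply measurable_snd measurableSet_Ioi, hπ2]
      _ = ENNReal.ofReal (1 - c₂) := my_cdf_Ioi ν _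
  · rw [max_eq_left hc]
    calc π {a : ℝ × ℝ | s < a.1 + M ∧ t < a.2 + M}
        ≤ π (Prod.fst ⁻¹' Ioi (s - M)) := by
          refine measure_mono fun a ha => ?_
          simp only [mem_setOf_eq] at ha
          simp only [mem_preimage, mem_Ioi]
          linarith [ha.1]
      _ = μ (Ioi (s - M)) := by
          rw [← Measure.map_apply measurable_fst measurableSet_Ioi, hπ1]
      _ = ENNReal.ofReal (1 - c₁) := my_cdf_Ioi μ _

end compare


lemma integrable_of_abs_bound {α : Type*} [MeasurableSpace α] (ρ : Measure α)
    [IsFiniteMeasure ρ] {f : α → ℝ} (hf : AEStronglyMeasurable f ρ) (C : ℝ)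
    (h : ∀ᵐ a ∂ρ, |f a| ≤ C) : Integrable f ρ := by
  refine Integrable.mono' (integrable_const C) hf ?_
  filter_upwards [h] with a ha
  simpa using ha

section costlower
variable {M : ℝ} {μ ν : Measure ℝ} [IsProbabilityMeasure μ] [IsProbabilityMeasure ν]

lemma cost_lower (hM : 0 ≤ M)
    (hμ : μ (Set.Icc (-M) M)ᶜ = 0) (hν : ν (Set.Icc (-M) M)ᶜ = 0)
    {π : Measure (ℝ × ℝ)} (hπprob : IsProbabilityMeasure π)
    (hπ1 : π.map Prod.fst = μ) (hπ2 : π.map Prod.snd = ν) :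
    ∫⁻ t in Ioo (0:ℝ) 1, ENNReal.ofReal ((qf M μ t - qf M ν t) ^ 2)
      ≤ ∫⁻ p, ENNReal.ofReal ((p.1 - p.2) ^ 2) ∂π := by
  haveI := hπprob
  have hPprob : IsProbabilityMeasure (volume.restrict (Ioo (0:ℝ) 1)) := ⟨by simp⟩
  have hQ1 : Measurable (qf M μ) := qf_measurable hM hμ
  have hQ2 : Measurable (qf M ν) := qf_measurable hM hν
  -- a.e. membership facts
  have haeπ1 : ∀ᵐ p ∂π, p.1 ∈ Icc (-M) M := by
    rw [ae_iff]
    have h0 : π (Prod.fst ⁻¹' (Icc (-M) M)ᶜ) = 0 := by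
      rw [← Measure.map_apply measurable_fst measurableSet_Icc.compl, hπ1]; exact hμ
    refine measure_mono_null (fun p hp => hp) h0
  have haeπ2 : ∀ᵐ p ∂π, p.2 ∈ Icc (-M) M := by
    rw [ae_iff]
    have h0 : π (Prod.snd ⁻¹' (Icc (-M) M)ᶜ) = 0 := by
      rw [← Measure.map_apply measurable_snd measurableSet_Icc.compl, hπ2]; exact hν
    refine measure_mono_null (fun p hp => hp) h0
  have haeP1 : ∀ᵐ t ∂(volume.restrict (Ioo (0:ℝ) 1)), qf M μ t ∈ Icc (-M) M := by
    filter_upwards [ae_restrict_mem measurableSet_Ioo] with t ht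
    exact qf_mem_Icc hM hμ ht.1 ht.2.le
  have haeP2 : ∀ᵐ t ∂(volume.restrict (Ioo (0:ℝ) 1)), qf M ν t ∈ Icc (-M) M := by
    filter_upwards [ae_restrict_mem measurableSet_Ioo] with t ht
    exact qf_mem_Icc hM hν ht.1 ht.2.le
  -- generic integrability
  have intπ : ∀ {f : ℝ × ℝ → ℝ}, Measurable f → ∀ {C : ℝ},
      (∀ p : ℝ × ℝ, p.1 ∈ Icc (-M) M → p.2 ∈ Icc (-M) M → |f p| ≤ C) → Integrable f π := by
    intro f hf C hbound
    refine integrable_of_abs_bound π hf.aestronglyMeasurable C ?_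
    filter_upwards [haeπ1, haeπ2] with p h1 h2
    exact hbound p h1 h2
  have intP : ∀ {f : ℝ → ℝ}, Measurable f → ∀ {C : ℝ},
      (∀ t : ℝ, qf M μ t ∈ Icc (-M) M → qf M ν t ∈ Icc (-M) M → |f t| ≤ C) →
      Integrable f (volume.restrict (Ioo (0:ℝ) 1)) := by
    intro f hf C hbound
    refine integrable_of_abs_bound _ hf.aestronglyMeasurable C ?_
    filter_upwards [haeP1, haeP2] with t h1 h2
    exact hbound t h1 h2
  -- specific integrabilities
  have intf1 : Integrable (fun p : ℝ × ℝ => (p.1 - p.2) ^ 2) π := by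
    refine intπ ((measurable_fst.sub measurable_snd).pow_const 2)
      (C := 4 * M ^ 2) fun p h1 h2 => ?_
    rw [abs_le]; constructor <;> nlinarith [h1.1, h1.2, h2.1, h2.2]
  have intf2 : Integrable (fun p : ℝ × ℝ => (p.1 + M) * (p.2 + M)) π := by
    refine intπ ((measurable_fst.add_const M).mul (measurable_snd.add_const M))
      (C := 4 * M ^ 2) fun p h1 h2 => ?_
    rw [abs_le]; constructor <;> nlinarith [h1.1, h1.2, h2.1, h2.2]
  have intf3 : Integrable (fun p : ℝ × ℝ => (p.1 + M) ^ 2) π := by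
    refine intπ ((measurable_fst.add_const M).pow_const 2)
      (C := 4 * M ^ 2) fun p h1 h2 => ?_
    rw [abs_le]; constructor <;> nlinarith [h1.1, h1.2]
  have intf4 : Integrable (fun p : ℝ × ℝ => (p.2 + M) ^ 2) π := by
    refine intπ ((measurable_snd.add_const M).pow_const 2)
      (C := 4 * M ^ 2) fun p h1 h2 => ?_
    rw [abs_le]; constructor <;> nlinarith [h2.1, h2.2]
  have intg1 : Integrable (fun t => (qf M μ t - qf M ν t) ^ 2)
      (volume.restrict (Ioo (0:ℝ) 1)) := by
    refine intP ((hQ1.sub hQ2).pow_const 2) (C := 4 * M ^ 2) fun t h1 h2 => ?_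
    rw [abs_le]; constructor <;> nlinarith [h1.1, h1.2, h2.1, h2.2]
  have intg2 : Integrable (fun t => (qf M μ t + M) * (qf M ν t + M))
      (volume.restrict (Ioo (0:ℝ) 1)) := by
    refine intP ((hQ1.add_const M).mul (hQ2.add_const M)) (C := 4 * M ^ 2) fun t h1 h2 => ?_
    rw [abs_le]; constructor <;> nlinarith [h1.1, h1.2, h2.1, h2.2]
  have intg3 : Integrable (fun t => (qf M μ t + M) ^ 2) (volume.restrict (Ioo (0:ℝ) 1)) := by
    refine intP ((hQ1.add_const M).pow_const 2) (C := 4 * M ^ 2) fun t h1 h2 => ?_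
    rw [abs_le]; constructor <;> nlinarith [h1.1, h1.2]
  have intg4 : Integrable (fun t => (qf M ν t + M) ^ 2) (volume.restrict (Ioo (0:ℝ) 1)) := by
    refine intP ((hQ2.add_const M).pow_const 2) (C := 4 * M ^ 2) fun t h1 h2 => ?_
    rw [abs_le]; constructor <;> nlinarith [h2.1, h2.2]
  -- real Hoeffding inequality
  have hXY : ∫ p, (p.1 + M) * (p.2 + M) ∂π
      ≤ ∫ t in Ioo (0:ℝ) 1, (qf M μ t + M) * (qf M ν t + M) := by
    have hnn1 : 0 ≤ᵐ[π] fun p : ℝ × ℝ => (p.1 + M) * (p.2 + M) := by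
      filter_upwards [haeπ1, haeπ2] with p h1 h2
      have := h1.1; have := h2.1
      simp only [Pi.zero_apply]
      nlinarith
    have hnn2 : 0 ≤ᵐ[volume.restrict (Ioo (0:ℝ) 1)]
        fun t => (qf M μ t + M) * (qf M ν t + M) := by
      filter_upwards [haeP1, haeP2] with t h1 h2
      have := h1.1; have := h2.1
      simp only [Pi.zero_apply]
      nlinarith
    have h1 := ofReal_integral_eq_lintegral_ofReal intf2 hnn1
    have h2 := ofReal_integral_eq_lintegral_ofReal intg2 hnn2
    have hle := hoeffding_le hM hμ hν hπprob hπ1 hπ2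
    rw [← h1, ← h2] at hle
    exact (ENNReal.ofReal_le_ofReal_iff (integral_nonneg_of_ae hnn2)).1 hle
  -- transfers of marginal integrals
  have t3 : ∫ p, (p.1 + M) ^ 2 ∂π = ∫ t in Ioo (0:ℝ) 1, (qf M μ t + M) ^ 2 := by
    have hφ : Measurable fun x : ℝ => (x + M) ^ 2 := (measurable_id.add_const M).pow_const 2
    have e1 : ∫ x, (x + M) ^ 2 ∂μ = ∫ p : ℝ × ℝ, (p.1 + M) ^ 2 ∂π := by
      rw [← hπ1]
      exact integral_map measurable_fst.aemeasurable hφ.aestronglyMeasurable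
    have e2 : ∫ t in Ioo (0:ℝ) 1, (qf M μ t + M) ^ 2 = ∫ x, (x + M) ^ 2 ∂μ := by
      conv_rhs => rw [← qf_map_eq hM hμ]
      exact (integral_map hQ1.aemeasurable hφ.aestronglyMeasurable).symm
    rw [← e1]
    exact e2.symm
  have t4 : ∫ p, (p.2 + M) ^ 2 ∂π = ∫ t in Ioo (0:ℝ) 1, (qf M ν t + M) ^ 2 := by
    have hφ : Measurable fun x : ℝ => (x + M) ^ 2 := (measurable_id.add_const M).pow_const 2
    have e1 : ∫ x, (x + M) ^ 2 ∂ν = ∫ p : ℝ × ℝ, (p.2 + M) ^ 2 ∂π := by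
      rw [← hπ2]
      exact integral_map measurable_snd.aemeasurable hφ.aestronglyMeasurable
    have e2 : ∫ t in Ioo (0:ℝ) 1, (qf M ν t + M) ^ 2 = ∫ x, (x + M) ^ 2 ∂ν := by
      conv_rhs => rw [← qf_map_eq hM hν]
      exact (integral_map hQ2.aemeasurable hφ.aestronglyMeasurable).symm
    rw [← e1]
    exact e2.symm
  -- key algebraic identities
  have keyπ : (∫ p, (p.1 - p.2) ^ 2 ∂π) + 2 * ∫ p, (p.1 + M) * (p.2 + M) ∂π
      = (∫ p, (p.1 + M) ^ 2 ∂π) + ∫ p, (p.2 + M) ^ 2 ∂π := by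
    rw [← integral_add intf3 intf4, show (2:ℝ) * ∫ p, (p.1 + M) * (p.2 + M) ∂π
      = ∫ p : ℝ × ℝ, 2 * ((p.1 + M) * (p.2 + M)) ∂π from (integral_const_mul 2 _).symm,
      ← integral_add intf1 (intf2.const_mul 2)]
    congr 1
    funext p
    ring
  have keyP : (∫ t in Ioo (0:ℝ) 1, (qf M μ t - qf M ν t) ^ 2)
        + 2 * ∫ t in Ioo (0:ℝ) 1, (qf M μ t + M) * (qf M ν t + M)
      = (∫ t in Ioo (0:ℝ) 1, (qf M μ t + M) ^ 2)
        + ∫ t in Ioo (0:ℝ) 1, (qf M ν t + M) ^ 2 := by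
    rw [← integral_add intg3 intg4, show (2:ℝ) * ∫ t in Ioo (0:ℝ) 1,
        (qf M μ t + M) * (qf M ν t + M)
      = ∫ t in Ioo (0:ℝ) 1, 2 * ((qf M μ t + M) * (qf M ν t + M)) from
        (integral_const_mul 2 _).symm,
      ← integral_add intg1 (intg2.const_mul 2)]
    congr 1
    funext t
    ring
  have hfinal : ∫ t in Ioo (0:ℝ) 1, (qf M μ t - qf M ν t) ^ 2
      ≤ ∫ p, (p.1 - p.2) ^ 2 ∂π := by linarith
  have L1 : ∫⁻ p, ENNReal.ofReal ((p.1 - p.2) ^ 2) ∂π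
      = ENNReal.ofReal (∫ p, (p.1 - p.2) ^ 2 ∂π) :=
    (ofReal_integral_eq_lintegral_ofReal intf1 (Filter.Eventually.of_forall
      fun p => sq_nonneg _)).symm
  have L2 : ∫⁻ t in Ioo (0:ℝ) 1, ENNReal.ofReal ((qf M μ t - qf M ν t) ^ 2)
      = ENNReal.ofReal (∫ t in Ioo (0:ℝ) 1, (qf M μ t - qf M ν t) ^ 2) :=
    (ofReal_integral_eq_lintegral_ofReal intg1 (Filter.Eventually.of_forall
      fun t => sq_nonneg _)).symm
  rw [L1, L2]
  exact ENNReal.ofReal_le_ofReal hfinal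
end costlower

section w2
variable {M : ℝ} {μ ν : Measure ℝ} [IsProbabilityMeasure μ] [IsProbabilityMeasure ν]

lemma W2sq_eq (hM : 0 ≤ M)
    (hμ : μ (Set.Icc (-M) M)ᶜ = 0) (hν : ν (Set.Icc (-M) M)ᶜ = 0) :
    W2sq μ ν = ∫⁻ t in Ioo (0:ℝ) 1, ENNReal.ofReal ((qf M μ t - qf M ν t) ^ 2) := by
  have hQ1 : Measurable (qf M μ) := qf_measurable hM hμ
  have hQ2 : Measurable (qf M ν) := qf_measurable hM hν
  have hPprob : IsProbabilityMeasure (volume.restrict (Ioo (0:ℝ) 1)) := ⟨by simp⟩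
  have hpair : Measurable fun t => (qf M μ t, qf M ν t) := hQ1.prodMk hQ2
  set π₀ : Measure (ℝ × ℝ) := (volume.restrict (Ioo (0:ℝ) 1)).map
    (fun t => (qf M μ t, qf M ν t)) with hπ₀
  have hcoup : IsCoupling π₀ μ ν := by
    refine ⟨Measure.isProbabilityMeasure_map hpair.aemeasurable, ?_, ?_⟩
    · rw [hπ₀, Measure.map_map measurable_fst hpair]
      exact qf_map_eq hM hμ
    · rw [hπ₀, Measure.map_map measurable_snd hpair]
      exact qf_map_eq hM hν
  have hcost : ∫⁻ p, ENNReal.ofReal ((p.1 - p.2) ^ 2) ∂π₀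
      = ∫⁻ t in Ioo (0:ℝ) 1, ENNReal.ofReal ((qf M μ t - qf M ν t) ^ 2) := by
    rw [hπ₀, lintegral_map (f := fun p : ℝ × ℝ => ENNReal.ofReal ((p.1 - p.2) ^ 2)) (((measurable_fst.sub measurable_snd).pow_const
      2).ennreal_ofReal) hpair]
  refine le_antisymm ?_ ?_
  · rw [← hcost]
    exact sInf_le ⟨π₀, hcoup, rfl⟩
  · refine le_sInf fun I hI => ?_
    obtain ⟨π, ⟨hp, h1, h2⟩, rfl⟩ := hI
    exact cost_lower hM hμ hν hp h1 h2

lemma neg_def_aux {n : ℕ} (c a : Fin n → ℝ) (hc : ∑ i, c i = 0) :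
    ∑ i, ∑ j, c i * c j * (a i - a j) ^ 2 ≤ 0 := by
  have key : ∑ i, ∑ j, c i * c j * (a i - a j) ^ 2
      = -2 * (∑ i, c i * a i) ^ 2 := by
    have h1 : ∀ i, ∑ j, c i * c j * (a i - a j) ^ 2
        = c i * (∑ j, c j * a j ^ 2) - 2 * (c i * a i) * (∑ j, c j * a j)
          + c i * a i ^ 2 * (∑ j, c j) := by
      intro i
      rw [Finset.mul_sum, Finset.mul_sum, Finset.mul_sum,
        ← Finset.sum_sub_distrib, ← Finset.sum_add_distrib]
      exact Finset.sum_congr rfl fun j _ => by ring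
    calc ∑ i, ∑ j, c i * c j * (a i - a j) ^ 2
        = ∑ i, (c i * (∑ j, c j * a j ^ 2)
            + (c i * a i) * ((-2) * (∑ j, c j * a j))) := by
          refine Finset.sum_congr rfl fun i _ => ?_
          rw [h1 i, hc]
          ring
      _ = (∑ i, c i) * (∑ j, c j * a j ^ 2)
            + (∑ i, c i * a i) * ((-2) * (∑ j, c j * a j)) := by
          rw [Finset.sum_add_distrib, ← Finset.sum_mul, ← Finset.sum_mul]
      _ = -2 * (∑ i, c i * a i) ^ 2 := by
          rw [hc]
          ring
  rw [key]
  nlinarith [sq_nonneg (∑ i, c i * a i)]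
end w2


lemma qf_sub_sq_integrable {M : ℝ} {μ ν : Measure ℝ} [IsProbabilityMeasure μ]
    [IsProbabilityMeasure ν]
    (hM : 0 ≤ M) (hμ : μ (Set.Icc (-M) M)ᶜ = 0) (hν : ν (Set.Icc (-M) M)ᶜ = 0) :
    Integrable (fun t => (qf M μ t - qf M ν t) ^ 2) (volume.restrict (Ioo (0:ℝ) 1)) := by
  haveI : IsProbabilityMeasure (volume.restrict (Ioo (0:ℝ) 1)) := ⟨by simp⟩
  have hQ1 : Measurable (qf M μ) := qf_measurable hM hμ
  have hQ2 : Measurable (qf M ν) := qf_measurable hM hν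
  refine integrable_of_abs_bound _ ((hQ1.sub hQ2).pow_const 2).aestronglyMeasurable
    (4 * M ^ 2) ?_
  filter_upwards [ae_restrict_mem measurableSet_Ioo] with t ht
  have h1 := qf_mem_Icc hM hμ ht.1 ht.2.le
  have h2 := qf_mem_Icc hM hν ht.1 ht.2.le
  rw [abs_le]
  constructor <;> nlinarith [h1.1, h1.2, h2.1, h2.2]

/-- The squared Wasserstein distance is a negative definite kernel on the set of
Borel probability measures supported in a compact subset `Ω` of `ℝ`: for any such
measures `μ₁, …, μₙ` and reals `c₁, …, cₙ` with `∑ cᵢ = 0`, we have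
`∑_{i,j} cᵢ cⱼ W₂²(μᵢ, μⱼ) ≤ 0`. -/
theorem W2sq_negative_definite (Ω : Set ℝ) (hΩ : IsCompact Ω)
    (n : ℕ) (μ : Fin n → Measure ℝ) (hprob : ∀ i, IsProbabilityMeasure (μ i))
    (hsupp : ∀ i, μ i Ωᶜ = 0) (c : Fin n → ℝ) (hc : ∑ i, c i = 0) :
    ∑ i, ∑ j, c i * c j * (W2sq (μ i) (μ j)).toReal ≤ 0 := by
  obtain ⟨r, hr⟩ := hΩ.isBounded.subset_closedBall 0
  set M := max r 0 with hMdef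
  have hM : 0 ≤ M := le_max_right r 0
  have hΩM : Ω ⊆ Set.Icc (-M) M := by
    intro x hx
    have h := hr hx
    rw [Metric.mem_closedBall, Real.dist_eq, sub_zero, abs_le] at h
    have h1 : r ≤ M := le_max_left r 0
    exact ⟨by linarith [h.1], by linarith [h.2]⟩
  have hsupp' : ∀ i, μ i (Set.Icc (-M) M)ᶜ = 0 := fun i =>
    measure_mono_null (compl_subset_compl.2 hΩM) (hsupp i)
  have hrw : ∀ i j, (W2sq (μ i) (μ j)).toReal
      = ∫ t in Ioo (0:ℝ) 1, (qf M (μ i) t - qf M (μ j) t) ^ 2 := by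
    intro i j
    haveI := hprob i
    haveI := hprob j
    rw [W2sq_eq hM (hsupp' i) (hsupp' j),
      ← ofReal_integral_eq_lintegral_ofReal (qf_sub_sq_integrable hM (hsupp' i) (hsupp' j))
        (Filter.Eventually.of_forall fun t => sq_nonneg _),
      ENNReal.toReal_ofReal (integral_nonneg fun t => sq_nonneg _)]
  have hint : ∀ i j, Integrable
      (fun t => c i * c j * (qf M (μ i) t - qf M (μ j) t) ^ 2)
      (volume.restrict (Ioo (0:ℝ) 1)) := by
    intro i j
    haveI := hprob i
    haveI := hprob j
    exact (qf_sub_sq_integrable hM (hsupp' i) (hsupp' j)).const_mul _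
  calc ∑ i, ∑ j, c i * c j * (W2sq (μ i) (μ j)).toReal
      = ∑ i, ∑ j, ∫ t in Ioo (0:ℝ) 1,
          c i * c j * (qf M (μ i) t - qf M (μ j) t) ^ 2 := by
        refine Finset.sum_congr rfl fun i _ => Finset.sum_congr rfl fun j _ => ?_
        rw [hrw i j, ← integral_const_mul]
    _ = ∑ i, ∫ t in Ioo (0:ℝ) 1, ∑ j,
          c i * c j * (qf M (μ i) t - qf M (μ j) t) ^ 2 := by
        refine Finset.sum_congr rfl fun i _ => ?_
        rw [← integral_finset_sum _ fun j _ => hint i j]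
    _ = ∫ t in Ioo (0:ℝ) 1, ∑ i, ∑ j,
          c i * c j * (qf M (μ i) t - qf M (μ j) t) ^ 2 := by
        rw [← integral_finset_sum _ fun i _ =>
          integrable_finset_sum _ fun j _ => hint i j]
    _ ≤ 0 := integral_nonpos fun t =>
        neg_def_aux c (fun i => qf M (μ i) t) hc
end

section
/- Let Ω be a compact subset of ℝ and let 0 < H ≤ 1. Then the function (μ,ν) ↦ W₂(μ,ν)^{2H} is a negative definite kernel on the set of Borel probability measures supported in Ω: for every n, all Borel probability measures μ₁, …, μₙ supported in Ω and all c₁, …, cₙ ∈ ℝ with c₁ + … + cₙ = 0, one has Σ_{i,j} c_i c_j W₂(μ_i, μ_j)^{2H} ≤ 0. -/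
open MeasureTheory
open scoped ENNReal

/-- The Wasserstein distance `W₂(μ,ν)`. -/
noncomputable def W2 (μ ν : Measure ℝ) : ℝ :=
  Real.sqrt (W2sq μ ν).toReal

open MeasureTheory Set Filter ProbabilityTheory
open scoped ENNReal Topology Nat

set_option linter.unusedSectionVars false

namespace W2ND


variable (R : ℝ) (μ : Measure ℝ)

/-- Monotone quantile function associated to `μ`, tailored to measures supported in
`Icc (-R) R`. -/
noncomputable def Qm : ℝ → ℝ :=
  fun t => sInf (insert (R + 1) ({x | t ≤ cdf μ x} ∩ Ici (-R - 1)))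

variable {R μ}

lemma Qm_set_nonempty (t : ℝ) :
    (insert (R + 1) ({x | t ≤ cdf μ x} ∩ Ici (-R - 1))).Nonempty :=
  ⟨R + 1, mem_insert _ _⟩

lemma Qm_set_bddBelow (t : ℝ) :
    BddBelow (insert (R + 1) ({x | t ≤ cdf μ x} ∩ Ici (-R - 1))) := by
  refine ⟨min (R + 1) (-R - 1), ?_⟩
  rintro x (rfl | ⟨-, hx⟩)
  · exact min_le_left _ _
  · exact le_trans (min_le_right _ _) hx

lemma monotone_Qm : Monotone (Qm R μ) := by
  intro t₁ t₂ h
  refine csInf_le_csInf (Qm_set_bddBelow t₁) (Qm_set_nonempty t₂) ?_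
  rintro x (rfl | ⟨hx, hx'⟩)
  · exact mem_insert _ _
  · exact mem_insert_of_mem _ ⟨le_trans h hx, hx'⟩

lemma measurable_Qm : Measurable (Qm R μ) := monotone_Qm.measurable

lemma abs_Qm_le (hR : 0 ≤ R) (t : ℝ) : |Qm R μ t| ≤ R + 1 := by
  rw [abs_le]
  constructor
  · refine le_csInf (Qm_set_nonempty t) ?_
    rintro x (rfl | ⟨-, hx⟩)
    · linarith
    · have := mem_Ici.mp hx; linarith
  · exact csInf_le (Qm_set_bddBelow t) (mem_insert _ _)

section Support

variable (hR : 0 ≤ R) [IsProbabilityMeasure μ] (hμ : μ (Icc (-R) R)ᶜ = 0)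
include hR hμ

lemma cdf_eq_zero {x : ℝ} (hx : x < -R) : cdf μ x = 0 := by
  rw [cdf_eq_real, measureReal_def]
  have : μ (Iic x) = 0 := by
    refine measure_mono_null (fun y hy => ?_) hμ
    simp only [mem_compl_iff, mem_Icc, not_and_or, not_le]
    exact Or.inl (lt_of_le_of_lt hy hx)
  simp [this]

lemma cdf_eq_one {x : ℝ} (hx : R ≤ x) : cdf μ x = 1 := by
  rw [cdf_eq_real, measureReal_def]
  have h2 : μ (Ioi x) = 0 := by
    refine measure_mono_null (fun y hy => ?_) hμ
    simp only [mem_compl_iff, mem_Icc, not_and_or, not_le]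
    exact Or.inr (lt_of_le_of_lt hx hy)
  have h3 : μ (Iic x) = 1 := by
    have := measure_add_measure_compl (μ := μ) (s := Iic x) measurableSet_Iic
    rw [compl_Iic, h2, add_zero, measure_univ] at this
    exact this
  simp [h3]

lemma le_cdf_of_mem {t x : ℝ} (ht1 : t ≤ 1)
    (hx : x ∈ insert (R + 1) ({x | t ≤ cdf μ x} ∩ Ici (-R - 1))) : t ≤ cdf μ x := by
  rcases hx with rfl | ⟨hx, -⟩
  · rw [cdf_eq_one hR hμ (by linarith)]; exact ht1
  · exact hx

lemma le_cdf_Qm {t : ℝ} (ht1 : t ≤ 1) : t ≤ cdf μ (Qm R μ t) := by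
  have key : ∀ y, Qm R μ t < y → t ≤ cdf μ y := by
    intro y hy
    obtain ⟨s, hs, hsy⟩ := exists_lt_of_csInf_lt (Qm_set_nonempty t) hy
    exact le_trans (le_cdf_of_mem hR hμ ht1 hs) (monotone_cdf μ hsy.le)
  have hc : Tendsto (cdf μ) (𝓝[>] (Qm R μ t)) (𝓝 (cdf μ (Qm R μ t))) :=
    ((cdf μ).right_continuous _).tendsto.mono_left (nhdsWithin_mono _ Ioi_subset_Ici_self)
  refine ge_of_tendsto hc ?_
  filter_upwards [self_mem_nhdsWithin] with y hy using key y hy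

lemma Qm_le_iff {t x : ℝ} (ht : t ∈ Ioo (0:ℝ) 1) : Qm R μ t ≤ x ↔ t ≤ cdf μ x := by
  constructor
  · intro h
    exact le_trans (le_cdf_Qm hR hμ ht.2.le) (monotone_cdf μ h)
  · intro h
    rcases le_or_gt (-R - 1) x with hx | hx
    · exact csInf_le (Qm_set_bddBelow t) (mem_insert_of_mem _ ⟨h, hx⟩)
    · exfalso
      have : cdf μ x = 0 := cdf_eq_zero hR hμ (by linarith)
      rw [this] at h
      exact absurd ht.1 (not_lt.2 h)

lemma Qm_mem_Icc {t : ℝ} (ht : t ∈ Ioo (0:ℝ) 1) : Qm R μ t ∈ Icc (-R) R := by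
  constructor
  · refine le_csInf (Qm_set_nonempty t) ?_
    rintro x (rfl | ⟨hx, -⟩)
    · linarith
    · by_contra hlt
      push_neg at hlt
      rw [mem_setOf_eq, cdf_eq_zero hR hμ hlt] at hx
      exact absurd ht.1 (not_lt.2 hx)
  · exact csInf_le (Qm_set_bddBelow t) (mem_insert_of_mem _
      ⟨by rw [mem_setOf_eq, cdf_eq_one hR hμ le_rfl]; exact ht.2.le, mem_Ici.mpr (by linarith)⟩)

instance : IsProbabilityMeasure (volume.restrict (Ioo (0:ℝ) 1)) := by
  constructor
  simp [Real.volume_Ioo]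

lemma map_Qm : (volume.restrict (Ioo (0:ℝ) 1)).map (Qm R μ) = μ := by
  have hQM : Measurable (Qm R μ) := measurable_Qm
  haveI : IsProbabilityMeasure ((volume.restrict (Ioo (0:ℝ) 1)).map (Qm R μ)) :=
    Measure.isProbabilityMeasure_map hQM.aemeasurable
  refine Measure.ext_of_Iic _ _ (fun x => ?_)
  rw [Measure.map_apply hQM measurableSet_Iic, Measure.restrict_apply (hQM measurableSet_Iic)]
  have hset : Qm R μ ⁻¹' Iic x ∩ Ioo 0 1 = Iic (cdf μ x) ∩ Ioo 0 1 := by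
    ext t
    simp only [mem_inter_iff, mem_preimage, mem_Iic, and_congr_left_iff]
    intro ht
    exact Qm_le_iff hR hμ ht
  rw [hset, ← ofReal_cdf μ x]
  have h0 : (0:ℝ) ≤ cdf μ x := cdf_nonneg μ x
  rcases lt_or_ge (cdf μ x) 1 with h1 | h1
  · have : Iic (cdf μ x) ∩ Ioo 0 1 = Ioc 0 (cdf μ x) := by
      ext t
      simp only [mem_inter_iff, mem_Iic, mem_Ioo, mem_Ioc]
      constructor
      · rintro ⟨h, h', -⟩; exact ⟨h', h⟩
      · rintro ⟨h, h'⟩; exact ⟨h', h, lt_of_le_of_lt h' h1⟩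
    rw [this, Real.volume_Ioc, sub_zero]
  · have h1' : cdf μ x = 1 := le_antisymm (cdf_le_one μ x) h1
    have : Iic (cdf μ x) ∩ Ioo 0 1 = Ioo 0 1 := by
      rw [h1']
      ext t
      simp only [mem_inter_iff, mem_Iic, mem_Ioo]
      exact ⟨fun h => h.2, fun h => ⟨h.2.le, h⟩⟩
    rw [this, Real.volume_Ioo, h1']
    norm_num

end Support



variable {H : ℝ}

lemma measurable_phi (r : ℝ) :
    Measurable (fun u : ℝ => (1 - Real.exp (-(r * u))) * u ^ (-1 - H)) := by
  fun_prop

lemma integrableOn_phi (hH0 : 0 < H) (hH1 : H < 1) {r : ℝ} (hr : 0 ≤ r) :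
    IntegrableOn (fun u : ℝ => (1 - Real.exp (-(r * u))) * u ^ (-1 - H)) (Ioi 0) := by
  have h01 : IntegrableOn (fun u : ℝ => (1 - Real.exp (-(r * u))) * u ^ (-1 - H)) (Ioc 0 1) := by
    have hint : IntegrableOn (fun u : ℝ => r * u ^ (-H)) (Ioc 0 1) := by
      refine Integrable.const_mul ?_ r
      have := intervalIntegral.intervalIntegrable_rpow' (a := (0:ℝ)) (b := 1) (r := -H)
        (by linarith)
      rw [intervalIntegrable_iff, uIoc_of_le (by norm_num : (0:ℝ) ≤ 1)] at this
      exact this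
    refine Integrable.mono' hint ((measurable_phi r).aestronglyMeasurable) ?_
    filter_upwards [ae_restrict_mem measurableSet_Ioc] with u hu
    have hu0 : 0 < u := hu.1
    have h1 : 0 ≤ 1 - Real.exp (-(r * u)) := by
      have : Real.exp (-(r * u)) ≤ 1 := Real.exp_le_one_iff.2 (neg_nonpos.2 (by positivity))
      linarith
    have h2 : 1 - Real.exp (-(r * u)) ≤ r * u := by
      have := Real.add_one_le_exp (-(r * u))
      nlinarith [Real.exp_pos (-(r*u))]
    rw [Real.norm_eq_abs, abs_mul, abs_of_nonneg h1, abs_of_nonneg (Real.rpow_nonneg hu0.le _)]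
    calc (1 - Real.exp (-(r * u))) * u ^ (-1 - H) ≤ (r * u) * u ^ (-1 - H) := by
          exact mul_le_mul_of_nonneg_right h2 (Real.rpow_nonneg hu0.le _)
      _ = r * u ^ (-H) := by
          rw [mul_assoc]
          congr 1
          rw [show u * u ^ (-1 - H) = u ^ ((1:ℝ) + (-1 - H)) from by
            rw [Real.rpow_add hu0, Real.rpow_one]]
          congr 1
          ring
  have h1i : IntegrableOn (fun u : ℝ => (1 - Real.exp (-(r * u))) * u ^ (-1 - H)) (Ioi 1) := by
    have hint : IntegrableOn (fun u : ℝ => u ^ (-1 - H)) (Ioi 1) :=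
      integrableOn_Ioi_rpow_of_lt (by linarith) one_pos
    refine Integrable.mono' hint ((measurable_phi r).aestronglyMeasurable) ?_
    filter_upwards [ae_restrict_mem measurableSet_Ioi] with u hu
    have hu0 : (0:ℝ) < u := lt_trans one_pos hu
    have h1 : 0 ≤ 1 - Real.exp (-(r * u)) := by
      have : Real.exp (-(r * u)) ≤ 1 := Real.exp_le_one_iff.2 (neg_nonpos.2 (by positivity))
      linarith
    have h2 : 1 - Real.exp (-(r * u)) ≤ 1 := by
      have := Real.exp_pos (-(r * u)); linarith
    rw [Real.norm_eq_abs, abs_mul, abs_of_nonneg h1, abs_of_nonneg (Real.rpow_nonneg hu0.le _)]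
    nlinarith [Real.rpow_nonneg hu0.le (-1 - H), mul_le_mul_of_nonneg_right h2 (Real.rpow_nonneg hu0.le (-1 - H))]
  have : Ioi (0:ℝ) = Ioc 0 1 ∪ Ioi 1 := (Ioc_union_Ioi_eq_Ioi (by norm_num)).symm
  rw [this]
  exact h01.union h1i

/-- The normalizing constant. -/
noncomputable def cH (H : ℝ) : ℝ := ∫ u in Ioi (0:ℝ), (1 - Real.exp (-u)) * u ^ (-1 - H)

lemma cH_pos (hH0 : 0 < H) (hH1 : H < 1) : 0 < cH H := by
  have hint : IntegrableOn (fun u : ℝ => (1 - Real.exp (-(1 * u))) * u ^ (-1 - H)) (Ioi 0) :=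
    integrableOn_phi hH0 hH1 zero_le_one
  simp only [one_mul] at hint
  have hnonneg : (0:ℝ→ℝ) ≤ᵐ[volume.restrict (Ioi 0)]
      fun u => (1 - Real.exp (-u)) * u ^ (-1 - H) := by
    filter_upwards [ae_restrict_mem measurableSet_Ioi] with u hu
    have hu0 : (0:ℝ) < u := hu
    have : Real.exp (-u) < 1 := Real.exp_lt_one_iff.2 (by linarith)
    have h2 := Real.rpow_pos_of_pos hu0 (-1 - H)
    exact le_of_lt (mul_pos (by linarith) h2)
  rw [cH]
  rw [setIntegral_pos_iff_support_of_nonneg_ae hnonneg hint]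
  have hsub : Ioi (0:ℝ) ⊆ Function.support (fun u => (1 - Real.exp (-u)) * u ^ (-1 - H)) ∩ Ioi 0 := by
    intro u hu
    have hu0 : (0:ℝ) < u := hu
    refine ⟨?_, hu⟩
    have h1 : Real.exp (-u) < 1 := Real.exp_lt_one_iff.2 (by linarith)
    have h2 := Real.rpow_pos_of_pos hu0 (-1 - H)
    exact ne_of_gt (mul_pos (by linarith) h2)
  calc (0:ℝ≥0∞) < volume (Ioi (0:ℝ)) := by simp
    _ ≤ _ := measure_mono hsub

lemma integral_phi (hH0 : 0 < H) (hH1 : H < 1) {r : ℝ} (hr : 0 ≤ r) :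
    ∫ u in Ioi (0:ℝ), (1 - Real.exp (-(r * u))) * u ^ (-1 - H) = r ^ H * cH H := by
  rcases eq_or_lt_of_le hr with rfl | hr0
  · simp [Real.zero_rpow (ne_of_gt hH0)]
  · have key := MeasureTheory.integral_comp_mul_right_Ioi
      (g := fun v : ℝ => (1 - Real.exp (-v)) * v ^ (-1 - H)) (a := 0) (b := r) hr0
    simp only [zero_mul] at key
    have heq : ∀ u ∈ Ioi (0:ℝ),
        (fun u => (1 - Real.exp (-(r * u))) * u ^ (-1 - H)) u
          = (fun u => r ^ ((1:ℝ) + H) * ((1 - Real.exp (-(u * r))) * (u * r) ^ (-1 - H))) u := by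
      intro u hu
      have hu0 : (0:ℝ) < u := hu
      simp only
      rw [Real.mul_rpow hu0.le hr0.le]
      have : r ^ ((1:ℝ) + H) * ((1 - Real.exp (-(u * r))) * (u ^ (-1 - H) * r ^ (-1 - H)))
          = (r ^ ((1:ℝ) + H) * r ^ (-1 - H)) * ((1 - Real.exp (-(u * r))) * u ^ (-1 - H)) := by
        ring
      rw [this, ← Real.rpow_add hr0]
      have h0 : (1:ℝ) + H + (-1 - H) = 0 := by ring
      rw [h0, Real.rpow_zero, one_mul, mul_comm r u]
    rw [setIntegral_congr_fun measurableSet_Ioi heq]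
    rw [integral_const_mul, key, smul_eq_mul, ← mul_assoc]
    congr 1
    rw [← Real.rpow_neg_one r, ← Real.rpow_add hr0]
    congr 1
    ring



lemma real_exp_tsum (x : ℝ) : Real.exp x = ∑' k : ℕ, x ^ k / k ! := by
  rw [Real.exp_eq_exp_ℝ, NormedSpace.exp_eq_tsum_div]

section Gram

variable {n : ℕ} {q : Fin n → ℝ → ℝ} {C : ℝ}
  (hq : ∀ i, Measurable (q i))
  (hC : ∀ i t, |q i t| ≤ C)
  (h0 : ∀ i, ∀ t ∉ Ioo (0:ℝ) 1, q i t = 0)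

include hq hC h0

lemma integrable_q_mul (i j : Fin n) : Integrable (fun t => q i t * q j t) (volume : Measure ℝ) := by
  have hCnn : 0 ≤ C := le_trans (abs_nonneg _) (hC i 0)
  have hbd : Integrable ((Ioo (0:ℝ) 1).indicator (fun _ => C * C)) volume := by
    rw [integrable_indicator_iff measurableSet_Ioo]
    exact integrableOn_const (by simp [Real.volume_Ioo])
  refine Integrable.mono' hbd ((hq i).mul (hq j)).aestronglyMeasurable ?_
  refine ae_of_all _ (fun t => ?_)
  by_cases ht : t ∈ Ioo (0:ℝ) 1
  · rw [indicator_of_mem ht, Real.norm_eq_abs, abs_mul]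
    exact mul_le_mul (hC i t) (hC j t) (abs_nonneg _) hCnn
  · rw [indicator_of_notMem ht, h0 i t ht]
    simp

lemma integrable_G_mul (k : ℕ) (i j : Fin n) :
    Integrable (fun x : Fin k → ℝ => (∏ l, q i (x l)) * ∏ l, q j (x l))
      (volume : Measure (Fin k → ℝ)) := by
  have hCnn : 0 ≤ C := le_trans (abs_nonneg _) (hC i 0)
  have habs : ∀ (m : Fin n) (x : Fin k → ℝ), |∏ l, q m (x l)| ≤ C ^ k := by
    intro m x
    rw [Finset.abs_prod]
    calc ∏ l, |q m (x l)| ≤ ∏ _l : Fin k, C :=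
          Finset.prod_le_prod (fun _ _ => abs_nonneg _) (fun l _ => hC m (x l))
      _ = C ^ k := by simp
  have hmeas : ∀ m : Fin n, Measurable (fun x : Fin k → ℝ => ∏ l, q m (x l)) := by
    intro m
    exact Finset.measurable_prod _ (fun l _ => (hq m).comp (measurable_pi_apply l))
  have hbd : Integrable ((univ.pi (fun _ : Fin k => Ioo (0:ℝ) 1)).indicator
      (fun _ => C ^ k * C ^ k)) (volume : Measure (Fin k → ℝ)) := by
    rw [integrable_indicator_iff (MeasurableSet.univ_pi (fun _ => measurableSet_Ioo))]
    refine integrableOn_const ?_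
    rw [volume_pi_pi]
    simp [Real.volume_Ioo]
  refine Integrable.mono' hbd ((hmeas i).mul (hmeas j)).aestronglyMeasurable ?_
  refine ae_of_all _ (fun x => ?_)
  by_cases hx : x ∈ univ.pi (fun _ : Fin k => Ioo (0:ℝ) 1)
  · rw [indicator_of_mem hx, Real.norm_eq_abs, abs_mul]
    exact mul_le_mul (habs i x) (habs j x) (abs_nonneg _) (pow_nonneg hCnn k)
  · rw [indicator_of_notMem hx]
    rw [Set.mem_pi] at hx
    push_neg at hx
    obtain ⟨l, -, hl⟩ := hx
    have : q i (x l) = 0 := h0 i (x l) hl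
    rw [Finset.prod_eq_zero (Finset.mem_univ l) this]
    simp

lemma pow_gram_nonneg (d : Fin n → ℝ) (k : ℕ) :
    0 ≤ ∑ i, ∑ j, d i * d j * (∫ t, q i t * q j t) ^ k := by
  classical
  have hpow : ∀ i j : Fin n, (∫ t, q i t * q j t) ^ k
      = ∫ x : Fin k → ℝ, (∏ l, q i (x l)) * ∏ l, q j (x l) := by
    intro i j
    have := MeasureTheory.integral_fintype_prod_volume_eq_pow (𝕜 := ℝ) (ι := Fin k)
      (f := fun t => q i t * q j t)
    rw [Fintype.card_fin] at this
    rw [← this]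
    congr 1
    ext x
    rw [← Finset.prod_mul_distrib]
  calc (0:ℝ) ≤ ∫ x : Fin k → ℝ, (∑ i, d i * ∏ l, q i (x l)) ^ 2 :=
        integral_nonneg (fun x => sq_nonneg _)
    _ = ∫ x : Fin k → ℝ, ∑ i, ∑ j,
        (d i * d j) * ((∏ l, q i (x l)) * ∏ l, q j (x l)) := by
        congr 1
        ext x
        rw [sq, Finset.sum_mul_sum]
        refine Finset.sum_congr rfl (fun i _ => Finset.sum_congr rfl (fun j _ => by ring))
    _ = ∑ i, ∑ j, d i * d j * (∫ t, q i t * q j t) ^ k := by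
        rw [integral_finset_sum]
        · refine Finset.sum_congr rfl (fun i _ => ?_)
          rw [integral_finset_sum]
          · refine Finset.sum_congr rfl (fun j _ => ?_)
            rw [integral_const_mul, hpow]
          · exact fun j _ => ((integrable_G_mul hq hC h0 k i j).const_mul _)
        · exact fun i _ => integrable_finset_sum _
            (fun j _ => ((integrable_G_mul hq hC h0 k i j).const_mul _))

lemma exp_gram_nonneg (d : Fin n → ℝ) {v : ℝ} (hv : 0 ≤ v) :
    0 ≤ ∑ i, ∑ j, d i * d j * Real.exp (v * ∫ t, q i t * q j t) := by
  classical
  have hsummable : ∀ i j : Fin n,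
      Summable (fun k : ℕ => d i * d j * ((v * ∫ t, q i t * q j t) ^ k / k !)) :=
    fun i j => (Real.summable_pow_div_factorial _).mul_left _
  have hexp : ∀ i j : Fin n, d i * d j * Real.exp (v * ∫ t, q i t * q j t)
      = ∑' k : ℕ, d i * d j * ((v * ∫ t, q i t * q j t) ^ k / k !) := by
    intro i j
    rw [real_exp_tsum, tsum_mul_left]
  calc (0:ℝ) ≤ ∑' k : ℕ, ∑ i, ∑ j, d i * d j * ((v * ∫ t, q i t * q j t) ^ k / k !) := by
        refine tsum_nonneg (fun k => ?_)
        have : ∀ i j : Fin n, d i * d j * ((v * ∫ t, q i t * q j t) ^ k / k !)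
            = (v ^ k / k !) * (d i * d j * (∫ t, q i t * q j t) ^ k) := by
          intro i j
          rw [mul_pow]
          ring
        simp_rw [this, ← Finset.mul_sum]
        exact mul_nonneg (by positivity) (pow_gram_nonneg hq hC h0 d k)
    _ = ∑ i, ∑ j, d i * d j * Real.exp (v * ∫ t, q i t * q j t) := by
        rw [Summable.tsum_finsetSum (fun i _ => ?_)]
        · refine Finset.sum_congr rfl (fun i _ => ?_)
          rw [Summable.tsum_finsetSum (fun j _ => hsummable i j)]
          exact Finset.sum_congr rfl (fun j _ => (hexp i j).symm)
        · exact summable_sum (fun j _ => hsummable i j)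
          -- summable of finite sum over j

lemma gauss_gram_nonneg (c : Fin n → ℝ) {u : ℝ} (hu : 0 ≤ u) :
    0 ≤ ∑ i, ∑ j, c i * c j * Real.exp (-(u * ∫ t, (q i t - q j t) ^ 2)) := by
  classical
  have hrij : ∀ i j : Fin n, ∫ t, (q i t - q j t) ^ 2
      = (∫ t, q i t * q i t) + (∫ t, q j t * q j t) - 2 * ∫ t, q i t * q j t := by
    intro i j
    have h1 : (fun t => (q i t - q j t) ^ 2)
        = fun t => (q i t * q i t + q j t * q j t) - 2 * (q i t * q j t) := by
      ext t; ring
    have hsum : Integrable (fun t => q i t * q i t + q j t * q j t) (volume : Measure ℝ) :=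
      (integrable_q_mul hq hC h0 i i).add (integrable_q_mul hq hC h0 j j)
    have hmul : Integrable (fun t => 2 * (q i t * q j t)) (volume : Measure ℝ) :=
      (integrable_q_mul hq hC h0 i j).const_mul 2
    rw [h1, integral_sub hsum hmul,
      integral_add (integrable_q_mul hq hC h0 i i) (integrable_q_mul hq hC h0 j j),
      integral_const_mul]
  set d : Fin n → ℝ := fun i => c i * Real.exp (-(u * ∫ t, q i t * q i t)) with hd
  have key := exp_gram_nonneg hq hC h0 d (v := 2 * u) (by linarith)
  refine le_trans key (le_of_eq ?_)
  refine Finset.sum_congr rfl (fun i _ => Finset.sum_congr rfl (fun j _ => ?_))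
  rw [hrij i j, hd]
  simp only
  rw [show -(u * ((∫ t, q i t * q i t) + (∫ t, q j t * q j t) - 2 * ∫ t, q i t * q j t))
      = (-(u * ∫ t, q i t * q i t)) + ((-(u * ∫ t, q j t * q j t))
        + (2 * u * ∫ t, q i t * q j t)) from by ring]
  rw [Real.exp_add, Real.exp_add]
  ring

end Gram


section NDCore

variable {n : ℕ} {q : Fin n → ℝ → ℝ} {C : ℝ}
  (hq : ∀ i, Measurable (q i))
  (hC : ∀ i t, |q i t| ≤ C)
  (h0 : ∀ i, ∀ t ∉ Ioo (0:ℝ) 1, q i t = 0)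

include hq hC h0

lemma rij_nonneg (i j : Fin n) : 0 ≤ ∫ t, (q i t - q j t) ^ 2 :=
  integral_nonneg (fun t => sq_nonneg _)

lemma integrable_sq_sub (i j : Fin n) :
    Integrable (fun t => (q i t - q j t) ^ 2) (volume : Measure ℝ) := by
  have h1 : (fun t => (q i t - q j t) ^ 2)
      = fun t => (q i t * q i t + q j t * q j t) - 2 * (q i t * q j t) := by
    ext t; ring
  rw [h1]
  exact ((integrable_q_mul hq hC h0 i i).add (integrable_q_mul hq hC h0 j j)).sub
    ((integrable_q_mul hq hC h0 i j).const_mul 2)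

lemma nd_core_one (c : Fin n → ℝ) (hc : ∑ i, c i = 0) :
    ∑ i, ∑ j, c i * c j * ∫ t, (q i t - q j t) ^ 2 ≤ 0 := by
  classical
  have hA : ∀ i j : Fin n, ∫ t, (q i t - q j t) ^ 2
      = (∫ t, q i t * q i t) + (∫ t, q j t * q j t) - 2 * ∫ t, q i t * q j t := by
    intro i j
    have h1 : (fun t => (q i t - q j t) ^ 2)
        = fun t => (q i t * q i t + q j t * q j t) - 2 * (q i t * q j t) := by
      ext t; ring
    have hsum : Integrable (fun t => q i t * q i t + q j t * q j t) (volume : Measure ℝ) :=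
      (integrable_q_mul hq hC h0 i i).add (integrable_q_mul hq hC h0 j j)
    have hmul : Integrable (fun t => 2 * (q i t * q j t)) (volume : Measure ℝ) :=
      (integrable_q_mul hq hC h0 i j).const_mul 2
    rw [h1, integral_sub hsum hmul,
      integral_add (integrable_q_mul hq hC h0 i i) (integrable_q_mul hq hC h0 j j),
      integral_const_mul]
  set a : Fin n → ℝ := fun i => ∫ t, q i t * q i t with ha
  set A : Fin n → Fin n → ℝ := fun i j => ∫ t, q i t * q j t with hAA
  have : ∑ i, ∑ j, c i * c j * ∫ t, (q i t - q j t) ^ 2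
      = ∑ i, ((c i * a i) * (∑ j, c j) + c i * (∑ j, c j * a j)
          - 2 * ∑ j, (c i * c j * A i j)) := by
    refine Finset.sum_congr rfl (fun i _ => ?_)
    calc ∑ j, c i * c j * ∫ t, (q i t - q j t) ^ 2
        = ∑ j, ((c i * a i) * c j + c i * (c j * a j) - 2 * (c i * c j * A i j)) := by
          refine Finset.sum_congr rfl (fun j _ => ?_)
          rw [hA i j]
          simp only [ha, hAA]
          ring
      _ = (c i * a i) * (∑ j, c j) + c i * (∑ j, c j * a j)
            - 2 * ∑ j, (c i * c j * A i j) := by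
          rw [Finset.sum_sub_distrib, Finset.sum_add_distrib, ← Finset.mul_sum,
            ← Finset.mul_sum, ← Finset.mul_sum]
  rw [this, hc]
  simp only [mul_zero, zero_add]
  have hsplit : ∑ i, (c i * (∑ j, c j * a j) - 2 * ∑ j, (c i * c j * A i j))
      = (∑ i, c i) * (∑ j, c j * a j) - 2 * ∑ i, ∑ j, (c i * c j * A i j) := by
    rw [Finset.sum_sub_distrib, ← Finset.sum_mul, Finset.mul_sum]
    simp [Finset.mul_sum]
  rw [hsplit, hc, zero_mul, zero_sub]
  have hgram := pow_gram_nonneg hq hC h0 c 1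
  simp only [pow_one] at hgram
  simp only [hAA]
  linarith

lemma nd_core (c : Fin n → ℝ) (hc : ∑ i, c i = 0) {H : ℝ} (hH0 : 0 < H) (hH1 : H ≤ 1) :
    ∑ i, ∑ j, c i * c j * (∫ t, (q i t - q j t) ^ 2) ^ H ≤ 0 := by
  classical
  rcases eq_or_lt_of_le hH1 with rfl | hH1'
  · simp only [Real.rpow_one]
    exact nd_core_one hq hC h0 c hc
  · set r : Fin n → Fin n → ℝ := fun i j => ∫ t, (q i t - q j t) ^ 2 with hrdef
    have hr : ∀ i j, 0 ≤ r i j := fun i j => rij_nonneg hq hC h0 i j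
    have key : ∀ i j, c i * c j * (r i j) ^ H * cH H
        = ∫ u in Ioi (0:ℝ), c i * c j * ((1 - Real.exp (-(r i j * u))) * u ^ (-1 - H)) := by
      intro i j
      rw [integral_const_mul, integral_phi hH0 hH1' (hr i j)]
      ring
    have hSc : (∑ i, ∑ j, c i * c j * (r i j) ^ H) * cH H ≤ 0 := by
      have heq : (∑ i, ∑ j, c i * c j * (r i j) ^ H) * cH H
          = ∫ u in Ioi (0:ℝ), ∑ i, ∑ j,
              c i * c j * ((1 - Real.exp (-(r i j * u))) * u ^ (-1 - H)) := by
        rw [integral_finset_sum _ (fun i _ => integrable_finset_sum _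
          (fun j _ => ((integrableOn_phi hH0 hH1' (hr i j)).const_mul (c i * c j))))]
        rw [Finset.sum_mul]
        refine Finset.sum_congr rfl (fun i _ => ?_)
        rw [integral_finset_sum _
          (fun j _ => ((integrableOn_phi hH0 hH1' (hr i j)).const_mul (c i * c j)))]
        rw [Finset.sum_mul]
        exact Finset.sum_congr rfl (fun j _ => key i j)
      rw [heq]
      refine integral_nonpos_of_ae ?_
      filter_upwards [ae_restrict_mem measurableSet_Ioi] with u hu
      simp only [Pi.zero_apply]
      have hu0 : (0:ℝ) < u := hu
      have hgauss := gauss_gram_nonneg hq hC h0 c (le_of_lt hu0)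
      simp_rw [mul_comm u] at hgauss
      have hp : 0 ≤ u ^ (-1 - H) := Real.rpow_nonneg hu0.le _
      have hsplit : ∑ i, ∑ j, c i * c j * ((1 - Real.exp (-(r i j * u))) * u ^ (-1 - H))
          = ((∑ i, c i) * (∑ j, c j)) * u ^ (-1 - H)
            - (∑ i, ∑ j, c i * c j * Real.exp (-(r i j * u))) * u ^ (-1 - H) := by
        rw [Finset.sum_mul_sum, Finset.sum_mul, Finset.sum_mul, ← Finset.sum_sub_distrib]
        refine Finset.sum_congr rfl (fun i _ => ?_)
        rw [Finset.sum_mul, Finset.sum_mul, ← Finset.sum_sub_distrib]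
        exact Finset.sum_congr rfl (fun j _ => by ring)
      rw [hsplit, hc, zero_mul, zero_mul, zero_sub, neg_nonpos]
      exact mul_nonneg hgauss hp
    have hcH := cH_pos hH0 hH1'
    by_contra hS
    push_neg at hS
    exact absurd hSc (not_le.2 (mul_pos hS hcH))

end NDCore

section Transport

/-- The auxiliary "layer-cake" function. -/
noncomputable def gfun (x s : ℝ) : ℝ := (if s < x then 1 else 0) - (if s < 0 then 1 else 0)

lemma integrable_gfun (x : ℝ) : Integrable (gfun x) (volume : Measure ℝ) := by
  rcases le_or_gt 0 x with hx | hx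
  · have : gfun x = (Ico 0 x).indicator (fun _ => (1:ℝ)) := by
      ext s
      unfold gfun
      by_cases h1 : s < x <;> by_cases h2 : s < 0 <;>
        simp [indicator_apply, mem_Ico, h1, h2, not_lt.1, *] <;> first | linarith | rfl
    rw [this, integrable_indicator_iff measurableSet_Ico]
    exact integrableOn_const (by simp [Real.volume_Ico])
  · have : gfun x = fun s => -((Ico x 0).indicator (fun _ => (1:ℝ)) s) := by
      ext s
      unfold gfun
      by_cases h1 : s < x <;> by_cases h2 : s < 0 <;>
        simp [indicator_apply, mem_Ico, h1, h2, not_lt.1, *] <;> first | linarith | rfl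
    rw [this]
    refine Integrable.neg ?_
    rw [integrable_indicator_iff measurableSet_Ico]
    exact integrableOn_const (by simp [Real.volume_Ico])

lemma integral_gfun (x : ℝ) : ∫ s, gfun x s = x := by
  rcases le_or_gt 0 x with hx | hx
  · have : gfun x = (Ico 0 x).indicator (fun _ => (1:ℝ)) := by
      ext s
      unfold gfun
      by_cases h1 : s < x <;> by_cases h2 : s < 0 <;>
        simp [indicator_apply, mem_Ico, h1, h2, not_lt.1, *] <;> first | linarith | rfl
    rw [this, integral_indicator_const (1:ℝ) measurableSet_Ico]
    simp [Real.volume_Ico, ENNReal.toReal_ofReal hx, hx]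
  · have : gfun x = fun s => -((Ico x 0).indicator (fun _ => (1:ℝ)) s) := by
      ext s
      unfold gfun
      by_cases h1 : s < x <;> by_cases h2 : s < 0 <;>
        simp [indicator_apply, mem_Ico, h1, h2, not_lt.1, *] <;> first | linarith | rfl
    rw [this, integral_neg, integral_indicator_const (1:ℝ) measurableSet_Ico]
    rw [measureReal_def]
    simp only [Real.volume_Ico, smul_eq_mul, mul_one, zero_sub]
    rw [ENNReal.toReal_ofReal (by linarith)]
    ring

lemma abs_gfun_le (x s : ℝ) : |gfun x s| ≤ 1 := by
  unfold gfun
  split_ifs <;> norm_num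

lemma gfun_eq_zero {R x s : ℝ} (hR : 0 ≤ R) (hx : x ∈ Icc (-R) R) (hs : s ∉ Icc (-R) R) :
    gfun x s = 0 := by
  rw [mem_Icc] at hx
  simp only [mem_Icc, not_and_or, not_le] at hs
  unfold gfun
  rcases hs with hs | hs
  · rw [if_pos (by linarith), if_pos (by linarith)]
    ring
  · rw [if_neg (by linarith), if_neg (by linarith)]
    ring

lemma measurable_gfun_pair :
    Measurable (fun w : (ℝ × ℝ) × (ℝ × ℝ) => gfun w.1.1 w.2.1 * gfun w.1.2 w.2.2) := by
  unfold gfun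
  refine Measurable.mul ?_ ?_
  · refine Measurable.sub ?_ ?_
    · exact Measurable.ite (measurableSet_lt (measurable_snd.fst) (measurable_fst.fst))
        measurable_const measurable_const
    · exact Measurable.ite (measurableSet_lt (measurable_snd.fst) measurable_const)
        measurable_const measurable_const
  · refine Measurable.sub ?_ ?_
    · exact Measurable.ite (measurableSet_lt (measurable_snd.snd) (measurable_fst.snd))
        measurable_const measurable_const
    · exact Measurable.ite (measurableSet_lt (measurable_snd.snd) measurable_const)
        measurable_const measurable_const

variable {R : ℝ}

lemma coupling_box_null {π : Measure (ℝ × ℝ)} {μ ν : Measure ℝ}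
    (hfst : π.map Prod.fst = μ) (hsnd : π.map Prod.snd = ν)
    (hμ : μ (Icc (-R) R)ᶜ = 0) (hν : ν (Icc (-R) R)ᶜ = 0) :
    π ((Icc (-R) R ×ˢ Icc (-R) R)ᶜ) = 0 := by
  have h1 : π (Prod.fst ⁻¹' (Icc (-R) R)ᶜ) = 0 := by
    rw [← Measure.map_apply measurable_fst measurableSet_Icc.compl, hfst]
    exact hμ
  have h2 : π (Prod.snd ⁻¹' (Icc (-R) R)ᶜ) = 0 := by
    rw [← Measure.map_apply measurable_snd measurableSet_Icc.compl, hsnd]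
    exact hν
  refine measure_mono_null (fun p hp => ?_) (measure_union_null h1 h2)
  simp only [mem_compl_iff, mem_prod, not_and_or] at hp
  rcases hp with hp | hp
  · exact Or.inl hp
  · exact Or.inr hp

lemma integrable_gfun_pair (hR : 0 ≤ R) {π : Measure (ℝ × ℝ)} [IsProbabilityMeasure π]
    (hbox : π ((Icc (-R) R ×ˢ Icc (-R) R)ᶜ) = 0) :
    Integrable (fun w : (ℝ × ℝ) × (ℝ × ℝ) => gfun w.1.1 w.2.1 * gfun w.1.2 w.2.2)
      (π.prod ((volume : Measure ℝ).prod volume)) := by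
  set B : Set (ℝ × ℝ) := Icc (-R) R ×ˢ Icc (-R) R with hB
  have hBmeas : MeasurableSet B := (measurableSet_Icc.prod measurableSet_Icc)
  have hbd : Integrable (((univ : Set (ℝ × ℝ)) ×ˢ B).indicator (fun _ => (1:ℝ)))
      (π.prod ((volume : Measure ℝ).prod volume)) := by
    rw [integrable_indicator_iff (MeasurableSet.univ.prod hBmeas)]
    refine integrableOn_const ?_
    rw [Measure.prod_prod, measure_univ, one_mul, hB, Measure.prod_prod]
    exact (ENNReal.mul_lt_top (by simp [Real.volume_Icc]) (by simp [Real.volume_Icc])).ne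
  refine Integrable.mono' hbd measurable_gfun_pair.aestronglyMeasurable ?_
  have hsub : {w : (ℝ × ℝ) × (ℝ × ℝ) |
      ¬ ‖gfun w.1.1 w.2.1 * gfun w.1.2 w.2.2‖
        ≤ ((univ : Set (ℝ × ℝ)) ×ˢ B).indicator (fun _ => (1:ℝ)) w} ⊆ Bᶜ ×ˢ univ := by
    intro w hw
    simp only [mem_setOf_eq] at hw
    by_contra hmem
    simp only [mem_prod, mem_compl_iff, mem_univ, and_true, not_not] at hmem
    refine hw ?_
    by_cases hz : w.2 ∈ B
    · rw [indicator_of_mem (by exact ⟨mem_univ _, hz⟩)]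
      rw [Real.norm_eq_abs, abs_mul]
      simpa using mul_le_mul (abs_gfun_le w.1.1 w.2.1) (abs_gfun_le w.1.2 w.2.2)
        (abs_nonneg _) zero_le_one
    · have hz' : w.2.1 ∉ Icc (-R) R ∨ w.2.2 ∉ Icc (-R) R := by
        by_contra hcon
        push_neg at hcon
        exact hz ⟨hcon.1, hcon.2⟩
      have : gfun w.1.1 w.2.1 * gfun w.1.2 w.2.2 = 0 := by
        rcases hz' with hz' | hz'
        · rw [gfun_eq_zero hR hmem.1 hz', zero_mul]
        · rw [gfun_eq_zero hR hmem.2 hz', mul_zero]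
      rw [this]
      simp [indicator_apply]
      positivity
  refine (ae_iff.2 (measure_mono_null hsub ?_))
  rw [Measure.prod_prod, hbox, zero_mul]

lemma double_integral_eq (hR : 0 ≤ R) {π : Measure (ℝ × ℝ)} [IsProbabilityMeasure π]
    (hbox : π ((Icc (-R) R ×ˢ Icc (-R) R)ᶜ) = 0) :
    ∫ p : ℝ × ℝ, p.1 * p.2 ∂π
      = ∫ z : ℝ × ℝ, (∫ p : ℝ × ℝ, gfun p.1 z.1 * gfun p.2 z.2 ∂π)
          ∂((volume : Measure ℝ).prod volume) := by
  have h1 : ∫ p : ℝ × ℝ, p.1 * p.2 ∂π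
      = ∫ p : ℝ × ℝ, (∫ z : ℝ × ℝ, gfun p.1 z.1 * gfun p.2 z.2
          ∂((volume : Measure ℝ).prod volume)) ∂π := by
    refine integral_congr_ae (ae_of_all _ (fun p => ?_))
    show p.1 * p.2 = ∫ z : ℝ × ℝ, gfun p.1 z.1 * gfun p.2 z.2
      ∂((volume : Measure ℝ).prod volume)
    rw [integral_prod_mul (f := gfun p.1) (g := gfun p.2), integral_gfun, integral_gfun]
  rw [h1]
  exact integral_integral_swap (integrable_gfun_pair hR hbox)

lemma inner_integral_eq (ρ : Measure (ℝ × ℝ)) [IsProbabilityMeasure ρ] (s t : ℝ) :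
    ∫ p : ℝ × ℝ, gfun p.1 s * gfun p.2 t ∂ρ
      = (ρ (Ioi s ×ˢ Ioi t)).toReal
        - (if t < 0 then (ρ (Ioi s ×ˢ univ)).toReal else 0)
        - (if s < 0 then (ρ (univ ×ˢ Ioi t)).toReal else 0)
        + (if s < 0 then (1:ℝ) else 0) * (if t < 0 then (1:ℝ) else 0) := by
  have hpt : ∀ p : ℝ × ℝ, gfun p.1 s * gfun p.2 t
      = (Ioi s ×ˢ Ioi t).indicator (fun _ => (1:ℝ)) p
        - (if t < 0 then (1:ℝ) else 0) * (Ioi s ×ˢ (univ : Set ℝ)).indicator (fun _ => (1:ℝ)) p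
        - (if s < 0 then (1:ℝ) else 0) * ((univ : Set ℝ) ×ˢ Ioi t).indicator (fun _ => (1:ℝ)) p
        + (if s < 0 then (1:ℝ) else 0) * (if t < 0 then (1:ℝ) else 0) := by
    intro p
    unfold gfun
    by_cases h1 : s < p.1 <;> by_cases h2 : t < p.2 <;>
      simp only [indicator_apply, mem_prod, mem_Ioi, mem_univ, h1, h2, true_and, and_true,
        false_and, and_false, if_true, if_false] <;> ring
  simp_rw [hpt]
  have hi1 : Integrable ((Ioi s ×ˢ Ioi t).indicator (fun _ => (1:ℝ))) ρ := by
    rw [integrable_indicator_iff (measurableSet_Ioi.prod measurableSet_Ioi)]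
    exact integrableOn_const (measure_ne_top _ _)
  have hi2 : Integrable (fun p => (if t < 0 then (1:ℝ) else 0)
      * (Ioi s ×ˢ (univ : Set ℝ)).indicator (fun _ => (1:ℝ)) p) ρ := by
    refine Integrable.const_mul ?_ _
    rw [integrable_indicator_iff (measurableSet_Ioi.prod MeasurableSet.univ)]
    exact integrableOn_const (measure_ne_top _ _)
  have hi3 : Integrable (fun p => (if s < 0 then (1:ℝ) else 0)
      * ((univ : Set ℝ) ×ˢ Ioi t).indicator (fun _ => (1:ℝ)) p) ρ := by
    refine Integrable.const_mul ?_ _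
    rw [integrable_indicator_iff (MeasurableSet.univ.prod measurableSet_Ioi)]
    exact integrableOn_const (measure_ne_top _ _)
  have hi12 : Integrable (fun p => (Ioi s ×ˢ Ioi t).indicator (fun _ => (1:ℝ)) p
      - (if t < 0 then (1:ℝ) else 0) * (Ioi s ×ˢ (univ : Set ℝ)).indicator (fun _ => (1:ℝ)) p) ρ :=
    hi1.sub hi2
  have hi123 : Integrable (fun p => (Ioi s ×ˢ Ioi t).indicator (fun _ => (1:ℝ)) p
      - (if t < 0 then (1:ℝ) else 0) * (Ioi s ×ˢ (univ : Set ℝ)).indicator (fun _ => (1:ℝ)) p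
      - (if s < 0 then (1:ℝ) else 0) * ((univ : Set ℝ) ×ˢ Ioi t).indicator (fun _ => (1:ℝ)) p) ρ :=
    hi12.sub hi3
  rw [integral_add hi123 (integrable_const _), integral_const]
  rw [integral_sub hi12 hi3, integral_sub hi1 hi2]
  rw [integral_indicator_const (1:ℝ) (measurableSet_Ioi.prod measurableSet_Ioi)]
  rw [integral_const_mul, integral_const_mul]
  rw [integral_indicator_const (1:ℝ) (measurableSet_Ioi.prod MeasurableSet.univ)]
  rw [integral_indicator_const (1:ℝ) (MeasurableSet.univ.prod measurableSet_Ioi)]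
  simp [measure_univ, mul_comm, mul_ite, ite_mul, measureReal_def]

lemma integral_mul_mono (hR : 0 ≤ R) {π π' : Measure (ℝ × ℝ)}
    [IsProbabilityMeasure π] [IsProbabilityMeasure π']
    (hbox : π ((Icc (-R) R ×ˢ Icc (-R) R)ᶜ) = 0)
    (hbox' : π' ((Icc (-R) R ×ˢ Icc (-R) R)ᶜ) = 0)
    (hfst : π.map Prod.fst = π'.map Prod.fst) (hsnd : π.map Prod.snd = π'.map Prod.snd)
    (hcmp : ∀ s t : ℝ, π (Ioi s ×ˢ Ioi t) ≤ π' (Ioi s ×ˢ Ioi t)) :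
    ∫ p : ℝ × ℝ, p.1 * p.2 ∂π ≤ ∫ p : ℝ × ℝ, p.1 * p.2 ∂π' := by
  rw [double_integral_eq hR hbox, double_integral_eq hR hbox']
  refine integral_mono ((integrable_gfun_pair hR hbox).integral_prod_right)
    ((integrable_gfun_pair hR hbox').integral_prod_right) ?_
  intro z
  dsimp only
  rw [inner_integral_eq π z.1 z.2, inner_integral_eq π' z.1 z.2]
  have hm1 : π (Ioi z.1 ×ˢ univ) = π' (Ioi z.1 ×ˢ univ) := by
    have hpre : Prod.fst ⁻¹' (Ioi z.1) = Ioi z.1 ×ˢ (univ : Set ℝ) := by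
      ext p; simp [mem_prod]
    rw [← hpre, ← Measure.map_apply measurable_fst measurableSet_Ioi,
      ← Measure.map_apply measurable_fst measurableSet_Ioi, hfst]
  have hm2 : π (univ ×ˢ Ioi z.2) = π' (univ ×ˢ Ioi z.2) := by
    have hpre : Prod.snd ⁻¹' (Ioi z.2) = (univ : Set ℝ) ×ˢ Ioi z.2 := by
      ext p; simp [mem_prod]
    rw [← hpre, ← Measure.map_apply measurable_snd measurableSet_Ioi,
      ← Measure.map_apply measurable_snd measurableSet_Ioi, hsnd]
  have hkey : (π (Ioi z.1 ×ˢ Ioi z.2)).toReal ≤ (π' (Ioi z.1 ×ˢ Ioi z.2)).toReal :=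
    ENNReal.toReal_mono (measure_ne_top _ _) (hcmp z.1 z.2)
  rw [hm1, hm2]
  gcongr

end Transport

section Identity

variable {R : ℝ} {μ ν : Measure ℝ} [IsProbabilityMeasure μ] [IsProbabilityMeasure ν]

lemma Ioi_measure (s : ℝ) : μ (Ioi s) = ENNReal.ofReal (1 - cdf μ s) := by
  have h1 : μ (Ioi s) = μ univ - μ (Iic s) := by
    rw [← compl_Iic, measure_compl measurableSet_Iic (measure_ne_top μ _)]
  rw [h1, measure_univ, ← ofReal_cdf μ s, ← ENNReal.ofReal_one,
    ← ENNReal.ofReal_sub _ (cdf_nonneg μ s)]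

lemma integrable_of_box {π : Measure (ℝ × ℝ)} [IsProbabilityMeasure π]
    (hbox : π ((Icc (-R) R ×ˢ Icc (-R) R)ᶜ) = 0) {f : ℝ × ℝ → ℝ} (hf : Measurable f)
    {c : ℝ} (hc : ∀ p ∈ Icc (-R) R ×ˢ Icc (-R) R, |f p| ≤ c) : Integrable f π := by
  refine Integrable.mono' (integrable_const c) hf.aestronglyMeasurable ?_
  refine ae_iff.2 (measure_mono_null ?_ hbox)
  intro p hp
  simp only [mem_setOf_eq, Real.norm_eq_abs] at hp
  simp only [mem_compl_iff]
  exact fun hmem => hp (hc p hmem)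

lemma box_abs {p : ℝ × ℝ} (hp : p ∈ Icc (-R) R ×ˢ Icc (-R) R) : |p.1| ≤ R ∧ |p.2| ≤ R := by
  rcases hp with ⟨h1, h2⟩
  rw [mem_Icc] at h1 h2
  exact ⟨abs_le.2 h1, abs_le.2 h2⟩

lemma integrable_fst_sq {π : Measure (ℝ × ℝ)} [IsProbabilityMeasure π]
    (hbox : π ((Icc (-R) R ×ˢ Icc (-R) R)ᶜ) = 0) :
    Integrable (fun p : ℝ × ℝ => p.1 ^ 2) π := by
  refine integrable_of_box hbox (measurable_fst.pow_const 2) (c := R ^ 2) ?_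
  intro p hp
  rw [abs_pow]
  exact pow_le_pow_left₀ (abs_nonneg _) (box_abs hp).1 2

lemma integrable_snd_sq {π : Measure (ℝ × ℝ)} [IsProbabilityMeasure π]
    (hbox : π ((Icc (-R) R ×ˢ Icc (-R) R)ᶜ) = 0) :
    Integrable (fun p : ℝ × ℝ => p.2 ^ 2) π := by
  refine integrable_of_box hbox (measurable_snd.pow_const 2) (c := R ^ 2) ?_
  intro p hp
  rw [abs_pow]
  exact pow_le_pow_left₀ (abs_nonneg _) (box_abs hp).2 2

lemma integrable_fst_mul_snd {π : Measure (ℝ × ℝ)} [IsProbabilityMeasure π]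
    (hbox : π ((Icc (-R) R ×ˢ Icc (-R) R)ᶜ) = 0) :
    Integrable (fun p : ℝ × ℝ => p.1 * p.2) π := by
  refine integrable_of_box hbox (measurable_fst.mul measurable_snd) (c := R * R) ?_
  intro p hp
  rw [abs_mul]
  exact mul_le_mul (box_abs hp).1 (box_abs hp).2 (abs_nonneg _)
    (le_trans (abs_nonneg _) (box_abs hp).1)

lemma integrable_cost {π : Measure (ℝ × ℝ)} [IsProbabilityMeasure π]
    (hbox : π ((Icc (-R) R ×ˢ Icc (-R) R)ᶜ) = 0) :
    Integrable (fun p : ℝ × ℝ => (p.1 - p.2) ^ 2) π := by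
  refine integrable_of_box hbox ((measurable_fst.sub measurable_snd).pow_const 2)
    (c := (2 * R) ^ 2) ?_
  intro p hp
  rw [abs_pow]
  refine pow_le_pow_left₀ (abs_nonneg _) ?_ 2
  calc |p.1 - p.2| ≤ |p.1| + |p.2| := abs_sub _ _
    _ ≤ 2 * R := by
      have h1 := (box_abs hp).1
      have h2 := (box_abs hp).2
      linarith

lemma cost_expand {π : Measure (ℝ × ℝ)} [IsProbabilityMeasure π]
    (hbox : π ((Icc (-R) R ×ˢ Icc (-R) R)ᶜ) = 0) :
    ∫ p : ℝ × ℝ, (p.1 - p.2) ^ 2 ∂π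
      = (∫ p : ℝ × ℝ, p.1 ^ 2 ∂π) + (∫ p : ℝ × ℝ, p.2 ^ 2 ∂π)
        - 2 * ∫ p : ℝ × ℝ, p.1 * p.2 ∂π := by
  have h1 : (fun p : ℝ × ℝ => (p.1 - p.2) ^ 2)
      = fun p : ℝ × ℝ => (p.1 ^ 2 + p.2 ^ 2) - 2 * (p.1 * p.2) := by
    ext p; ring
  have hadd : Integrable (fun p : ℝ × ℝ => p.1 ^ 2 + p.2 ^ 2) π :=
    (integrable_fst_sq hbox).add (integrable_snd_sq hbox)
  have hmul : Integrable (fun p : ℝ × ℝ => 2 * (p.1 * p.2)) π :=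
    (integrable_fst_mul_snd hbox).const_mul 2
  rw [h1, integral_sub hadd hmul,
    integral_add (integrable_fst_sq hbox) (integrable_snd_sq hbox), integral_const_mul]

lemma marg_fst_integral {π : Measure (ℝ × ℝ)} (hfst : π.map Prod.fst = μ) {g : ℝ → ℝ}
    (hg : Measurable g) : ∫ p : ℝ × ℝ, g p.1 ∂π = ∫ x, g x ∂μ := by
  rw [← hfst, integral_map measurable_fst.aemeasurable hg.aestronglyMeasurable]

lemma marg_snd_integral {π : Measure (ℝ × ℝ)} (hsnd : π.map Prod.snd = ν) {g : ℝ → ℝ}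
    (hg : Measurable g) : ∫ p : ℝ × ℝ, g p.2 ∂π = ∫ x, g x ∂ν := by
  rw [← hsnd, integral_map measurable_snd.aemeasurable hg.aestronglyMeasurable]

variable (R μ ν) in
/-- The quantile (monotone) coupling. -/
noncomputable def qcoupling : Measure (ℝ × ℝ) :=
  (volume.restrict (Ioo (0:ℝ) 1)).map (fun t => (Qm R μ t, Qm R ν t))

lemma measurable_qpair : Measurable (fun t => (Qm R μ t, Qm R ν t)) :=
  measurable_Qm.prodMk measurable_Qm

section WithSupp

variable (hR : 0 ≤ R) (hμ : μ (Icc (-R) R)ᶜ = 0) (hν : ν (Icc (-R) R)ᶜ = 0)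
include hR hμ hν

lemma qcoupling_isCoupling : IsCoupling (qcoupling R μ ν) μ ν := by
  refine ⟨Measure.isProbabilityMeasure_map measurable_qpair.aemeasurable, ?_, ?_⟩
  · rw [qcoupling, Measure.map_map measurable_fst measurable_qpair]
    exact map_Qm hR hμ
  · rw [qcoupling, Measure.map_map measurable_snd measurable_qpair]
    exact map_Qm hR hν

lemma qcoupling_Ioi (s t : ℝ) :
    qcoupling R μ ν (Ioi s ×ˢ Ioi t) = min (μ (Ioi s)) (ν (Ioi t)) := by
  rw [qcoupling, Measure.map_apply measurable_qpair (measurableSet_Ioi.prod measurableSet_Ioi),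
    Measure.restrict_apply (measurable_qpair (measurableSet_Ioi.prod measurableSet_Ioi))]
  set m : ℝ := max (cdf μ s) (cdf ν t) with hm
  have hm0 : 0 ≤ m := le_trans (cdf_nonneg μ s) (le_max_left _ _)
  have hset : (fun t' => (Qm R μ t', Qm R ν t')) ⁻¹' (Ioi s ×ˢ Ioi t) ∩ Ioo 0 1 = Ioo m 1 := by
    ext u
    simp only [mem_inter_iff, mem_preimage, mem_prod, mem_Ioi, mem_Ioo, hm, max_lt_iff]
    constructor
    · rintro ⟨⟨h1, h2⟩, hu0, hu1⟩
      refine ⟨⟨?_, ?_⟩, hu1⟩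
      · rw [← not_le, ← Qm_le_iff hR hμ ⟨hu0, hu1⟩, not_le]
        exact h1
      · rw [← not_le, ← Qm_le_iff hR hν ⟨hu0, hu1⟩, not_le]
        exact h2
    · rintro ⟨⟨h1, h2⟩, hu1⟩
      have hu0 : 0 < u := lt_of_le_of_lt (cdf_nonneg μ s) h1
      refine ⟨⟨?_, ?_⟩, hu0, hu1⟩
      · rw [← not_le, Qm_le_iff hR hμ ⟨hu0, hu1⟩, not_le]
        exact h1
      · rw [← not_le, Qm_le_iff hR hν ⟨hu0, hu1⟩, not_le]
        exact h2
  rw [hset, Real.volume_Ioo, Ioi_measure s, Ioi_measure t]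
  rcases le_total (cdf μ s) (cdf ν t) with h | h
  · rw [hm, max_eq_right h, min_eq_right (ENNReal.ofReal_le_ofReal (by linarith))]
  · rw [hm, max_eq_left h, min_eq_left (ENNReal.ofReal_le_ofReal (by linarith))]

lemma coupling_Ioi_le {π : Measure (ℝ × ℝ)}
    (hfst : π.map Prod.fst = μ) (hsnd : π.map Prod.snd = ν) (s t : ℝ) :
    π (Ioi s ×ˢ Ioi t) ≤ qcoupling R μ ν (Ioi s ×ˢ Ioi t) := by
  rw [qcoupling_Ioi hR hμ hν]
  refine le_min ?_ ?_
  · calc π (Ioi s ×ˢ Ioi t) ≤ π (Ioi s ×ˢ univ) :=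
        measure_mono (prod_mono (subset_refl _) (subset_univ _))
      _ = μ (Ioi s) := by
        rw [← hfst, Measure.map_apply measurable_fst measurableSet_Ioi]
        congr 1
        ext p; simp [mem_prod]
  · calc π (Ioi s ×ˢ Ioi t) ≤ π (univ ×ˢ Ioi t) :=
        measure_mono (prod_mono (subset_univ _) (subset_refl _))
      _ = ν (Ioi t) := by
        rw [← hsnd, Measure.map_apply measurable_snd measurableSet_Ioi]
        congr 1
        ext p; simp [mem_prod]

lemma integrable_qdiff_sq :
    Integrable (fun u => (Qm R μ u - Qm R ν u) ^ 2) (volume.restrict (Ioo (0:ℝ) 1)) := by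
  refine Integrable.mono' (integrable_const ((2 * (R + 1)) ^ 2))
    ((measurable_Qm.sub measurable_Qm).pow_const 2).aestronglyMeasurable
    (ae_of_all _ (fun u => ?_))
  rw [Real.norm_eq_abs, abs_pow]
  refine pow_le_pow_left₀ (abs_nonneg _) ?_ 2
  calc |Qm R μ u - Qm R ν u| ≤ |Qm R μ u| + |Qm R ν u| := abs_sub _ _
    _ ≤ 2 * (R + 1) := by
      have h1 := abs_Qm_le (μ := μ) hR u
      have h2 := abs_Qm_le (μ := ν) hR u
      linarith

lemma qcoupling_cost :
    ∫⁻ p : ℝ × ℝ, ENNReal.ofReal ((p.1 - p.2) ^ 2) ∂(qcoupling R μ ν)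
      = ENNReal.ofReal (∫ u in Ioo (0:ℝ) 1, (Qm R μ u - Qm R ν u) ^ 2) := by
  rw [qcoupling, lintegral_map (f := fun p : ℝ × ℝ => ENNReal.ofReal ((p.1 - p.2) ^ 2))
    (((measurable_fst.sub measurable_snd).pow_const 2).ennreal_ofReal)
    measurable_qpair]
  exact (ofReal_integral_eq_lintegral_ofReal (integrable_qdiff_sq hR hμ hν)
    (ae_of_all _ (fun u => sq_nonneg _))).symm

lemma W2sq_eq : W2sq μ ν = ENNReal.ofReal (∫ u in Ioo (0:ℝ) 1, (Qm R μ u - Qm R ν u) ^ 2) := by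
  have hcoup := qcoupling_isCoupling hR hμ hν
  haveI : IsProbabilityMeasure (qcoupling R μ ν) := hcoup.1
  have hbox0 : qcoupling R μ ν ((Icc (-R) R ×ˢ Icc (-R) R)ᶜ) = 0 :=
    coupling_box_null hcoup.2.1 hcoup.2.2 hμ hν
  refine le_antisymm (sInf_le ⟨qcoupling R μ ν, hcoup, (qcoupling_cost hR hμ hν).symm⟩) ?_
  refine le_sInf ?_
  rintro I ⟨π, ⟨hp, hfst, hsnd⟩, rfl⟩
  haveI := hp
  have hbox : π ((Icc (-R) R ×ˢ Icc (-R) R)ᶜ) = 0 := coupling_box_null hfst hsnd hμ hν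
  rw [(ofReal_integral_eq_lintegral_ofReal (integrable_cost hbox)
    (ae_of_all _ (fun p => sq_nonneg _))).symm]
  refine ENNReal.ofReal_le_ofReal ?_
  have e1 := cost_expand hbox
  have e0 := cost_expand hbox0
  have hm1 : ∫ p : ℝ × ℝ, p.1 ^ 2 ∂π = ∫ p : ℝ × ℝ, p.1 ^ 2 ∂(qcoupling R μ ν) := by
    rw [marg_fst_integral hfst (g := fun x : ℝ => x ^ 2) (by fun_prop),
      marg_fst_integral hcoup.2.1 (g := fun x : ℝ => x ^ 2) (by fun_prop)]
  have hm2 : ∫ p : ℝ × ℝ, p.2 ^ 2 ∂π = ∫ p : ℝ × ℝ, p.2 ^ 2 ∂(qcoupling R μ ν) := by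
    rw [marg_snd_integral hsnd (g := fun x : ℝ => x ^ 2) (by fun_prop),
      marg_snd_integral hcoup.2.2 (g := fun x : ℝ => x ^ 2) (by fun_prop)]
  have hmono : ∫ p : ℝ × ℝ, p.1 * p.2 ∂π ≤ ∫ p : ℝ × ℝ, p.1 * p.2 ∂(qcoupling R μ ν) := by
    refine integral_mul_mono hR hbox hbox0 (hfst.trans hcoup.2.1.symm)
      (hsnd.trans hcoup.2.2.symm) ?_
    exact fun s t => coupling_Ioi_le hR hμ hν hfst hsnd s t
  have hq : ∫ p : ℝ × ℝ, (p.1 - p.2) ^ 2 ∂(qcoupling R μ ν)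
      = ∫ u in Ioo (0:ℝ) 1, (Qm R μ u - Qm R ν u) ^ 2 := by
    rw [qcoupling, integral_map (f := fun p : ℝ × ℝ => (p.1 - p.2) ^ 2) measurable_qpair.aemeasurable
      ((measurable_fst.sub measurable_snd).pow_const 2).aestronglyMeasurable]
  rw [← hq]
  rw [e1, e0]
  linarith

end WithSupp

end Identity

end W2ND

/-- For `0 < H ≤ 1`, the function `(μ,ν) ↦ W₂(μ,ν)^(2H)` is a negative definite
kernel on the set of Borel probability measures supported in a compact subset `Ω`
of `ℝ`: for any such measures `μ₁, …, μₙ` and reals `c₁, …, cₙ` with `∑ cᵢ = 0`, we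
have `∑_{i,j} cᵢ cⱼ W₂(μᵢ, μⱼ)^(2H) ≤ 0`. -/
theorem W2_rpow_negative_definite (Ω : Set ℝ) (hΩ : IsCompact Ω)
    (H : ℝ) (hH0 : 0 < H) (hH1 : H ≤ 1)
    (n : ℕ) (μ : Fin n → Measure ℝ) (hprob : ∀ i, IsProbabilityMeasure (μ i))
    (hsupp : ∀ i, μ i Ωᶜ = 0) (c : Fin n → ℝ) (hc : ∑ i, c i = 0) :
    ∑ i, ∑ j, c i * c j * W2 (μ i) (μ j) ^ (2 * H) ≤ 0 := by
  classical
  haveI : ∀ i, IsProbabilityMeasure (μ i) := hprob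
  obtain ⟨r0, hr0⟩ := hΩ.isBounded.subset_closedBall 0
  set R : ℝ := max r0 0 with hRdef
  have hR : 0 ≤ R := le_max_right _ _
  have hΩR : Ω ⊆ Set.Icc (-R) R := by
    intro x hx
    have hx' := hr0 hx
    rw [Real.closedBall_eq_Icc] at hx'
    rw [Set.mem_Icc] at hx' ⊢
    have hr0R : r0 ≤ R := le_max_left _ _
    constructor <;> [linarith [hx'.1]; linarith [hx'.2]]
  have hsupp' : ∀ i, (μ i) (Set.Icc (-R) R)ᶜ = 0 := fun i =>
    measure_mono_null (Set.compl_subset_compl.2 hΩR) (hsupp i)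
  set q : Fin n → ℝ → ℝ := fun i => (Set.Ioo (0:ℝ) 1).indicator (W2ND.Qm R (μ i)) with hqdef
  have hq : ∀ i, Measurable (q i) := fun i =>
    (W2ND.measurable_Qm).indicator measurableSet_Ioo
  have hC : ∀ i t, |q i t| ≤ R + 1 := by
    intro i t
    by_cases ht : t ∈ Set.Ioo (0:ℝ) 1
    · rw [hqdef]
      simp only [Set.indicator_of_mem ht]
      exact W2ND.abs_Qm_le hR t
    · rw [hqdef]
      simp only [Set.indicator_of_notMem ht]
      simp only [abs_zero]
      linarith
  have h0 : ∀ i, ∀ t ∉ Set.Ioo (0:ℝ) 1, q i t = 0 := by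
    intro i t ht
    rw [hqdef]
    exact Set.indicator_of_notMem ht _
  have hDeq : ∀ i j, ∫ t, (q i t - q j t) ^ 2
      = ∫ u in Set.Ioo (0:ℝ) 1, (W2ND.Qm R (μ i) u - W2ND.Qm R (μ j) u) ^ 2 := by
    intro i j
    rw [← integral_indicator measurableSet_Ioo]
    congr 1
    ext t
    by_cases ht : t ∈ Set.Ioo (0:ℝ) 1 <;>
      simp [hqdef, Set.indicator_of_mem, Set.indicator_of_notMem, ht]
  have hW : ∀ i j, W2 (μ i) (μ j) ^ (2 * H) = (∫ t, (q i t - q j t) ^ 2) ^ H := by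
    intro i j
    have hDnn : 0 ≤ ∫ t, (q i t - q j t) ^ 2 := integral_nonneg (fun t => sq_nonneg _)
    have hw2 := W2ND.W2sq_eq (μ := μ i) (ν := μ j) hR (hsupp' i) (hsupp' j)
    have hsq : (W2sq (μ i) (μ j)).toReal = ∫ t, (q i t - q j t) ^ 2 := by
      rw [hw2, ← hDeq i j, ENNReal.toReal_ofReal hDnn]
    rw [W2, hsq, Real.sqrt_eq_rpow, ← Real.rpow_mul hDnn]
    congr 1
    ring
  calc ∑ i, ∑ j, c i * c j * W2 (μ i) (μ j) ^ (2 * H)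
      = ∑ i, ∑ j, c i * c j * (∫ t, (q i t - q j t) ^ 2) ^ H :=
        Finset.sum_congr rfl (fun i _ => Finset.sum_congr rfl (fun j _ => by rw [hW i j]))
    _ ≤ 0 := W2ND.nd_core hq hC h0 c hc hH0 hH1
end

section
/- Let X be a set and let K : X × X → ℝ be a symmetric negative definite kernel with K(x,y) ≥ 0 for all x,y and K(x,x) = 0 for all x. Then for every H with 0 < H ≤ 1, the function (x,y) ↦ K(x,y)^H is also a negative definite kernel on X. -/
open MeasureTheory Set Finset

/-- Positive semidefinite kernel on `Fin n`. -/
def IsPSDk {n : ℕ} (P : Fin n → Fin n → ℝ) : Prop :=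
  ∀ c : Fin n → ℝ, 0 ≤ ∑ i, ∑ j, c i * c j * P i j

lemma gram_of_psd {n : ℕ} {P : Fin n → Fin n → ℝ} (hsym : ∀ i j, P i j = P j i)
    (hP : IsPSDk P) : ∃ B : Matrix (Fin n) (Fin n) ℝ, ∀ i j, P i j = ∑ k, B k i * B k j := by
  have hps : (Matrix.of P).PosSemidef := by
    refine Matrix.posSemidef_iff_dotProduct_mulVec.mpr ⟨?_, ?_⟩
    · ext i j
      simp [Matrix.conjTranspose, hsym i j]
    · intro x
      have := hP x
      simpa [dotProduct, Matrix.mulVec, dotProduct, Finset.mul_sum,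
        mul_comm, mul_left_comm, mul_assoc] using this
  open MatrixOrder in obtain ⟨B, hB⟩ := CStarAlgebra.nonneg_iff_eq_star_mul_self.mp hps.nonneg
  refine ⟨B, fun i j => ?_⟩
  have := congrArg (fun M => M i j) hB
  simpa [Matrix.mul_apply, Matrix.star_eq_conjTranspose, Matrix.conjTranspose_apply] using this

lemma IsPSDk.schur {n : ℕ} {P Q : Fin n → Fin n → ℝ} (hsym : ∀ i j, P i j = P j i)
    (hP : IsPSDk P) (hQ : IsPSDk Q) : IsPSDk (fun i j => P i j * Q i j) := by
  obtain ⟨B, hB⟩ := gram_of_psd hsym hP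
  intro c
  have key : ∀ i j : Fin n, c i * c j * (P i j * Q i j)
      = ∑ k, (c i * B k i) * (c j * B k j) * Q i j := by
    intro i j
    rw [hB i j, Finset.sum_mul, Finset.mul_sum]
    exact Finset.sum_congr rfl fun k _ => by ring
  calc (0:ℝ) ≤ ∑ k, ∑ i, ∑ j, (c i * B k i) * (c j * B k j) * Q i j :=
        Finset.sum_nonneg fun k _ => hQ (fun i => c i * B k i)
    _ = ∑ i, ∑ j, ∑ k, (c i * B k i) * (c j * B k j) * Q i j := by
        rw [Finset.sum_comm]
        exact Finset.sum_congr rfl fun i _ => Finset.sum_comm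
    _ = ∑ i, ∑ j, c i * c j * (P i j * Q i j) := by
        refine Finset.sum_congr rfl fun i _ => Finset.sum_congr rfl fun j _ => ?_
        rw [key]

lemma IsPSDk.pow {n : ℕ} {P : Fin n → Fin n → ℝ} (hsym : ∀ i j, P i j = P j i)
    (hP : IsPSDk P) (k : ℕ) : IsPSDk (fun i j => P i j ^ k) := by
  induction k with
  | zero =>
      intro c
      have : ∑ i, ∑ j, c i * c j * P i j ^ 0 = (∑ i, c i) * (∑ j, c j) := by
        rw [Finset.sum_mul_sum]
        simp
      rw [this]
      exact mul_self_nonneg _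
  | succ m ih =>
      have := IsPSDk.schur hsym hP ih
      intro c
      have h := this c
      simpa [pow_succ, mul_comm] using h

lemma IsPSDk.exp {n : ℕ} {P : Fin n → Fin n → ℝ} (hsym : ∀ i j, P i j = P j i)
    (hP : IsPSDk P) : IsPSDk (fun i j => Real.exp (P i j)) := by
  intro c
  have hexp : ∀ x : ℝ, Real.exp x = ∑' k : ℕ, x ^ k / (Nat.factorial k : ℝ) := by
    intro x
    rw [Real.exp_eq_exp_ℝ, NormedSpace.exp_eq_tsum_div]
  have hsummable : ∀ i j : Fin n, Summable (fun k : ℕ => c i * c j * (P i j ^ k / (Nat.factorial k : ℝ))) :=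
    fun i j => (Real.summable_pow_div_factorial (P i j)).mul_left _
  calc (0:ℝ) ≤ ∑' k : ℕ, ∑ i, ∑ j, c i * c j * (P i j ^ k / (Nat.factorial k : ℝ)) := by
        refine tsum_nonneg fun k => ?_
        have h1 : ∀ i j : Fin n, c i * c j * (P i j ^ k / (Nat.factorial k : ℝ))
            = (c i * c j * P i j ^ k) * (((Nat.factorial k : ℝ) : ℝ))⁻¹ := by intro i j; ring
        simp only [h1, ← Finset.sum_mul]
        exact mul_nonneg (IsPSDk.pow hsym hP k c) (by positivity)
    _ = ∑ i, ∑ j, ∑' k : ℕ, c i * c j * (P i j ^ k / (Nat.factorial k : ℝ)) := by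
        rw [Summable.tsum_finsetSum fun i _ => summable_sum fun j _ => hsummable i j]
        exact Finset.sum_congr rfl fun i _ => Summable.tsum_finsetSum fun j _ => hsummable i j
    _ = ∑ i, ∑ j, c i * c j * Real.exp (P i j) := by
        refine Finset.sum_congr rfl fun i _ => Finset.sum_congr rfl fun j _ => ?_
        rw [hexp, tsum_mul_left]

section Schoenberg

variable {X : Type*} (K : X → X → ℝ)

lemma psd_aux (hsymm : ∀ x y, K x y = K y x) (hdiag : ∀ x, K x x = 0)
    (hneg : ∀ (n : ℕ) (x : Fin n → X) (c : Fin n → ℝ), (∑ i, c i = 0) →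
      ∑ i, ∑ j, c i * c j * K (x i) (x j) ≤ 0)
    {n : ℕ} (x : Fin n → X) (z : X) :
    IsPSDk (fun i j => K (x i) z + K (x j) z - K (x i) (x j)) := by
  intro c
  set s := ∑ i, c i with hs
  have hsum : ∑ i, Fin.snoc c (-s) i = 0 := by
    rw [Fin.sum_univ_castSucc]
    simp [Fin.snoc_castSucc, Fin.snoc_last, hs]
  have h := hneg (n + 1) (Fin.snoc x z) (Fin.snoc c (-s)) hsum
  simp only [Fin.sum_univ_castSucc, Fin.snoc_castSucc, Fin.snoc_last] at h
  set T := ∑ i, c i * K (x i) z with hT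
  set D := ∑ i, ∑ j, c i * c j * K (x i) (x j) with hD
  have e1 : ∀ i : Fin n, ∑ j, c i * c j * K (x i) (x j) + c i * -s * K (x i) z
      = (∑ j, c i * c j * K (x i) (x j)) + c i * K (x i) z * -s := by
    intro i; ring
  have e2 : ∑ j, -s * c j * K z (x j) = -s * T := by
    rw [hT, Finset.mul_sum]
    exact Finset.sum_congr rfl fun j _ => by rw [hsymm z (x j)]; ring
  rw [e2, hdiag z] at h
  simp only [e1, Finset.sum_add_distrib, ← Finset.sum_mul] at h
  -- now h : D + T * -s + (-s * T + -s * -s * 0) ≤ 0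
  have hDT : D ≤ 2 * s * T := by nlinarith [h]
  have egoal : ∑ i, ∑ j, c i * c j * (K (x i) z + K (x j) z - K (x i) (x j))
      = s * T + s * T - D := by
    have inner : ∀ i : Fin n, ∑ j, c i * c j * (K (x i) z + K (x j) z - K (x i) (x j))
        = c i * K (x i) z * s + c i * T - ∑ j, c i * c j * K (x i) (x j) := by
      intro i
      rw [hT, hs, Finset.mul_sum, Finset.mul_sum, ← Finset.sum_add_distrib,
        ← Finset.sum_sub_distrib]
      exact Finset.sum_congr rfl fun j _ => by ring
    simp only [inner, Finset.sum_sub_distrib, Finset.sum_add_distrib,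
      ← Finset.sum_mul, ← Finset.mul_sum, ← hT, ← hD]
    ring
  rw [egoal]
  linarith

lemma schoenberg (hsymm : ∀ x y, K x y = K y x) (hdiag : ∀ x, K x x = 0)
    (hneg : ∀ (n : ℕ) (x : Fin n → X) (c : Fin n → ℝ), (∑ i, c i = 0) →
      ∑ i, ∑ j, c i * c j * K (x i) (x j) ≤ 0)
    {n : ℕ} (x : Fin n → X) (z : X) {t : ℝ} (ht : 0 ≤ t) :
    IsPSDk (fun i j => Real.exp (-(K (x i) (x j) * t))) := by
  have hA := psd_aux K hsymm hdiag hneg x z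
  have hAsym : ∀ i j : Fin n, (fun i j => t * (K (x i) z + K (x j) z - K (x i) (x j))) i j
      = (fun i j => t * (K (x i) z + K (x j) z - K (x i) (x j))) j i := by
    intro i j
    simp only
    rw [hsymm (x i) (x j)]
    ring
  have htA : IsPSDk (fun i j => t * (K (x i) z + K (x j) z - K (x i) (x j))) := by
    intro c
    have h1 : ∑ i, ∑ j, c i * c j * (t * (K (x i) z + K (x j) z - K (x i) (x j)))
        = t * ∑ i, ∑ j, c i * c j * (K (x i) z + K (x j) z - K (x i) (x j)) := by
      rw [Finset.mul_sum]
      exact Finset.sum_congr rfl fun i _ => by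
        rw [Finset.mul_sum]; exact Finset.sum_congr rfl fun j _ => by ring
    rw [h1]
    exact mul_nonneg ht (hA c)
  have hE := IsPSDk.exp hAsym htA
  intro c
  have h := hE (fun i => c i * Real.exp (-(K (x i) z * t)))
  have key : ∀ i j : Fin n,
      (c i * Real.exp (-(K (x i) z * t))) * (c j * Real.exp (-(K (x j) z * t))) *
        Real.exp (t * (K (x i) z + K (x j) z - K (x i) (x j)))
      = c i * c j * Real.exp (-(K (x i) (x j) * t)) := by
    intro i j
    rw [show -(K (x i) (x j) * t) = -(K (x i) z * t) + -(K (x j) z * t)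
        + t * (K (x i) z + K (x j) z - K (x i) (x j)) by ring,
      Real.exp_add, Real.exp_add]
    ring
  simp only at h ⊢
  calc (0:ℝ) ≤ _ := h
    _ = ∑ i, ∑ j, c i * c j * Real.exp (-(K (x i) (x j) * t)) :=
      Finset.sum_congr rfl fun i _ => Finset.sum_congr rfl fun j _ => key i j

end Schoenberg

section Integral

open Real

/-- Auxiliary integrand. -/
noncomputable def fH (H : ℝ) (u : ℝ) : ℝ := (1 - Real.exp (-u)) * u ^ (-1 - H)

lemma fH_meas (H : ℝ) : Measurable (fH H) := by
  unfold fH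
  fun_prop

lemma fH_integrableOn {H : ℝ} (hH0 : 0 < H) (hH1 : H < 1) :
    IntegrableOn (fH H) (Ioi 0) := by
  have hsplit : Ioi (0:ℝ) = Ioc (0:ℝ) 1 ∪ Ioi (1:ℝ) := (Ioc_union_Ioi_eq_Ioi zero_le_one).symm
  rw [hsplit]
  apply IntegrableOn.union
  · -- on (0,1]: bound by u ^ (-H)
    have hbd : IntegrableOn (fun u : ℝ => u ^ (-H)) (Ioc 0 1) := by
      rw [← intervalIntegrable_iff_integrableOn_Ioc_of_le zero_le_one]
      exact intervalIntegral.intervalIntegrable_rpow' (by linarith)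
    refine Integrable.mono' hbd ((fH_meas H).aestronglyMeasurable) ?_
    refine (ae_restrict_iff' measurableSet_Ioc).mpr (Filter.Eventually.of_forall ?_)
    rintro u ⟨hu0, _⟩
    have h1 : 0 ≤ 1 - Real.exp (-u) := by
      have := Real.exp_le_one_iff.mpr (by linarith : -u ≤ 0)
      linarith
    have h2 : 1 - Real.exp (-u) ≤ u := by
      have := Real.add_one_le_exp (-u)
      linarith
    have h3 : (0:ℝ) ≤ u ^ (-1 - H) := Real.rpow_nonneg hu0.le _
    simp only [fH, Real.norm_eq_abs]
    rw [abs_of_nonneg (mul_nonneg h1 h3)]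
    calc (1 - Real.exp (-u)) * u ^ (-1 - H) ≤ u * u ^ (-1 - H) :=
          mul_le_mul_of_nonneg_right h2 h3
      _ = u ^ (-H) := by
          rw [← Real.rpow_one_add' hu0.le (by linarith)]
          congr 1
          ring
  · -- on (1,∞): bound by u ^ (-1-H)
    have hbd : IntegrableOn (fun u : ℝ => u ^ (-1 - H)) (Ioi 1) :=
      integrableOn_Ioi_rpow_of_lt (by linarith) zero_lt_one
    refine Integrable.mono' hbd ((fH_meas H).aestronglyMeasurable) ?_
    refine (ae_restrict_iff' measurableSet_Ioi).mpr (Filter.Eventually.of_forall ?_)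
    intro u hu
    have hu0 : (0:ℝ) < u := lt_trans zero_lt_one hu
    have h1 : 0 ≤ 1 - Real.exp (-u) := by
      have := Real.exp_le_one_iff.mpr (by linarith : -u ≤ 0)
      linarith
    have h2 : 1 - Real.exp (-u) ≤ 1 := by
      have := Real.exp_pos (-u)
      linarith
    have h3 : (0:ℝ) ≤ u ^ (-1 - H) := Real.rpow_nonneg hu0.le _
    simp only [fH, Real.norm_eq_abs]
    rw [abs_of_nonneg (mul_nonneg h1 h3)]
    calc (1 - Real.exp (-u)) * u ^ (-1 - H) ≤ 1 * u ^ (-1 - H) :=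
          mul_le_mul_of_nonneg_right h2 h3
      _ = u ^ (-1 - H) := one_mul _

lemma fH_integral_pos {H : ℝ} (hH0 : 0 < H) (hH1 : H < 1) :
    0 < ∫ u in Ioi (0:ℝ), fH H u := by
  have hnn : 0 ≤ᵐ[volume.restrict (Ioi (0:ℝ))] fH H := by
    refine (ae_restrict_iff' measurableSet_Ioi).mpr (Filter.Eventually.of_forall ?_)
    intro u hu
    have h1 : 0 ≤ 1 - Real.exp (-u) := by
      have := Real.exp_le_one_iff.mpr (by linarith [mem_Ioi.mp hu] : -u ≤ 0)
      linarith
    exact mul_nonneg h1 (Real.rpow_nonneg (le_of_lt (mem_Ioi.mp hu)) _)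
  rw [setIntegral_pos_iff_support_of_nonneg_ae hnn (fH_integrableOn hH0 hH1)]
  have hsub : Ioi (0:ℝ) ⊆ Function.support (fH H) ∩ Ioi 0 := by
    intro u hu
    have hu0 : (0:ℝ) < u := mem_Ioi.mp hu
    refine ⟨?_, hu⟩
    have h1 : 0 < 1 - Real.exp (-u) := by
      have : Real.exp (-u) < 1 := Real.exp_lt_one_iff.mpr (by linarith)
      linarith
    have h2 : (0:ℝ) < u ^ (-1 - H) := Real.rpow_pos_of_pos hu0 _
    exact ne_of_gt (mul_pos h1 h2)
  calc (0:ENNReal) < volume (Ioi (0:ℝ)) := by simp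
    _ ≤ volume (Function.support (fH H) ∩ Ioi 0) := measure_mono hsub

end Integral

section Rep

open Real

lemma gt_eqOn {H t : ℝ} (ht : 0 < t) :
    Set.EqOn (fun l : ℝ => (1 - Real.exp (-(t * l))) * l ^ (-1 - H))
      (fun l : ℝ => t ^ (1 + H) * fH H (t * l)) (Ioi 0) := by
  intro l hl
  have hl0 : (0:ℝ) < l := hl
  simp only [fH]
  rw [Real.mul_rpow ht.le hl0.le,
    show t ^ (1+H) * ((1 - Real.exp (-(t*l))) * (t ^ (-1-H) * l ^ (-1-H)))
      = (t ^ (1+H) * t ^ (-1-H)) * ((1 - Real.exp (-(t*l))) * l ^ (-1-H)) by ring,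
    ← Real.rpow_add ht, show (1+H) + (-1-H) = 0 by ring, Real.rpow_zero, one_mul]

lemma gt_integrableOn {H : ℝ} (hH0 : 0 < H) (hH1 : H < 1) {t : ℝ} (ht : 0 ≤ t) :
    IntegrableOn (fun l : ℝ => (1 - Real.exp (-(t * l))) * l ^ (-1 - H)) (Ioi 0) := by
  rcases ht.eq_or_lt with h | h
  · have : (fun l : ℝ => (1 - Real.exp (-(t * l))) * l ^ (-1 - H)) = fun _ => (0:ℝ) := by
      funext l; rw [← h]; simp
    rw [this]
    exact integrableOn_zero
  · have h1 : IntegrableOn (fun x : ℝ => fH H (t * x)) (Ioi 0) := by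
      refine (integrableOn_Ioi_comp_mul_left_iff (fH H) 0 h).mpr ?_
      rw [mul_zero]
      exact fH_integrableOn hH0 hH1
    exact IntegrableOn.congr_fun (h1.const_mul (t ^ (1+H)))
      (fun l hl => (gt_eqOn h hl).symm) measurableSet_Ioi

lemma gt_integral {H : ℝ} (hH0 : 0 < H) {t : ℝ} (ht : 0 ≤ t) :
    ∫ l in Ioi (0:ℝ), (1 - Real.exp (-(t * l))) * l ^ (-1 - H)
      = t ^ H * ∫ u in Ioi (0:ℝ), fH H u := by
  rcases ht.eq_or_lt with h | h
  · rw [← h]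
    simp [Real.zero_rpow hH0.ne']
  · rw [setIntegral_congr_fun measurableSet_Ioi (gt_eqOn h), MeasureTheory.integral_const_mul,
      integral_comp_mul_left_Ioi (fH H) 0 h, mul_zero, smul_eq_mul, ← mul_assoc]
    congr 1
    rw [Real.rpow_add h, Real.rpow_one]
    field_simp

end Rep

lemma prod_sum_eq {n : ℕ} (g : Fin n → Fin n → ℝ) :
    ∑ p : Fin n × Fin n, g p.1 p.2 = ∑ i, ∑ j, g i j := by
  rw [← Finset.univ_product_univ, Finset.sum_product]

/-- Let `K : X × X → ℝ` be a symmetric negative definite kernel with `K(x,y) ≥ 0`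
and `K(x,x) = 0`. Then for every `0 < H ≤ 1`, the function `(x,y) ↦ K(x,y)^H` is
also a negative definite kernel on `X`. -/
theorem rpow_negative_definite {X : Type*} (K : X → X → ℝ)
    (hsymm : ∀ x y, K x y = K y x)
    (hnonneg : ∀ x y, 0 ≤ K x y)
    (hdiag : ∀ x, K x x = 0)
    (hneg : ∀ (n : ℕ) (x : Fin n → X) (c : Fin n → ℝ), (∑ i, c i = 0) →
      ∑ i, ∑ j, c i * c j * K (x i) (x j) ≤ 0)
    (H : ℝ) (hH0 : 0 < H) (hH1 : H ≤ 1) :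
    ∀ (n : ℕ) (x : Fin n → X) (c : Fin n → ℝ), (∑ i, c i = 0) →
      ∑ i, ∑ j, c i * c j * K (x i) (x j) ^ H ≤ 0 := by
  intro n x c hc
  rcases hH1.lt_or_eq with h1 | rfl
  swap
  · simpa [Real.rpow_one] using hneg n x c hc
  cases n with
  | zero => simp
  | succ m =>
    set z := x 0 with hz
    set CH := ∫ u in Ioi (0:ℝ), fH H u with hCH
    have hCHpos : 0 < CH := fH_integral_pos hH0 h1
    set S := ∑ i, ∑ j, c i * c j * K (x i) (x j) ^ H with hS
    suffices hmul : S * CH ≤ 0 by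
      refine le_of_mul_le_mul_right ?_ hCHpos
      rw [zero_mul]
      exact hmul
    have e1 : ∀ i j : Fin (m+1), c i * c j * K (x i) (x j) ^ H * CH
        = ∫ l in Ioi (0:ℝ),
            c i * c j * ((1 - Real.exp (-(K (x i) (x j) * l))) * l ^ (-1 - H)) := by
      intro i j
      rw [MeasureTheory.integral_const_mul, gt_integral hH0 (hnonneg _ _), ← hCH]
      ring
    have hintgr : ∀ p : Fin (m+1) × Fin (m+1),
        Integrable (fun l : ℝ =>
          c p.1 * c p.2 * ((1 - Real.exp (-(K (x p.1) (x p.2) * l))) * l ^ (-1 - H)))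
          (volume.restrict (Ioi 0)) :=
      fun p => (gt_integrableOn hH0 h1 (hnonneg _ _)).const_mul _
    calc S * CH
        = ∑ p : Fin (m+1) × Fin (m+1), c p.1 * c p.2 * K (x p.1) (x p.2) ^ H * CH := by
          rw [hS, prod_sum_eq (fun i j => c i * c j * K (x i) (x j) ^ H * CH),
            Finset.sum_mul]
          exact Finset.sum_congr rfl fun i _ => by rw [Finset.sum_mul]
      _ = ∑ p : Fin (m+1) × Fin (m+1), ∫ l in Ioi (0:ℝ),
            c p.1 * c p.2 * ((1 - Real.exp (-(K (x p.1) (x p.2) * l))) * l ^ (-1 - H)) :=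
          Finset.sum_congr rfl fun p _ => e1 p.1 p.2
      _ = ∫ l in Ioi (0:ℝ), ∑ p : Fin (m+1) × Fin (m+1),
            c p.1 * c p.2 * ((1 - Real.exp (-(K (x p.1) (x p.2) * l))) * l ^ (-1 - H)) :=
          (integral_finset_sum Finset.univ fun p _ => hintgr p).symm
      _ ≤ 0 := by
          refine setIntegral_nonpos_of_ae_restrict
            ((ae_restrict_iff' measurableSet_Ioi).mpr (Filter.Eventually.of_forall ?_))
          intro l hl
          simp only [Pi.zero_apply]
          have hl0 : (0:ℝ) < l := hl
          have hps := schoenberg K hsymm hdiag hneg x z hl0.le c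
          simp only at hps
          have expand : ∑ p : Fin (m+1) × Fin (m+1),
              c p.1 * c p.2 * ((1 - Real.exp (-(K (x p.1) (x p.2) * l))) * l ^ (-1 - H))
            = ((∑ p : Fin (m+1) × Fin (m+1), c p.1 * c p.2)
              - ∑ p : Fin (m+1) × Fin (m+1),
                  c p.1 * c p.2 * Real.exp (-(K (x p.1) (x p.2) * l))) * l ^ (-1 - H) := by
            rw [sub_mul, Finset.sum_mul, Finset.sum_mul, ← Finset.sum_sub_distrib]
            exact Finset.sum_congr rfl fun p _ => by ring
          have hzero : ∑ p : Fin (m+1) × Fin (m+1), c p.1 * c p.2 = 0 := by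
            rw [prod_sum_eq (fun i j => c i * c j), ← Finset.sum_mul_sum, hc, zero_mul]
          have hexp_nonneg :
              0 ≤ ∑ p : Fin (m+1) × Fin (m+1),
                c p.1 * c p.2 * Real.exp (-(K (x p.1) (x p.2) * l)) := by
            rw [prod_sum_eq (fun i j => c i * c j * Real.exp (-(K (x i) (x j) * l)))]
            exact hps
          rw [expand, hzero, zero_sub, neg_mul]
          exact neg_nonpos.mpr (mul_nonneg hexp_nonneg (Real.rpow_nonneg hl0.le _))
end

section
/- (Schoenberg) Let X be a set and let K : X × X → ℝ be a symmetric negative definite kernel. Then for every t > 0, the function (x,y) ↦ exp(−t K(x,y)) is a positive definite kernel on X. -/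
open Finset

private def PDk {n : ℕ} (M : Fin n → Fin n → ℝ) : Prop :=
  (∀ i j, M i j = M j i) ∧ ∀ c : Fin n → ℝ, 0 ≤ ∑ i, ∑ j, c i * c j * M i j

private lemma pdk_gram {n : ℕ} {M : Fin n → Fin n → ℝ} (hM : PDk M) :
    ∃ B : Fin n → Fin n → ℝ, ∀ i j, M i j = ∑ k, B k i * B k j := by
  have hps : (Matrix.of M).PosSemidef := by
    rw [Matrix.posSemidef_iff_dotProduct_mulVec]
    constructor
    · ext i j
      simp [Matrix.conjTranspose_apply, hM.1 j i]
    · intro v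
      have h := hM.2 v
      simp only [dotProduct, Matrix.mulVec, dotProduct, Pi.star_apply,
        star_trivial, Matrix.of_apply]
      calc (0:ℝ) ≤ ∑ i, ∑ j, v i * v j * M i j := h
        _ = ∑ i, v i * ∑ j, M i j * v j := by
            congr 1; funext i
            rw [Finset.mul_sum]
            congr 1; funext j
            ring
  obtain ⟨B, hB⟩ : ∃ B : Matrix (Fin n) (Fin n) ℝ, Matrix.of M = B.conjTranspose * B := by
    open scoped MatrixOrder in
    obtain ⟨B, hB⟩ := CStarAlgebra.nonneg_iff_eq_star_mul_self.mp hps.nonneg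
    exact ⟨B, by rw [hB, Matrix.star_eq_conjTranspose]⟩
  refine ⟨fun k i => B k i, fun i j => ?_⟩
  have h2 : Matrix.of M i j = (B.conjTranspose * B) i j := by rw [hB]
  simpa [Matrix.mul_apply, Matrix.conjTranspose_apply] using h2

set_option maxHeartbeats 1000000 in
private lemma pdk_mul {n : ℕ} {M N : Fin n → Fin n → ℝ} (hM : PDk M) (hN : PDk N) :
    PDk (fun i j => M i j * N i j) := by
  obtain ⟨B, hB⟩ := pdk_gram hM
  refine ⟨fun i j => by simp only [hM.1 i j, hN.1 i j], fun c => ?_⟩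
  have step1 : ∀ i j, c i * c j * (M i j * N i j)
      = ∑ k, (c i * B k i) * (c j * B k j) * N i j := by
    intro i j
    calc c i * c j * (M i j * N i j)
        = (∑ k, B k i * B k j) * (c i * c j * N i j) := by rw [hB]; ring
      _ = ∑ k, (c i * B k i) * (c j * B k j) * N i j := by
          rw [Finset.sum_mul]
          exact Finset.sum_congr rfl fun k _ => by ring
  have key : ∑ i, ∑ j, c i * c j * (M i j * N i j)
      = ∑ k, ∑ i, ∑ j, (c i * B k i) * (c j * B k j) * N i j := by
    simp only [step1]
    calc ∑ i, ∑ j, ∑ k, (c i * B k i) * (c j * B k j) * N i j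
        = ∑ i, ∑ k, ∑ j, (c i * B k i) * (c j * B k j) * N i j :=
          Finset.sum_congr rfl fun i _ => Finset.sum_comm
      _ = ∑ k, ∑ i, ∑ j, (c i * B k i) * (c j * B k j) * N i j := Finset.sum_comm
  rw [key]
  exact Finset.sum_nonneg fun k _ => hN.2 (fun i => c i * B k i)

private lemma pdk_pow {n : ℕ} {M : Fin n → Fin n → ℝ} (hM : PDk M) (m : ℕ) :
    PDk (fun i j => M i j ^ m) := by
  induction m with
  | zero =>
    refine ⟨fun i j => rfl, fun c => ?_⟩
    have h : ∑ i, ∑ j, c i * c j * M i j ^ 0 = (∑ i, c i) ^ 2 := by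
      simp only [pow_zero, mul_one, sq, Finset.sum_mul, Finset.mul_sum]
      rw [Finset.sum_comm]
    rw [h]; positivity
  | succ m ih =>
    have h := pdk_mul ih hM
    refine ⟨fun i j => by simp only [hM.1 i j], fun c => ?_⟩
    simpa only [pow_succ] using h.2 c

set_option maxHeartbeats 1000000 in
private lemma pdk_exp {n : ℕ} {M : Fin n → Fin n → ℝ} (hM : PDk M) :
    PDk (fun i j => Real.exp (M i j)) := by
  refine ⟨fun i j => by simp only [hM.1 i j], fun c => ?_⟩
  have hexp : ∀ a : ℝ, Real.exp a = ∑' m : ℕ, a ^ m / m.factorial := fun a => by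
    rw [Real.exp_eq_exp_ℝ, NormedSpace.exp_eq_tsum_div]
  set f : (Fin n × Fin n) → ℕ → ℝ :=
    fun p m => c p.1 * c p.2 * (M p.1 p.2 ^ m / m.factorial) with hf
  have hsum : ∀ p ∈ (Finset.univ : Finset (Fin n × Fin n)), Summable (f p) :=
    fun p _ => (Real.summable_pow_div_factorial (M p.1 p.2)).mul_left _
  have hswap := Summable.tsum_finsetSum hsum
  have key : ∑ i, ∑ j, c i * c j * Real.exp (M i j)
      = ∑' m : ℕ, ∑ p : Fin n × Fin n, f p m := by
    rw [hswap, ← Finset.sum_product']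
    refine Finset.sum_congr Finset.univ_product_univ.symm fun p _ => ?_
    rw [hexp (M p.1 p.2), ← tsum_mul_left]
  rw [key]
  refine tsum_nonneg fun m => ?_
  have h := (pdk_pow hM m).2 c
  have h2 : ∑ p : Fin n × Fin n, f p m
      = (∑ i, ∑ j, c i * c j * M i j ^ m) / m.factorial := by
    rw [← Finset.univ_product_univ, Finset.sum_product, Finset.sum_div]
    refine Finset.sum_congr rfl fun i _ => ?_
    rw [Finset.sum_div]
    exact Finset.sum_congr rfl fun j _ => by simp only [hf]; ring
  rw [h2]
  positivity

set_option maxHeartbeats 1000000 in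
/-- (Schoenberg) Let `K : X × X → ℝ` be a symmetric negative definite kernel. Then
for every `t > 0`, the function `(x,y) ↦ exp(-t K(x,y))` is a positive definite
kernel on `X`. -/
theorem schoenberg_exp_neg_positive_definite {X : Type*} (K : X → X → ℝ)
    (hsymm : ∀ x y, K x y = K y x)
    (hneg : ∀ (n : ℕ) (x : Fin n → X) (c : Fin n → ℝ), (∑ i, c i = 0) →
      ∑ i, ∑ j, c i * c j * K (x i) (x j) ≤ 0)
    (t : ℝ) (ht : 0 < t) :
    ∀ (n : ℕ) (x : Fin n → X) (c : Fin n → ℝ),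
      0 ≤ ∑ i, ∑ j, c i * c j * Real.exp (-(t * K (x i) (x j))) := by
  intro n x c
  rcases n with _ | n
  · simp
  -- the centered kernel
  set M : Fin (n + 1) → Fin (n + 1) → ℝ :=
    fun i j => K (x i) (x 0) + K (x 0) (x j) - K (x i) (x j) - K (x 0) (x 0) with hM
  have hMsymm : ∀ i j, M i j = M j i := by
    intro i j
    simp only [hM]
    rw [hsymm (x i) (x j), hsymm (x i) (x 0), hsymm (x 0) (x j)]
    ring
  have hMpd : PDk M := by
    refine ⟨hMsymm, fun c' => ?_⟩
    set s : ℝ := ∑ i, c' i with hs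
    set b : Fin (n + 1) → ℝ := fun i => c' i - if i = 0 then s else 0 with hb
    have hb0 : ∑ i, b i = 0 := by
      simp only [hb, Finset.sum_sub_distrib, Finset.sum_ite_eq', Finset.mem_univ, if_true, ← hs,
        sub_self]
    have h := hneg (n + 1) x b hb0
    -- collapse the inner sums of h
    have inner : ∀ i, ∑ j, b j * K (x i) (x j)
        = (∑ j, c' j * K (x i) (x j)) - s * K (x i) (x 0) := by
      intro i
      simp only [hb, sub_mul, Finset.sum_sub_distrib, ite_mul, zero_mul,
        Finset.sum_ite_eq', Finset.mem_univ, if_true]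
    have E2 : ∑ i, ∑ j, b i * b j * K (x i) (x j)
        = (∑ i, ∑ j, c' i * c' j * K (x i) (x j))
          - s * (∑ i, c' i * K (x i) (x 0))
          - s * (∑ j, c' j * K (x 0) (x j))
          + s * s * K (x 0) (x 0) := by
      calc ∑ i, ∑ j, b i * b j * K (x i) (x j)
          = ∑ i, b i * ((∑ j, c' j * K (x i) (x j)) - s * K (x i) (x 0)) := by
            refine Finset.sum_congr rfl fun i _ => ?_
            rw [← inner i, Finset.mul_sum]
            exact Finset.sum_congr rfl fun j _ => by ring
        _ = (∑ i, c' i * ((∑ j, c' j * K (x i) (x j)) - s * K (x i) (x 0)))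
            - s * ((∑ j, c' j * K (x 0) (x j)) - s * K (x 0) (x 0)) := by
            simp only [hb, sub_mul, Finset.sum_sub_distrib, ite_mul, zero_mul,
              Finset.sum_ite_eq', Finset.mem_univ, if_true]
        _ = _ := by
            simp only [mul_sub, Finset.sum_sub_distrib]
            have h1 : ∑ i, c' i * ∑ j, c' j * K (x i) (x j)
                = ∑ i, ∑ j, c' i * c' j * K (x i) (x j) := by
              refine Finset.sum_congr rfl fun i _ => ?_
              rw [Finset.mul_sum]
              exact Finset.sum_congr rfl fun j _ => by ring
            have h2 : ∑ i, c' i * (s * K (x i) (x 0))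
                = s * ∑ i, c' i * K (x i) (x 0) := by
              rw [Finset.mul_sum]
              exact Finset.sum_congr rfl fun i _ => by ring
            rw [h1, h2]
            ring
    have E1 : ∑ i, ∑ j, c' i * c' j * M i j
        = s * (∑ i, c' i * K (x i) (x 0))
          + s * (∑ j, c' j * K (x 0) (x j))
          - (∑ i, ∑ j, c' i * c' j * K (x i) (x j))
          - s * s * K (x 0) (x 0) := by
      calc ∑ i, ∑ j, c' i * c' j * M i j
          = ∑ i, ((c' i * K (x i) (x 0)) * s + c' i * (∑ j, c' j * K (x 0) (x j))
              - (∑ j, c' i * c' j * K (x i) (x j)) - (c' i * K (x 0) (x 0)) * s) := by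
            refine Finset.sum_congr rfl fun i _ => ?_
            have e : ∀ j, c' i * c' j * M i j
                = (c' i * K (x i) (x 0)) * c' j + c' i * (c' j * K (x 0) (x j))
                  - c' i * c' j * K (x i) (x j) - (c' i * K (x 0) (x 0)) * c' j := by
              intro j; simp only [hM]; ring
            rw [Finset.sum_congr rfl fun j _ => e j, Finset.sum_sub_distrib,
              Finset.sum_sub_distrib, Finset.sum_add_distrib, ← Finset.mul_sum,
              ← Finset.mul_sum, ← Finset.mul_sum, ← hs]
        _ = _ := by
            rw [Finset.sum_sub_distrib, Finset.sum_sub_distrib, Finset.sum_add_distrib,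
              ← Finset.sum_mul, ← Finset.sum_mul, ← Finset.sum_mul, ← Finset.sum_mul, ← hs]
            ring
    linarith [h, E1, E2]
  set d : Fin (n + 1) → ℝ :=
    fun i => Real.exp (t * K (x 0) (x 0) / 2 - t * K (x i) (x 0)) with hd
  have htM : PDk (fun i j => t * M i j) := by
    refine ⟨fun i j => by simp only [hMsymm i j], fun c'' => ?_⟩
    have h0 := hMpd.2 c''
    have e : ∑ i, ∑ j, c'' i * c'' j * (t * M i j)
        = t * ∑ i, ∑ j, c'' i * c'' j * M i j := by
      rw [Finset.mul_sum]
      refine Finset.sum_congr rfl fun i _ => ?_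
      rw [Finset.mul_sum]
      exact Finset.sum_congr rfl fun j _ => by ring
    rw [e]
    exact mul_nonneg ht.le h0
  have final := (pdk_exp htM).2 (fun i => c i * d i)
  have heq : ∑ i, ∑ j, c i * c j * Real.exp (-(t * K (x i) (x j)))
      = ∑ i, ∑ j, (c i * d i) * (c j * d j) * Real.exp (t * M i j) := by
    refine Finset.sum_congr rfl fun i _ => Finset.sum_congr rfl fun j _ => ?_
    have hprod : d i * d j * Real.exp (t * M i j) = Real.exp (-(t * K (x i) (x j))) := by
      simp only [hd, hM, ← Real.exp_add]
      congr 1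
      rw [hsymm (x 0) (x j)]
      ring
    calc c i * c j * Real.exp (-(t * K (x i) (x j)))
        = c i * c j * (d i * d j * Real.exp (t * M i j)) := by rw [hprod]
      _ = (c i * d i) * (c j * d j) * Real.exp (t * M i j) := by ring
  rw [heq]
  exact final
end

section
/- Let Ω = [c,d] ⊂ ℝ be a compact interval, let F : Ω → [a,b] be a nondecreasing function, and define F⁻¹ : [a,b] → ℝ by F⁻¹(t) = inf{u ∈ Ω : F(u) ≥ t}. Then F is continuous on Ω if and only if F⁻¹ is strictly increasing on the interval [inf ran F, sup ran F], where ran F = {F(x) : x ∈ Ω}. -/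
/-- Let `Ω = [c,d]` be a compact interval of `ℝ`, `F : Ω → [a,b]` a nondecreasing
function and `F⁻¹(t) = inf {u ∈ Ω : F(u) ≥ t}` its generalized inverse on `[a,b]`.
Then `F` is continuous on `Ω` if and only if `F⁻¹` is strictly increasing on
`[inf ran F, sup ran F]`, where `ran F = F '' Ω`. -/
theorem continuousOn_iff_strictMonoOn_quantile (c d a b : ℝ) (hcd : c ≤ d)
    (F : ℝ → ℝ) (hmono : MonotoneOn F (Set.Icc c d))
    (hmaps : Set.MapsTo F (Set.Icc c d) (Set.Icc a b))
    (Finv : ℝ → ℝ)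
    (hFinv : ∀ t ∈ Set.Icc a b, Finv t = sInf {u ∈ Set.Icc c d | t ≤ F u}) :
    ContinuousOn F (Set.Icc c d) ↔
      StrictMonoOn Finv
        (Set.Icc (sInf (F '' Set.Icc c d)) (sSup (F '' Set.Icc c d))) := by
  have hc : c ∈ Set.Icc c d := ⟨le_rfl, hcd⟩
  have hd : d ∈ Set.Icc c d := ⟨hcd, le_rfl⟩
  have hFc := hmaps hc
  have hFd := hmaps hd
  have hinf : sInf (F '' Set.Icc c d) = F c :=
    IsLeast.csInf_eq ⟨⟨c, hc, rfl⟩, by rintro y ⟨x, hx, rfl⟩; exact hmono hc hx hx.1⟩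
  have hsup : sSup (F '' Set.Icc c d) = F d :=
    IsGreatest.csSup_eq ⟨⟨d, hd, rfl⟩, by rintro y ⟨x, hx, rfl⟩; exact hmono hx hd hx.2⟩
  rw [hinf, hsup]
  have hsub : Set.Icc (F c) (F d) ⊆ Set.Icc a b := Set.Icc_subset_Icc hFc.1 hFd.2
  set S : ℝ → Set ℝ := fun t => {u ∈ Set.Icc c d | t ≤ F u} with hS
  have hbdd : ∀ t, BddBelow (S t) := fun t => ⟨c, fun u hu => hu.1.1⟩
  have hdS : ∀ t, t ≤ F d → d ∈ S t := fun t ht => ⟨hd, ht⟩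
  have hFinv' : ∀ t ∈ Set.Icc (F c) (F d), Finv t = sInf (S t) := fun t ht => hFinv t (hsub ht)
  have hmemIcc : ∀ t ∈ Set.Icc (F c) (F d), Finv t ∈ Set.Icc c d := by
    intro t ht
    rw [hFinv' t ht]
    exact ⟨le_csInf ⟨d, hdS t ht.2⟩ fun u hu => hu.1.1, csInf_le (hbdd t) (hdS t ht.2)⟩
  have hFinvMono : ∀ t₁ ∈ Set.Icc (F c) (F d), ∀ t₂ ∈ Set.Icc (F c) (F d),
      t₁ ≤ t₂ → Finv t₁ ≤ Finv t₂ := by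
    intro t₁ h1 t₂ h2 h12
    rw [hFinv' t₁ h1, hFinv' t₂ h2]
    exact csInf_le_csInf (hbdd t₁) ⟨d, hdS t₂ h2.2⟩ fun u hu => ⟨hu.1, h12.trans hu.2⟩
  constructor
  · -- continuity implies strict monotonicity of Finv
    intro hcont
    have key : ∀ t ∈ Set.Icc (F c) (F d), F (Finv t) = t := by
      intro t ht
      have hne : (S t).Nonempty := ⟨d, hdS t ht.2⟩
      have hclosed : IsClosed (S t) := by
        have hEq : S t = Set.Icc c d ∩ F ⁻¹' Set.Ici t := by
          ext u; simp [hS, Set.mem_sep_iff, Set.mem_preimage, Set.mem_Ici]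
        rw [hEq]
        exact hcont.preimage_isClosed_of_isClosed isClosed_Icc isClosed_Ici
      have hmem : sInf (S t) ∈ S t := hclosed.csInf_mem hne (hbdd t)
      obtain ⟨u, hu, hFu⟩ := intermediate_value_Icc hcd hcont ht
      have h1 : Finv t ≤ u := by
        rw [hFinv' t ht]; exact csInf_le (hbdd t) ⟨hu, hFu.ge⟩
      have h2 : F (Finv t) ≤ t := by
        calc F (Finv t) ≤ F u := hmono (hmemIcc t ht) hu h1
        _ = t := hFu
      have h3 : t ≤ F (Finv t) := by rw [hFinv' t ht]; exact hmem.2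
      linarith
    intro t₁ ht₁ t₂ ht₂ h12
    refine lt_of_le_of_ne (hFinvMono t₁ ht₁ t₂ ht₂ h12.le) fun heq => ?_
    have : t₁ = t₂ := by
      rw [← key t₁ ht₁, ← key t₂ ht₂, heq]
    exact h12.ne this
  · -- strict monotonicity of Finv implies continuity
    intro hsm
    -- Step 1: surjectivity of F onto [F c, F d]
    have surj : ∀ t ∈ Set.Icc (F c) (F d), ∃ u ∈ Set.Icc c d, F u = t := by
      intro t ht
      by_contra hno
      push_neg at hno
      set x₀ := Finv t with hx₀
      have hx₀mem : x₀ ∈ Set.Icc c d := hmemIcc t ht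
      rcases lt_trichotomy (F x₀) t with hlt | heq | hgt
      · -- F x₀ < t : Finv is constant on [t₁, t], contradiction
        set t₁ := (F x₀ + t) / 2 with ht₁def
        have h1 : F x₀ < t₁ := by rw [ht₁def]; linarith
        have h2 : t₁ < t := by rw [ht₁def]; linarith
        have ht₁mem : t₁ ∈ Set.Icc (F c) (F d) :=
          ⟨(hmono hc hx₀mem hx₀mem.1).trans h1.le, h2.le.trans ht.2⟩
        have hle : x₀ ≤ Finv t₁ := by
          rw [hFinv' t₁ ht₁mem]
          refine le_csInf ⟨d, hdS t₁ ht₁mem.2⟩ fun u hu => ?_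
          by_contra hux
          push_neg at hux
          exact absurd hu.2 (not_le.2 ((hmono hu.1 hx₀mem hux.le).trans_lt h1))
        have := hsm ht₁mem ht h2
        rw [← hx₀] at this
        exact absurd (hle.trans_lt this) (lt_irrefl x₀)
      · exact hno x₀ hx₀mem heq
      · -- F x₀ > t : Finv t = Finv (F x₀), contradiction
        set t₂ := F x₀ with ht₂def
        have ht₂mem : t₂ ∈ Set.Icc (F c) (F d) :=
          ⟨hmono hc hx₀mem hx₀mem.1, hmono hx₀mem hd hx₀mem.2⟩
        have hle : Finv t₂ ≤ x₀ := by
          rw [hFinv' t₂ ht₂mem]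
          exact csInf_le (hbdd t₂) ⟨hx₀mem, le_rfl⟩
        have := hsm ht ht₂mem hgt
        rw [← hx₀] at this
        exact absurd (hle.trans_lt this) (lt_irrefl _)
    -- Step 2: images of subintervals
    have surjR : ∀ x ∈ Set.Icc c d, Set.Icc (F x) (F d) ⊆ F '' Set.Icc x d := by
      intro x hx t ht
      obtain ⟨u, hu, hFu⟩ := surj t ⟨(hmono hc hx hx.1).trans ht.1, ht.2⟩
      rcases le_total x u with h | h
      · exact ⟨u, ⟨h, hu.2⟩, hFu⟩
      · refine ⟨x, ⟨le_rfl, hx.2⟩, le_antisymm ht.1 ?_⟩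
        calc t = F u := hFu.symm
        _ ≤ F x := hmono hu hx h
    have surjL : ∀ x ∈ Set.Icc c d, Set.Icc (F c) (F x) ⊆ F '' Set.Icc c x := by
      intro x hx t ht
      obtain ⟨u, hu, hFu⟩ := surj t ⟨ht.1, ht.2.trans (hmono hx hd hx.2)⟩
      rcases le_total u x with h | h
      · exact ⟨u, ⟨hu.1, h⟩, hFu⟩
      · refine ⟨x, ⟨hx.1, le_rfl⟩, le_antisymm ?_ ?_⟩
        · calc F x ≤ F u := hmono hx hu h
          _ = t := hFu
        · exact ht.2
    -- Step 3: continuity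
    intro x hx
    have hright : ContinuousWithinAt F (Set.Icc x d) x := by
      rcases eq_or_lt_of_le hx.2 with hxd | hxd
      · rw [← hxd, Set.Icc_self]; exact continuousWithinAt_singleton
      rcases eq_or_lt_of_le (hmono hx hd hx.2) with hFxd | hFxd
      · -- F constant on [x, d]
        refine (continuousWithinAt_const (b := F x)).congr (fun y hy => ?_) rfl
        exact le_antisymm (hFxd ▸ hmono ⟨hx.1.trans hy.1, hy.2⟩ hd hy.2)
          (hmono hx ⟨hx.1.trans hy.1, hy.2⟩ hy.1)
      · have hmono' : MonotoneOn F (Set.Icc x d) :=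
          hmono.mono (Set.Icc_subset_Icc hx.1 le_rfl)
        have hnhds : Set.Icc x d ∈ nhdsWithin x (Set.Ici x) :=
          Icc_mem_nhdsGE_of_mem ⟨le_rfl, hxd⟩
        have himg : F '' Set.Icc x d ∈ nhdsWithin (F x) (Set.Ici (F x)) :=
          Filter.mem_of_superset (Icc_mem_nhdsGE_of_mem ⟨le_rfl, hFxd⟩) (surjR x hx)
        exact (continuousWithinAt_right_of_monotoneOn_of_image_mem_nhdsWithin
          hmono' hnhds himg).mono Set.Icc_subset_Ici_self
    have hleft : ContinuousWithinAt F (Set.Icc c x) x := by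
      rcases eq_or_lt_of_le hx.1 with hcx | hcx
      · rw [hcx, Set.Icc_self]; exact continuousWithinAt_singleton
      rcases eq_or_lt_of_le (hmono hc hx hx.1) with hFcx | hFcx
      · -- F constant on [c, x]
        refine (continuousWithinAt_const (b := F x)).congr (fun y hy => ?_) rfl
        exact le_antisymm (hmono ⟨hy.1, hy.2.trans hx.2⟩ hx hy.2)
          (hFcx ▸ hmono hc ⟨hy.1, hy.2.trans hx.2⟩ hy.1)
      · have hmono' : MonotoneOn F (Set.Icc c x) :=
          hmono.mono (Set.Icc_subset_Icc le_rfl hx.2)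
        have hnhds : Set.Icc c x ∈ nhdsWithin x (Set.Iic x) :=
          Icc_mem_nhdsLE_of_mem ⟨hcx, le_rfl⟩
        have himg : F '' Set.Icc c x ∈ nhdsWithin (F x) (Set.Iic (F x)) :=
          Filter.mem_of_superset (Icc_mem_nhdsLE_of_mem ⟨hFcx, le_rfl⟩) (surjL x hx)
        exact (continuousWithinAt_left_of_monotoneOn_of_image_mem_nhdsWithin
          hmono' hnhds himg).mono Set.Icc_subset_Iic_self
    have : ContinuousWithinAt F (Set.Icc c x ∪ Set.Icc x d) x := hleft.union hright
    rwa [Set.Icc_union_Icc_eq_Icc hx.1 hx.2] at this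
end

section
/- Let m₁, m₂ ∈ ℝ and σ₁, σ₂ ≥ 0, and let μ = N(m₁, σ₁²) and ν = N(m₂, σ₂²) be the Gaussian measures on ℝ with these means and variances. Then the squared Wasserstein distance satisfies W₂²(μ,ν) = (m₁ − m₂)² + (σ₁ − σ₂)². -/
open Set Filter
open scoped Topology



open MeasureTheory ProbabilityTheory
open scoped ENNReal NNReal

section Aux
open Real

noncomputable def stdG : Measure ℝ := gaussianReal 0 1

instance : IsProbabilityMeasure stdG := by unfold stdG; infer_instance



lemma stdg_eq (x : ℝ) : gaussianPDFReal 0 1 x = (√(2*π))⁻¹ * rexp (-(1/2) * x^2) := by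
  rw [gaussianPDFReal_def]
  norm_num
  exact Or.inl (by ring)

lemma stdG_def : stdG = volume.withDensity (fun x => ENNReal.ofReal (gaussianPDFReal 0 1 x)) := by
  rw [stdG, gaussianReal_of_var_ne_zero 0 one_ne_zero]
  rfl

lemma integral_stdG (f : ℝ → ℝ) :
    ∫ x, f x ∂stdG = ∫ x, gaussianPDFReal 0 1 x * f x := by
  rw [stdG_def]
  have h : (fun x => ENNReal.ofReal (gaussianPDFReal 0 1 x))
      = fun x => ((gaussianPDFReal 0 1 x).toNNReal : ℝ≥0∞) := rfl
  rw [h, integral_withDensity_eq_integral_smul (by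
    exact (measurable_gaussianPDFReal 0 1).real_toNNReal)]
  congr 1 with x
  simp [NNReal.smul_def, Real.coe_toNNReal _ (gaussianPDFReal_nonneg 0 1 x)]

lemma integrable_stdG (f : ℝ → ℝ) (hf : Integrable (fun x => gaussianPDFReal 0 1 x * f x)) :
    Integrable f stdG := by
  rw [stdG_def]
  have h : (fun x => ENNReal.ofReal (gaussianPDFReal 0 1 x))
      = fun x => ((gaussianPDFReal 0 1 x).toNNReal : ℝ≥0∞) := rfl
  rw [h, integrable_withDensity_iff_integrable_smul (by
    exact (measurable_gaussianPDFReal 0 1).real_toNNReal)]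
  convert hf using 1
  · rfl
  ext x
  simp [NNReal.smul_def, Real.coe_toNNReal _ (gaussianPDFReal_nonneg 0 1 x)]


lemma int_neg_self (f : ℝ → ℝ) : ∫ x, f (-x) = ∫ x, f x :=
  (Measure.measurePreserving_neg (volume : Measure ℝ)).integral_comp
    (Homeomorph.neg ℝ).measurableEmbedding f

lemma M0 : ∫ x, gaussianPDFReal 0 1 x = 1 := integral_gaussianPDFReal_eq_one 0 one_ne_zero

lemma stdg_eq' (x : ℝ) : gaussianPDFReal 0 1 x = (√(2*π))⁻¹ * rexp (-(1/2) * x^2) := by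
  rw [gaussianPDFReal_def]; norm_num; exact Or.inl (by ring)

lemma stdg_even (x : ℝ) : gaussianPDFReal 0 1 (-x) = gaussianPDFReal 0 1 x := by
  simp [stdg_eq']

lemma Ig1 : Integrable (fun x => gaussianPDFReal 0 1 x * x) := by
  have h := (integrable_mul_exp_neg_mul_sq (b := 1/2) (by norm_num)).const_mul ((√(2*π))⁻¹)
  convert h using 2 with x
  rw [stdg_eq']; ring

lemma Ig2 : Integrable (fun x => gaussianPDFReal 0 1 x * x^2) := by
  have h := (integrable_rpow_mul_exp_neg_mul_sq (b := 1/2) (by norm_num)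
    (s := 2) (by norm_num)).const_mul ((√(2*π))⁻¹)
  convert h using 2 with x
  rw [stdg_eq', show ((2:ℝ)) = ((2:ℕ):ℝ) by norm_num, Real.rpow_natCast]
  ring

lemma M1 : ∫ x, gaussianPDFReal 0 1 x * x = 0 := by
  have h : ∫ x, gaussianPDFReal 0 1 x * x
      = ∫ x, gaussianPDFReal 0 1 (-x) * (-x) := (int_neg_self _).symm
  simp only [stdg_even, mul_neg] at h
  rw [integral_neg] at h
  linarith

lemma M2 : ∫ x, gaussianPDFReal 0 1 x * x^2 = 1 := by
  have h1 : ∫ x, gaussianPDFReal 0 1 x * x^2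
      = (√(2*π))⁻¹ * ∫ x, x^2 * rexp (-(1/2) * x^2) := by
    rw [← integral_const_mul]
    congr 1 with x
    rw [stdg_eq']; ring
  have h2 : ∫ (x:ℝ), x^2 * rexp (-(1/2) * x^2)
      = 2 * ∫ x in Ioi (0:ℝ), x^2 * rexp (-(1/2) * x^2) := by
    rw [← integral_comp_abs (f := fun x => x^2 * rexp (-(1/2) * x^2))]
    congr 1 with x
    rw [sq_abs]
  have h3 : ∫ x in Ioi (0:ℝ), x^2 * rexp (-(1/2) * x^2)
      = (1/2:ℝ) ^ (-(2+1)/2 : ℝ) * (1 / 2) * Gamma ((2+1)/2) := by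
    rw [← integral_rpow_mul_exp_neg_mul_rpow (by norm_num) (by norm_num : (-1:ℝ) < 2) (by norm_num)]
    congr 1 with x
    rw [show ((2:ℝ)) = ((2:ℕ):ℝ) by norm_num, Real.rpow_natCast]
  have hG : Gamma ((2+1)/2 : ℝ) = (1/2) * √π := by
    have : ((2+1)/2 : ℝ) = 1/2 + 1 := by norm_num
    rw [this, Real.Gamma_add_one (by norm_num), Real.Gamma_one_half_eq]
  have hp : (1/2:ℝ) ^ (-(2+1)/2 : ℝ) = 2 * √2 := by
    rw [show (-(2+1)/2 : ℝ) = -(3/2) by norm_num, Real.rpow_neg (by norm_num),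
      show (1/2:ℝ) = 2⁻¹ by norm_num, Real.inv_rpow (by norm_num), inv_inv,
      show (3/2:ℝ) = 1 + 1/2 by norm_num, Real.rpow_add (by norm_num), Real.rpow_one,
      ← Real.sqrt_eq_rpow]
  rw [h1, h2, h3, hG, hp]
  rw [Real.sqrt_mul (by norm_num)]
  have h2pos : (0:ℝ) < √2 := Real.sqrt_pos.mpr (by norm_num)
  have hppos : (0:ℝ) < √π := Real.sqrt_pos.mpr Real.pi_pos
  field_simp



lemma integrable_g_affine_sq (a b : ℝ) :
    Integrable (fun x => gaussianPDFReal 0 1 x * (a*x+b)^2) := by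
  have h := ((Ig2.const_mul (a^2)).add (Ig1.const_mul (2*a*b))).add
    ((integrable_gaussianPDFReal 0 1).const_mul (b^2))
  convert h using 2 with x
  · rfl
  simp only [Pi.add_apply]
  ring

lemma integrable_affine_sq (a b : ℝ) : Integrable (fun x => (a*x+b)^2) stdG :=
  integrable_stdG _ (integrable_g_affine_sq a b)

lemma integrable_g_affine (a b : ℝ) :
    Integrable (fun x => gaussianPDFReal 0 1 x * (a*x+b)) := by
  have h := (Ig1.const_mul a).add ((integrable_gaussianPDFReal 0 1).const_mul b)
  convert h using 2 with x
  · rfl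
  simp only [Pi.add_apply]
  ring

lemma integrable_affine (a b : ℝ) : Integrable (fun x => a*x+b) stdG :=
  integrable_stdG _ (integrable_g_affine a b)

lemma integral_affine (a b : ℝ) : ∫ x, (a*x+b) ∂stdG = b := by
  rw [integral_stdG]
  have h : (fun x => gaussianPDFReal 0 1 x * (a*x+b))
      = fun x => a * (gaussianPDFReal 0 1 x * x) + b * gaussianPDFReal 0 1 x := by
    ext x; ring
  have j1 : Integrable (fun x => a * (gaussianPDFReal 0 1 x * x)) := Ig1.const_mul a
  have j2 : Integrable (fun x => b * gaussianPDFReal 0 1 x) :=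
    (integrable_gaussianPDFReal 0 1).const_mul b
  rw [h, integral_add j1 j2, integral_const_mul, integral_const_mul, M1, M0]
  ring

lemma integral_affine_sq (a b : ℝ) : ∫ x, (a*x+b)^2 ∂stdG = a^2 + b^2 := by
  rw [integral_stdG]
  have h : (fun x => gaussianPDFReal 0 1 x * (a*x+b)^2)
      = fun x => (a^2 * (gaussianPDFReal 0 1 x * x^2) + (2*a*b) * (gaussianPDFReal 0 1 x * x))
        + b^2 * gaussianPDFReal 0 1 x := by
    ext x; ring
  have i1 : Integrable (fun x => a^2 * (gaussianPDFReal 0 1 x * x^2)) := Ig2.const_mul _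
  have i2 : Integrable (fun x => (2*a*b) * (gaussianPDFReal 0 1 x * x)) := Ig1.const_mul _
  have i3 : Integrable (fun x => b^2 * gaussianPDFReal 0 1 x) :=
    (integrable_gaussianPDFReal 0 1).const_mul _
  have i12 : Integrable (fun x => a^2 * (gaussianPDFReal 0 1 x * x^2)
      + (2*a*b) * (gaussianPDFReal 0 1 x * x)) := i1.add i2
  rw [h, integral_add i12 i3, integral_add i1 i2,
    integral_const_mul, integral_const_mul, integral_const_mul, M1, M2, M0]
  ring

lemma sq_coe_nnreal (σ : ℝ≥0) : (⟨(σ:ℝ)^2, sq_nonneg _⟩ : ℝ≥0) = σ^2 := by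
  ext; exact (NNReal.coe_pow σ 2).symm

lemma gaussianReal_eq_map (m : ℝ) (σ : ℝ≥0) :
    gaussianReal m (σ^2) = stdG.map (fun x => (σ:ℝ) * x + m) := by
  have h1 : stdG.map (fun x => (σ:ℝ) * x) = gaussianReal 0 (σ^2) := by
    rw [stdG, gaussianReal_map_const_mul]
    simp [sq_coe_nnreal]
    congr 1
  have h2 : stdG.map (fun x => (σ:ℝ) * x + m)
      = (stdG.map (fun x => (σ:ℝ) * x)).map (· + m) := by
    rw [Measure.map_map (measurable_add_const m) (measurable_const_mul _)]
    rfl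
  rw [h2, h1, gaussianReal_map_add_const, zero_add]



section Gmoments
variable (m : ℝ) (σ : ℝ≥0) (a b : ℝ)

lemma meas_affine : Measurable (fun x : ℝ => (σ:ℝ) * x + m) :=
  (measurable_const_mul _).add_const m

lemma Igs2 : Integrable (fun x => (a*x+b)^2) (gaussianReal m (σ^2)) := by
  rw [gaussianReal_eq_map,
    integrable_map_measure (by exact (((measurable_const_mul a).add_const b).pow_const 2).aestronglyMeasurable) (meas_affine m σ).aemeasurable]
  have h := integrable_affine_sq (a*σ) (a*m+b)
  convert h using 2 with x
  simp only [Function.comp_apply]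
  ring

lemma Igs1 : Integrable (fun x => a*x+b) (gaussianReal m (σ^2)) := by
  rw [gaussianReal_eq_map,
    integrable_map_measure (by exact ((measurable_const_mul a).add_const b).aestronglyMeasurable) (meas_affine m σ).aemeasurable]
  have h := integrable_affine (a*σ) (a*m+b)
  convert h using 2 with x
  simp only [Function.comp_apply]
  ring

lemma Egs2 : ∫ x, (a*x+b)^2 ∂(gaussianReal m (σ^2)) = (a*σ)^2 + (a*m+b)^2 := by
  rw [gaussianReal_eq_map, integral_map (meas_affine m σ).aemeasurable (by exact (((measurable_const_mul a).add_const b).pow_const 2).aestronglyMeasurable)]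
  rw [← integral_affine_sq (a*σ) (a*m+b)]
  congr 1 with x
  ring

lemma Egs1 : ∫ x, (a*x+b) ∂(gaussianReal m (σ^2)) = a*m+b := by
  rw [gaussianReal_eq_map, integral_map (meas_affine m σ).aemeasurable (by exact ((measurable_const_mul a).add_const b).aestronglyMeasurable)]
  rw [← integral_affine (a*σ) (a*m+b)]
  congr 1 with x
  ring

end Gmoments


end Aux


/-- For Gaussian measures `N(m₁, σ₁²)` and `N(m₂, σ₂²)` on `ℝ` (with `σᵢ ≥ 0`,
the Dirac mass at `mᵢ` when `σᵢ = 0`), the squared Wasserstein distance is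
`W₂²(μ,ν) = (m₁ - m₂)² + (σ₁ - σ₂)²`. -/
theorem W2sq_gaussian (m₁ m₂ : ℝ) (σ₁ σ₂ : ℝ≥0) :
    W2sq (gaussianReal m₁ (σ₁ ^ 2)) (gaussianReal m₂ (σ₂ ^ 2)) =
      ENNReal.ofReal ((m₁ - m₂) ^ 2 + ((σ₁ : ℝ) - (σ₂ : ℝ)) ^ 2) := by
  have costmeas : Measurable (fun p : ℝ × ℝ => ENNReal.ofReal ((p.1 - p.2) ^ 2)) :=
    ENNReal.measurable_ofReal.comp ((measurable_fst.sub measurable_snd).pow_const 2)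
  apply le_antisymm
  · -- upper bound: explicit coupling
    have hT : Measurable (fun x : ℝ => (((σ₁:ℝ)*x+m₁, (σ₂:ℝ)*x+m₂) : ℝ × ℝ)) :=
      (((measurable_const_mul _).add_const _).prodMk ((measurable_const_mul _).add_const _))
    refine sInf_le ⟨stdG.map (fun x => (((σ₁:ℝ)*x+m₁, (σ₂:ℝ)*x+m₂) : ℝ × ℝ)), ⟨?_, ?_, ?_⟩, ?_⟩
    · exact Measure.isProbabilityMeasure_map hT.aemeasurable
    · rw [Measure.map_map measurable_fst hT]
      exact (gaussianReal_eq_map m₁ σ₁).symm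
    · rw [Measure.map_map measurable_snd hT]
      exact (gaussianReal_eq_map m₂ σ₂).symm
    · rw [lintegral_map costmeas hT]
      have e : ∀ x : ℝ, ((((σ₁:ℝ)*x+m₁) - ((σ₂:ℝ)*x+m₂)))^2
          = ((((σ₁:ℝ)-(σ₂:ℝ)))*x + (m₁-m₂))^2 := fun x => by ring
      calc ENNReal.ofReal ((m₁ - m₂) ^ 2 + ((σ₁ : ℝ) - (σ₂ : ℝ)) ^ 2)
          = ENNReal.ofReal (∫ x, (((((σ₁:ℝ)-(σ₂:ℝ)))*x + (m₁-m₂))^2) ∂stdG) := by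
            rw [integral_affine_sq]; congr 1; ring
        _ = ∫⁻ x, ENNReal.ofReal ((((((σ₁:ℝ)-(σ₂:ℝ)))*x + (m₁-m₂))^2)) ∂stdG :=
            ofReal_integral_eq_lintegral_ofReal (integrable_affine_sq _ _)
              (ae_of_all _ fun x => sq_nonneg _)
        _ = ∫⁻ x, ENNReal.ofReal (((((σ₁:ℝ)*x+m₁) - ((σ₂:ℝ)*x+m₂)))^2) ∂stdG :=
            lintegral_congr fun x => by rw [e]
  · refine le_sInf ?_
    rintro I ⟨π, ⟨hprob, hfst, hsnd⟩, rfl⟩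
    haveI : IsProbabilityMeasure π := hprob
    -- transfer of integrability and moments from the marginals
    have mA2 : AEStronglyMeasurable (fun x : ℝ => (1*x + -m₁)^2) (π.map Prod.fst) :=
      (((measurable_const_mul 1).add_const _).pow_const 2).aestronglyMeasurable
    have mA1 : AEStronglyMeasurable (fun x : ℝ => 1*x + -m₁) (π.map Prod.fst) :=
      ((measurable_const_mul 1).add_const _).aestronglyMeasurable
    have mB2 : AEStronglyMeasurable (fun x : ℝ => (1*x + -m₂)^2) (π.map Prod.snd) :=
      (((measurable_const_mul 1).add_const _).pow_const 2).aestronglyMeasurable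
    have mB1 : AEStronglyMeasurable (fun x : ℝ => 1*x + -m₂) (π.map Prod.snd) :=
      ((measurable_const_mul 1).add_const _).aestronglyMeasurable
    have IA2 : Integrable (fun p : ℝ × ℝ => (p.1-m₁)^2) π := by
      have h := Igs2 m₁ σ₁ 1 (-m₁)
      rw [← hfst, integrable_map_measure mA2 measurable_fst.aemeasurable] at h
      convert h using 2 with p
      simp only [Function.comp_apply]; ring
    have IA1 : Integrable (fun p : ℝ × ℝ => p.1-m₁) π := by
      have h := Igs1 m₁ σ₁ 1 (-m₁)
      rw [← hfst, integrable_map_measure mA1 measurable_fst.aemeasurable] at h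
      convert h using 2 with p
      simp only [Function.comp_apply]; ring
    have IB2 : Integrable (fun p : ℝ × ℝ => (p.2-m₂)^2) π := by
      have h := Igs2 m₂ σ₂ 1 (-m₂)
      rw [← hsnd, integrable_map_measure mB2 measurable_snd.aemeasurable] at h
      convert h using 2 with p
      simp only [Function.comp_apply]; ring
    have IB1 : Integrable (fun p : ℝ × ℝ => p.2-m₂) π := by
      have h := Igs1 m₂ σ₂ 1 (-m₂)
      rw [← hsnd, integrable_map_measure mB1 measurable_snd.aemeasurable] at h
      convert h using 2 with p
      simp only [Function.comp_apply]; ring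
    have EA2 : ∫ p, ((p : ℝ × ℝ).1-m₁)^2 ∂π = (σ₁:ℝ)^2 := by
      have h := Egs2 m₁ σ₁ 1 (-m₁)
      rw [← hfst, integral_map measurable_fst.aemeasurable mA2] at h
      calc ∫ p, ((p : ℝ × ℝ).1-m₁)^2 ∂π = ∫ p : ℝ × ℝ, (1*p.1 + -m₁)^2 ∂π := by
            congr 1 with p; ring
        _ = (1*(σ₁:ℝ))^2 + (1*m₁ + -m₁)^2 := h
        _ = (σ₁:ℝ)^2 := by ring
    have EA1 : ∫ p, ((p : ℝ × ℝ).1-m₁) ∂π = 0 := by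
      have h := Egs1 m₁ σ₁ 1 (-m₁)
      rw [← hfst, integral_map measurable_fst.aemeasurable mA1] at h
      calc ∫ p, ((p : ℝ × ℝ).1-m₁) ∂π = ∫ p : ℝ × ℝ, (1*p.1 + -m₁) ∂π := by
            congr 1 with p; ring
        _ = 1*m₁ + -m₁ := h
        _ = 0 := by ring
    have EB2 : ∫ p, ((p : ℝ × ℝ).2-m₂)^2 ∂π = (σ₂:ℝ)^2 := by
      have h := Egs2 m₂ σ₂ 1 (-m₂)
      rw [← hsnd, integral_map measurable_snd.aemeasurable mB2] at h
      calc ∫ p, ((p : ℝ × ℝ).2-m₂)^2 ∂π = ∫ p : ℝ × ℝ, (1*p.2 + -m₂)^2 ∂π := by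
            congr 1 with p; ring
        _ = (1*(σ₂:ℝ))^2 + (1*m₂ + -m₂)^2 := h
        _ = (σ₂:ℝ)^2 := by ring
    have EB1 : ∫ p, ((p : ℝ × ℝ).2-m₂) ∂π = 0 := by
      have h := Egs1 m₂ σ₂ 1 (-m₂)
      rw [← hsnd, integral_map measurable_snd.aemeasurable mB1] at h
      calc ∫ p, ((p : ℝ × ℝ).2-m₂) ∂π = ∫ p : ℝ × ℝ, (1*p.2 + -m₂) ∂π := by
            congr 1 with p; ring
        _ = 1*m₂ + -m₂ := h
        _ = 0 := by ring
    -- the cross term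
    have ICross : Integrable (fun p : ℝ × ℝ => (p.1-m₁)*(p.2-m₂)) π := by
      refine Integrable.mono' ((IA2.add IB2).div_const 2)
        (((measurable_fst.sub measurable_const).mul
          (measurable_snd.sub measurable_const)).aestronglyMeasurable)
        (ae_of_all _ fun p => ?_)
      rw [Real.norm_eq_abs, abs_le]
      simp only [Pi.add_apply]
      constructor
      · nlinarith [sq_nonneg ((p.1-m₁) + (p.2-m₂))]
      · nlinarith [sq_nonneg ((p.1-m₁) - (p.2-m₂))]
    set C := ∫ p, ((p : ℝ × ℝ).1-m₁)*(p.2-m₂) ∂π with hCdef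
    have key : ∀ a b : ℝ, 0 ≤ a^2*(σ₁:ℝ)^2 - 2*(a*b)*C + b^2*(σ₂:ℝ)^2 := by
      intro a b
      have h0 : 0 ≤ ∫ p, (a*((p : ℝ × ℝ).1-m₁) - b*(p.2-m₂))^2 ∂π :=
        integral_nonneg fun p => sq_nonneg _
      have i1 : Integrable (fun p : ℝ × ℝ => a^2*((p.1-m₁)^2)) π := IA2.const_mul _
      have i2 : Integrable (fun p : ℝ × ℝ => (2*(a*b))*((p.1-m₁)*(p.2-m₂))) π :=
        ICross.const_mul _
      have i3 : Integrable (fun p : ℝ × ℝ => b^2*((p.2-m₂)^2)) π := IB2.const_mul _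
      have i12 : Integrable (fun p : ℝ × ℝ =>
          a^2*((p.1-m₁)^2) - (2*(a*b))*((p.1-m₁)*(p.2-m₂))) π := i1.sub i2
      have hrw : ∫ p, (a*((p : ℝ × ℝ).1-m₁) - b*(p.2-m₂))^2 ∂π
          = a^2*(σ₁:ℝ)^2 - 2*(a*b)*C + b^2*(σ₂:ℝ)^2 := by
        have e1 : (fun p : ℝ × ℝ => (a*(p.1-m₁) - b*(p.2-m₂))^2)
            = fun p : ℝ × ℝ => (a^2*((p.1-m₁)^2) - (2*(a*b))*((p.1-m₁)*(p.2-m₂)))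
              + b^2*((p.2-m₂)^2) := by
          ext p; ring
        rw [e1, integral_add i12 i3, integral_sub i1 i2, integral_const_mul, integral_const_mul,
          integral_const_mul, EA2, EB2, ← hCdef]
      rw [← hrw]
      exact h0
    have hs1 : (0:ℝ) ≤ σ₁ := σ₁.coe_nonneg
    have hs2 : (0:ℝ) ≤ σ₂ := σ₂.coe_nonneg
    have hCle : C ≤ (σ₁:ℝ)*(σ₂:ℝ) := by
      have hb : ∀ δ : ℝ, δ ∈ Ioi (0:ℝ) → C ≤ ((σ₁:ℝ)+δ)*((σ₂:ℝ)+δ) := by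
        intro δ hδ
        simp only [mem_Ioi] at hδ
        have hu : (0:ℝ) < (σ₁:ℝ)+δ := by linarith
        have hv : (0:ℝ) < (σ₂:ℝ)+δ := by linarith
        have hk := key ((σ₂:ℝ)+δ) ((σ₁:ℝ)+δ)
        have hle1 : (σ₁:ℝ) ≤ (σ₁:ℝ)+δ := by linarith
        have hle2 : (σ₂:ℝ) ≤ (σ₂:ℝ)+δ := by linarith
        have k1 : (σ₁:ℝ)*(σ₁:ℝ)*(((σ₂:ℝ)+δ)*((σ₂:ℝ)+δ)) ≤ (((σ₁:ℝ)+δ)*((σ₁:ℝ)+δ))*(((σ₂:ℝ)+δ)*((σ₂:ℝ)+δ)) :=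
          mul_le_mul_of_nonneg_right (mul_le_mul hle1 hle1 hs1 hu.le)
            (mul_nonneg hv.le hv.le)
        have k2 : (σ₂:ℝ)*(σ₂:ℝ)*(((σ₁:ℝ)+δ)*((σ₁:ℝ)+δ)) ≤ (((σ₂:ℝ)+δ)*((σ₂:ℝ)+δ))*(((σ₁:ℝ)+δ)*((σ₁:ℝ)+δ)) :=
          mul_le_mul_of_nonneg_right (mul_le_mul hle2 hle2 hs2 hv.le)
            (mul_nonneg hu.le hu.le)
        nlinarith [mul_pos hu hv, hk, k1, k2]
      have htend : Tendsto (fun δ : ℝ => ((σ₁:ℝ)+δ)*((σ₂:ℝ)+δ)) (𝓝[>] (0:ℝ))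
          (𝓝 ((σ₁:ℝ)*(σ₂:ℝ))) := by
        have hc : Continuous (fun δ : ℝ => ((σ₁:ℝ)+δ)*((σ₂:ℝ)+δ)) := by continuity
        have h2 : Tendsto (fun δ : ℝ => ((σ₁:ℝ)+δ)*((σ₂:ℝ)+δ)) (𝓝[>] (0:ℝ))
            (𝓝 (((σ₁:ℝ)+0)*((σ₂:ℝ)+0))) :=
          (hc.tendsto 0).mono_left (nhdsWithin_le_nhds)
        simpa using h2
      exact ge_of_tendsto htend (eventually_nhdsWithin_of_forall hb)
    -- total cost
    have Isub : Integrable (fun p : ℝ × ℝ => (p.1-p.2)^2) π := by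
      have h := (((((IA2.add IB2).add (integrable_const ((m₁-m₂)^2))).sub
        (ICross.const_mul 2)).add (IA1.const_mul (2*(m₁-m₂)))).sub
        (IB1.const_mul (2*(m₁-m₂))))
      convert h using 2 with p
      simp only [Pi.add_apply, Pi.sub_apply]
      ring
    have Etot : ∫ p, ((p : ℝ × ℝ).1-p.2)^2 ∂π
        = (σ₁:ℝ)^2 + (σ₂:ℝ)^2 + (m₁-m₂)^2 - 2*C := by
      have i1 : Integrable (fun p : ℝ × ℝ => (p.1-m₁)^2 + (p.2-m₂)^2) π := IA2.add IB2
      have i2 : Integrable (fun p : ℝ × ℝ => ((p.1-m₁)^2 + (p.2-m₂)^2) + (m₁-m₂)^2) π :=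
        i1.add (integrable_const _)
      have i4 : Integrable (fun p : ℝ × ℝ => 2*((p.1-m₁)*(p.2-m₂))) π := ICross.const_mul 2
      have i3 : Integrable (fun p : ℝ × ℝ =>
          (((p.1-m₁)^2 + (p.2-m₂)^2) + (m₁-m₂)^2) - 2*((p.1-m₁)*(p.2-m₂))) π := i2.sub i4
      have i5 : Integrable (fun p : ℝ × ℝ => (2*(m₁-m₂))*(p.1-m₁)) π := IA1.const_mul _
      have i35 : Integrable (fun p : ℝ × ℝ =>
          ((((p.1-m₁)^2 + (p.2-m₂)^2) + (m₁-m₂)^2) - 2*((p.1-m₁)*(p.2-m₂)))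
            + (2*(m₁-m₂))*(p.1-m₁)) π := i3.add i5
      have i6 : Integrable (fun p : ℝ × ℝ => (2*(m₁-m₂))*(p.2-m₂)) π := IB1.const_mul _
      have e : (fun p : ℝ × ℝ => (p.1-p.2)^2)
          = fun p : ℝ × ℝ =>
            (((((p.1-m₁)^2 + (p.2-m₂)^2) + (m₁-m₂)^2) - 2*((p.1-m₁)*(p.2-m₂)))
              + (2*(m₁-m₂))*(p.1-m₁)) - (2*(m₁-m₂))*(p.2-m₂) := by
        ext p; ring
      rw [e, integral_sub i35 i6, integral_add i3 i5, integral_sub i2 i4,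
        integral_add i1 (integrable_const _), integral_add IA2 IB2,
        integral_const_mul, integral_const_mul, integral_const_mul,
        EA2, EB2, EA1, EB1, ← hCdef, integral_const]
      simp
    have hov : ∫⁻ p, ENNReal.ofReal (((p : ℝ × ℝ).1-p.2)^2) ∂π
        = ENNReal.ofReal (∫ p, ((p : ℝ × ℝ).1-p.2)^2 ∂π) :=
      (ofReal_integral_eq_lintegral_ofReal Isub (ae_of_all _ fun p => sq_nonneg _)).symm
    rw [hov]
    apply ENNReal.ofReal_le_ofReal
    rw [Etot]
    nlinarith [hCle]
end

section
/- Let X be a compact metric space and let k : X × X → ℝ be a continuous symmetric kernel that is universal, i.e. the linear span of {k(·,x) : x ∈ X} is dense in C(X) with the supremum norm. If μ and ν are Borel probability measures on X such that ∫ k(y,x) dμ(x) = ∫ k(y,x) dν(x) for every y ∈ X, then μ = ν (every universal kernel is characteristic). -/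
open MeasureTheory

/-- Let `X` be a compact metric space and `k : X × X → ℝ` a continuous symmetric
kernel that is universal, i.e. the linear span of `{k(·,x) : x ∈ X}` is dense in
`C(X, ℝ)` with the supremum norm. If `μ` and `ν` are Borel probability measures on
`X` with `∫ k(y,x) dμ(x) = ∫ k(y,x) dν(x)` for every `y`, then `μ = ν`: every
universal kernel is characteristic. -/
theorem universal_kernel_is_characteristic {X : Type*} [MetricSpace X]
    [CompactSpace X] [MeasurableSpace X] [BorelSpace X]
    (k : X → X → ℝ) (hcont : Continuous fun p : X × X => k p.1 p.2)
    (hsymm : ∀ x y, k x y = k y x)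
    (huniv : Dense (↑(Submodule.span ℝ
        {g : C(X, ℝ) | ∃ x : X, ∀ y : X, g y = k y x}) : Set C(X, ℝ)))
    (μ ν : Measure X) [IsProbabilityMeasure μ] [IsProbabilityMeasure ν]
    (h : ∀ y : X, ∫ x, k y x ∂μ = ∫ x, k y x ∂ν) : μ = ν := by
  -- The integral functional against a finite measure is 1-Lipschitz on C(X,ℝ).
  have hint : ∀ (ρ : Measure X) [IsProbabilityMeasure ρ] (g : C(X, ℝ)),
      Integrable g ρ := fun ρ _ g => by
    have := (BoundedContinuousFunction.mkOfCompact g).integrable ρ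
    exact this
  have hlip : ∀ (ρ : Measure X) [IsProbabilityMeasure ρ],
      LipschitzWith 1 (fun g : C(X, ℝ) => ∫ x, g x ∂ρ) := by
    intro ρ _
    apply LipschitzWith.of_dist_le_mul
    intro g g'
    rw [NNReal.coe_one, one_mul, Real.dist_eq, ← integral_sub (hint ρ g) (hint ρ g')]
    calc |∫ x, (g x - g' x) ∂ρ| ≤ ∫ x, |g x - g' x| ∂ρ := by
          simpa using norm_integral_le_integral_norm (μ := ρ) (fun x => g x - g' x)
      _ ≤ ∫ _, dist g g' ∂ρ := by
          apply integral_mono ((hint ρ g).sub (hint ρ g')).abs (integrable_const _)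
          intro x
          simp only [Pi.sub_apply, Pi.abs_apply]
          rw [← Real.dist_eq]
          exact ContinuousMap.dist_apply_le_dist x
      _ = dist g g' := by simp
  -- Integrals against μ and ν agree on all of C(X,ℝ).
  have key : ∀ g : C(X, ℝ), ∫ x, g x ∂μ = ∫ x, g x ∂ν := by
    have hclosed : IsClosed {g : C(X, ℝ) | ∫ x, g x ∂μ = ∫ x, g x ∂ν} :=
      isClosed_eq (hlip μ).continuous (hlip ν).continuous
    have hsub : (↑(Submodule.span ℝ
        {g : C(X, ℝ) | ∃ x : X, ∀ y : X, g y = k y x}) : Set C(X, ℝ)) ⊆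
        {g : C(X, ℝ) | ∫ x, g x ∂μ = ∫ x, g x ∂ν} := by
      intro g hg
      induction hg using Submodule.span_induction with
      | mem g hg =>
        obtain ⟨x, hx⟩ := hg
        have : ∀ y, g y = k y x := hx
        simp only [Set.mem_setOf_eq]
        calc ∫ z, g z ∂μ = ∫ z, k x z ∂μ := by
              congr 1; ext z; rw [this z, hsymm z x]
          _ = ∫ z, k x z ∂ν := h x
          _ = ∫ z, g z ∂ν := by congr 1; ext z; rw [this z, hsymm z x]
      | zero => simp
      | add g g' _ _ hgμ hg'μ =>
        simp only [Set.mem_setOf_eq, ContinuousMap.add_apply] at *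
        rw [integral_add (hint μ g) (hint μ g'), integral_add (hint ν g) (hint ν g'),
          hgμ, hg'μ]
      | smul c g _ hgμ =>
        simp only [Set.mem_setOf_eq, ContinuousMap.smul_apply, smul_eq_mul] at *
        rw [integral_const_mul, integral_const_mul, hgμ]
    have : {g : C(X, ℝ) | ∫ x, g x ∂μ = ∫ x, g x ∂ν} = Set.univ := by
      apply Set.eq_univ_of_subset (closure_minimal hsub hclosed)
      rw [huniv.closure_eq]
    intro g
    exact (Set.eq_univ_iff_forall.mp this) g
  -- Conclude by the standard extensionality result for finite Borel measures.
  apply ext_of_forall_lintegral_eq_of_IsFiniteMeasure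
  intro f
  have hμ := BoundedContinuousFunction.lintegral_lt_top_of_nnreal μ f
  have hν := BoundedContinuousFunction.lintegral_lt_top_of_nnreal ν f
  rw [← ENNReal.toReal_eq_toReal_iff' hμ.ne hν.ne,
    BoundedContinuousFunction.toReal_lintegral_coe_eq_integral,
    BoundedContinuousFunction.toReal_lintegral_coe_eq_integral]
  exact key ⟨fun x => (f x : ℝ), NNReal.continuous_coe.comp f.continuous⟩
end
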